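/- arXiv:1605.04340 — 5 statements merged into one kernel-verified Lean document; each statement's English description precedes it below -/
import Mathlib

section
/- Let n ≥ 2 and let m_1, …, m_{n−1} be nonnegative integers with Σ_{i=1}^{n−1} m_i = n and Σ_{i=1}^{n−1} i·m_i = 2n − 2. Then the number of simple graphs on the labeled vertex set {1,…,n} that are trees and have exactly m_i vertices of degree i for every 1 ≤ i ≤ n−1 equals ( (n−2)! / Π_{i=1}^{n−1} ((i−1)!)^{m_i} ) · ( n! / Π_{i=1}^{n−1} m_i! ). -/
/-- The degree of a vertex `v` in a simple graph `G`, as the number of its neighbors. -/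
noncomputable def vdeg {V : Type*} (G : SimpleGraph V) (v : V) : ℕ :=
  (G.neighborSet v).ncard

open SimpleGraph

variable {V : Type*}


/-- Attach `w` as a leaf at `u` to the graph `G'` on `V \ {w}`. -/
def attachLeaf (w : V) (u : {v : V // v ≠ w}) (G' : SimpleGraph {v : V // v ≠ w}) :
    SimpleGraph V where
  Adj a b := (a = w ∧ b = u.val) ∨ (b = w ∧ a = u.val) ∨
    (∃ (ha : a ≠ w) (hb : b ≠ w), G'.Adj ⟨a, ha⟩ ⟨b, hb⟩)
  symm := by
    constructor
    rintro a b (⟨rfl, rfl⟩ | ⟨rfl, rfl⟩ | ⟨ha, hb, h⟩)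
    · exact Or.inr (Or.inl ⟨rfl, rfl⟩)
    · exact Or.inl ⟨rfl, rfl⟩
    · exact Or.inr (Or.inr ⟨hb, ha, h.symm⟩)
  loopless := by
    constructor
    rintro a (⟨rfl, h⟩ | ⟨rfl, h⟩ | ⟨ha, hb, h⟩)
    · exact u.2 h.symm
    · exact u.2 h.symm
    · exact G'.irrefl h

lemma attachLeaf_adj {w : V} {u : {v : V // v ≠ w}} {G' : SimpleGraph {v : V // v ≠ w}}
    {a b : V} : (attachLeaf w u G').Adj a b ↔ (a = w ∧ b = u.val) ∨ (b = w ∧ a = u.val) ∨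
    (∃ (ha : a ≠ w) (hb : b ≠ w), G'.Adj ⟨a, ha⟩ ⟨b, hb⟩) := Iff.rfl

lemma attachLeaf_adj_left {w : V} {u : {v : V // v ≠ w}} {G' : SimpleGraph {v : V // v ≠ w}}
    {b : V} : (attachLeaf w u G').Adj w b ↔ b = u.val := by
  rw [attachLeaf_adj]
  constructor
  · rintro (⟨-, rfl⟩ | ⟨rfl, hw⟩ | ⟨ha, -, -⟩)
    · rfl
    · exact absurd hw.symm u.2
    · exact absurd rfl ha
  · rintro rfl; exact Or.inl ⟨rfl, rfl⟩

lemma attachLeaf_comap {w : V} (u : {v : V // v ≠ w}) (G' : SimpleGraph {v : V // v ≠ w}) :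
    SimpleGraph.comap (Subtype.val : {v : V // v ≠ w} → V) (attachLeaf w u G') = G' := by
  ext x y
  simp only [comap_adj, attachLeaf_adj]
  constructor
  · rintro (⟨hx, -⟩ | ⟨hy, -⟩ | ⟨hx, hy, h⟩)
    · exact absurd hx x.2
    · exact absurd hy y.2
    · simpa using h
  · intro h
    exact Or.inr (Or.inr ⟨x.2, y.2, by simpa using h⟩)

lemma comap_attachLeaf {w : V} {u : {v : V // v ≠ w}} {G : SimpleGraph V}
    (h1 : G.Adj w u.val) (h2 : ∀ b, G.Adj w b → b = u.val) :
    attachLeaf w u (SimpleGraph.comap (Subtype.val : {v : V // v ≠ w} → V) G) = G := by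
  ext a b
  rw [attachLeaf_adj]
  constructor
  · rintro (⟨rfl, rfl⟩ | ⟨rfl, rfl⟩ | ⟨ha, hb, h⟩)
    · exact h1
    · exact h1.symm
    · exact h
  · intro h
    by_cases ha : a = w
    · subst ha; exact Or.inl ⟨rfl, h2 _ h⟩
    by_cases hb : b = w
    · subst hb; exact Or.inr (Or.inl ⟨rfl, h2 _ h.symm⟩)
    · exact Or.inr (Or.inr ⟨ha, hb, h⟩)

/-- neighbor set of `w` in attachLeaf -/
lemma attachLeaf_neighborSet_w {w : V} (u : {v : V // v ≠ w}) (G' : SimpleGraph {v : V // v ≠ w}) :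
    (attachLeaf w u G').neighborSet w = {u.val} := by
  ext b; simp [mem_neighborSet, attachLeaf_adj_left]

lemma attachLeaf_neighborSet [DecidableEq V] {w : V} (u : {v : V // v ≠ w})
    (G' : SimpleGraph {v : V // v ≠ w}) (a : {v : V // v ≠ w}) :
    (attachLeaf w u G').neighborSet a.val =
      Subtype.val '' (G'.neighborSet a) ∪ (if a = u then {w} else ∅) := by
  classical
  ext b
  simp only [mem_neighborSet, attachLeaf_adj, Set.mem_union, Set.mem_image]
  constructor
  · rintro (⟨ha, -⟩ | ⟨rfl, hb⟩ | ⟨ha, hb, h⟩)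
    · exact absurd ha a.2
    · right
      have : a = u := Subtype.ext hb
      simp [this]
    · exact Or.inl ⟨⟨b, hb⟩, by simpa using h, rfl⟩
  · rintro (⟨x, hx, rfl⟩ | hb)
    · exact Or.inr (Or.inr ⟨a.2, x.2, by simpa using hx⟩)
    · by_cases hau : a = u
      · simp only [hau, if_pos rfl, Set.mem_singleton_iff] at hb
        subst hb
        exact Or.inr (Or.inl ⟨rfl, by rw [hau]⟩)
      · simp [hau] at hb


/-- Transfer a walk avoiding `w` to the comap graph on `{v // v ≠ w}`. -/
lemma walk_transfer {G : SimpleGraph V} {w : V} :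
    ∀ {a b : V} (p : G.Walk a b) (ha : a ≠ w) (hb : b ≠ w),
      (∀ z ∈ p.support, z ≠ w) →
      ∃ q : (SimpleGraph.comap (Subtype.val : {v : V // v ≠ w} → V) G).Walk ⟨a, ha⟩ ⟨b, hb⟩,
        q.support.map Subtype.val = p.support ∧
        q.edges.map (Sym2.map Subtype.val) = p.edges := by
  intro a b p
  induction p with
  | nil => intro ha hb _; exact ⟨SimpleGraph.Walk.nil, by simp, by simp⟩
  | @cons x c y h p ih =>
    intro ha hb hs
    have hc : c ≠ w := hs c (by simp [SimpleGraph.Walk.support_cons])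
    obtain ⟨q, hq1, hq2⟩ := ih hc hb (fun z hz => hs z (by simp [SimpleGraph.Walk.support_cons, hz]))
    refine ⟨SimpleGraph.Walk.cons (by simpa using h) q, ?_, ?_⟩
    · simp [SimpleGraph.Walk.support_cons, hq1]
    · simp [SimpleGraph.Walk.edges_cons, hq2]

lemma isCycle_of_maps {W : Type*} {G : SimpleGraph V} {H : SimpleGraph W} {f : V → W}
    (hf : Function.Injective f) {a : V} {b : W} (q : G.Walk a a) (c : H.Walk b b)
    (hs : q.support.map f = c.support) (he : q.edges.map (Sym2.map f) = c.edges)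
    (hc : c.IsCycle) : q.IsCycle := by
  rw [SimpleGraph.Walk.isCycle_def, SimpleGraph.Walk.isTrail_def] at hc ⊢
  obtain ⟨h1, h2, h3⟩ := hc
  refine ⟨?_, ?_, ?_⟩
  · have := he ▸ h1
    exact List.Nodup.of_map _ this
  · intro hq
    subst hq
    simp only [SimpleGraph.Walk.support_nil, List.map_cons, List.map_nil] at hs
    apply h2
    cases c with
    | nil => rfl
    | cons h p => simp [SimpleGraph.Walk.support_cons] at hs
  · have : (q.support.map f).tail = c.support.tail := by rw [hs]
    rw [← List.map_tail] at this
    exact List.Nodup.of_map _ (this ▸ h3)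

/-- A graph whose comap (deleting `w`) is acyclic, where `w` has at most the single
neighbour determined by uniqueness, is acyclic. -/
lemma isAcyclic_of_comap [DecidableEq V] {G : SimpleGraph V} {w : V}
    (hG' : (SimpleGraph.comap (Subtype.val : {v : V // v ≠ w} → V) G).IsAcyclic)
    (hw : ∀ a b, G.Adj w a → G.Adj w b → a = b) : G.IsAcyclic := by
  intro x c hc
  by_cases hws : w ∈ c.support
  · -- rotate the cycle to start at w
    have hc' := hc.rotate hws
    set c' := c.rotate w hws with hc'def
    clear_value c'
    cases c' with
    | nil => exact hc'.ne_nil rfl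
    | @cons _ y _ h p =>
      -- p : Walk y w, h : G.Adj w y
      have hyw : w ≠ y := h.ne
      obtain ⟨z, hz, p', hp'⟩ := SimpleGraph.Walk.exists_eq_cons_of_ne hyw p.reverse
      have hzy : z = y := hw z y hz h
      have hmem : s(w, z) ∈ p.reverse.edges := by
        rw [hp']; simp [SimpleGraph.Walk.edges_cons]
      rw [SimpleGraph.Walk.edges_reverse, List.mem_reverse] at hmem
      have hnodup := hc'.edges_nodup
      rw [SimpleGraph.Walk.edges_cons] at hnodup
      exact (List.nodup_cons.mp hnodup).1 (hzy ▸ hmem)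
  · have hx : x ≠ w := fun hh => hws (hh ▸ c.start_mem_support)
    obtain ⟨q, hq1, hq2⟩ := walk_transfer c hx hx (fun z hz => fun hzw => hws (hzw ▸ hz))
    exact hG' q (isCycle_of_maps Subtype.val_injective q c hq1 hq2 hc)



lemma unique_nbr_path_avoid {G : SimpleGraph V} {w : V} [DecidableEq V]
    (hw : ∀ a b, G.Adj w a → G.Adj w b → a = b)
    {x y : V} (hx : x ≠ w) (hy : y ≠ w) (p : G.Walk x y) (hp : p.IsPath) :
    ∀ z ∈ p.support, z ≠ w := by
  intro z hz hzw
  subst hzw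
  have hws : z ∈ p.support := hz
  set q := p.takeUntil z hws with hq
  set r := p.dropUntil z hws with hr
  have hspec : q.append r = p := p.take_spec hws
  have hq1 : z ≠ x := fun h => hx h.symm
  have hy1 : z ≠ y := fun h => hy h.symm
  obtain ⟨z1, hz1, q', hq'⟩ := SimpleGraph.Walk.exists_eq_cons_of_ne hq1 q.reverse
  obtain ⟨z2, hz2, r', hr'⟩ := SimpleGraph.Walk.exists_eq_cons_of_ne hy1 r
  have h12 : z1 = z2 := hw z1 z2 hz1 hz2
  have hm1 : s(z, z1) ∈ q.edges := by
    rw [← List.mem_reverse, ← SimpleGraph.Walk.edges_reverse, hq']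
    simp [SimpleGraph.Walk.edges_cons]
  have hm2 : s(z, z2) ∈ r.edges := by
    rw [hr']; simp [SimpleGraph.Walk.edges_cons]
  have hnodup : (q.append r).edges.Nodup := by rw [hspec]; exact hp.isTrail.edges_nodup
  rw [SimpleGraph.Walk.edges_append, List.nodup_append] at hnodup
  exact hnodup.2.2 _ hm1 _ (h12 ▸ hm2 : s(z, z1) ∈ r.edges) rfl

lemma reachable_comap_of_unique_nbr [DecidableEq V] {G : SimpleGraph V} {w : V}
    (hw : ∀ a b, G.Adj w a → G.Adj w b → a = b)
    {x y : {v : V // v ≠ w}} (hr : G.Reachable x.val y.val) :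
    (SimpleGraph.comap (Subtype.val : {v : V // v ≠ w} → V) G).Reachable x y := by
  obtain ⟨p₀⟩ := hr
  have hp := p₀.toPath.2
  have havoid := unique_nbr_path_avoid hw x.2 y.2 p₀.toPath.1 hp
  obtain ⟨q, -, -⟩ := walk_transfer (w := w) p₀.toPath.1 x.2 y.2 havoid
  exact ⟨q⟩

/-- the inclusion homomorphism from `G'` into `attachLeaf w u G'`. -/
def attachLeafHom (w : V) (u : {v : V // v ≠ w}) (G' : SimpleGraph {v : V // v ≠ w}) :
    G' →g attachLeaf w u G' where
  toFun := Subtype.val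
  map_rel' := by
    intro a b h
    exact Or.inr (Or.inr ⟨a.2, b.2, by simpa using h⟩)

lemma attachLeaf_connected {w : V} (u : {v : V // v ≠ w}) {G' : SimpleGraph {v : V // v ≠ w}}
    (hG' : G'.Connected) : (attachLeaf w u G').Connected := by
  have key : ∀ a : V, (attachLeaf w u G').Reachable a u.val := by
    intro a
    by_cases ha : a = w
    · subst ha
      exact (Adj.reachable (by rw [attachLeaf_adj_left]))
    · have := hG'.preconnected ⟨a, ha⟩ u
      exact this.map (attachLeafHom w u G')
  rw [connected_iff]
  exact ⟨fun a b => (key a).trans (key b).symm, ⟨w⟩⟩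

lemma vdeg_attachLeaf_w {w : V} (u : {v : V // v ≠ w}) (G' : SimpleGraph {v : V // v ≠ w}) :
    vdeg (attachLeaf w u G') w = 1 := by
  rw [vdeg, attachLeaf_neighborSet_w, Set.ncard_singleton]

lemma vdeg_attachLeaf [Fintype V] [DecidableEq V] {w : V} (u : {v : V // v ≠ w})
    (G' : SimpleGraph {v : V // v ≠ w}) (a : {v : V // v ≠ w}) :
    vdeg (attachLeaf w u G') a.val = vdeg G' a + (if a = u then 1 else 0) := by
  have hdisj : Disjoint (Subtype.val '' (G'.neighborSet a)) (if a = u then ({w} : Set V) else ∅) := by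
    split
    · rw [Set.disjoint_singleton_right]
      rintro ⟨x, -, hx⟩
      exact x.2 hx
    · exact Set.disjoint_empty _
  rw [vdeg, attachLeaf_neighborSet u G' a, Set.ncard_union_eq hdisj (Set.toFinite _) (Set.toFinite _),
    Set.ncard_image_of_injective _ Subtype.val_injective]
  congr 1
  split <;> simp

lemma one_le_vdeg [Fintype V] {G : SimpleGraph V} (hG : G.Connected)
    (h2 : 2 ≤ Fintype.card V) (v : V) : 1 ≤ vdeg G v := by
  classical
  obtain ⟨u, hu⟩ := Fintype.exists_ne_of_one_lt_card (by omega) v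
  obtain ⟨p⟩ := hG.preconnected v u
  obtain ⟨z, hz, -, -⟩ := SimpleGraph.Walk.exists_eq_cons_of_ne (Ne.symm hu) p
  rw [vdeg, Nat.one_le_iff_ne_zero, Ne, Set.ncard_eq_zero (Set.toFinite _)]
  intro h
  exact absurd (h ▸ hz : z ∈ (∅ : Set V)) (by simp)

lemma vdeg_le [Fintype V] (G : SimpleGraph V) (v : V) : vdeg G v ≤ Fintype.card V - 1 := by
  classical
  have h1 : G.neighborSet v ⊆ {v}ᶜ := by
    intro x hx
    simp only [Set.mem_compl_iff, Set.mem_singleton_iff]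
    exact fun h => G.irrefl (h ▸ hx)
  have := Set.ncard_le_ncard h1 (Set.toFinite _)
  rw [vdeg]
  refine this.trans ?_
  rw [show ({v}ᶜ : Set V) = Set.univ \ {v} by rw [Set.compl_eq_univ_diff]]
  rw [Set.ncard_diff (by simp), Set.ncard_singleton, Set.ncard_univ, Nat.card_eq_fintype_card]
lemma attachLeaf_isTree [DecidableEq V] {w : V} {u : {v : V // v ≠ w}}
    {G' : SimpleGraph {v : V // v ≠ w}} (h : G'.IsTree) : (attachLeaf w u G').IsTree := by
  constructor
  · exact attachLeaf_connected u h.1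
  · apply isAcyclic_of_comap (w := w)
    · rw [attachLeaf_comap]
      exact h.2
    · intro a b ha hb
      rw [attachLeaf_adj_left] at ha hb
      rw [ha, hb]

lemma isTree_of_attachLeaf [DecidableEq V] {w : V} {u : {v : V // v ≠ w}}
    {G' : SimpleGraph {v : V // v ≠ w}} (h : (attachLeaf w u G').IsTree) : G'.IsTree := by
  have hw : ∀ a b, (attachLeaf w u G').Adj w a → (attachLeaf w u G').Adj w b → a = b := by
    intro a b ha hb
    rw [attachLeaf_adj_left] at ha hb
    rw [ha, hb]
  constructor
  · rw [SimpleGraph.connected_iff]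
    constructor
    · intro x y
      have := reachable_comap_of_unique_nbr hw (h.1.preconnected x.val y.val)
      rwa [attachLeaf_comap] at this
    · exact ⟨u⟩
  · intro v c hc
    exact h.2 (c.map (attachLeafHom w u G'))
      (hc.map (f := attachLeafHom w u G') Subtype.val_injective)

lemma card_step [Fintype V] [DecidableEq V] (d : V → ℕ) (w : V) (hdw : d w = 1) :
    Nat.card {G : SimpleGraph V // G.IsTree ∧ ∀ v, vdeg G v = d v}
      = ∑ u : {v : V // v ≠ w}, Nat.card {G' : SimpleGraph {v : V // v ≠ w} //
          G'.IsTree ∧ ∀ x, vdeg G' x + (if x = u then 1 else 0) = d x.val} := by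
  classical
  have hF : ∀ p : (Σ u : {v : V // v ≠ w}, {G' : SimpleGraph {v : V // v ≠ w} //
      G'.IsTree ∧ ∀ x, vdeg G' x + (if x = u then 1 else 0) = d x.val}),
      (attachLeaf w p.1 p.2.val).IsTree ∧ ∀ v, vdeg (attachLeaf w p.1 p.2.val) v = d v := by
    rintro ⟨u, G', hT, hdeg⟩
    refine ⟨attachLeaf_isTree hT, ?_⟩
    intro v
    by_cases hv : v = w
    · subst hv; rw [vdeg_attachLeaf_w, hdw]
    · have := vdeg_attachLeaf u G' ⟨v, hv⟩
      rw [this, hdeg ⟨v, hv⟩]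
  let F : (Σ u : {v : V // v ≠ w}, {G' : SimpleGraph {v : V // v ≠ w} //
      G'.IsTree ∧ ∀ x, vdeg G' x + (if x = u then 1 else 0) = d x.val}) →
      {G : SimpleGraph V // G.IsTree ∧ ∀ v, vdeg G v = d v} :=
    fun p => ⟨attachLeaf w p.1 p.2.val, hF p⟩
  have hbij : Function.Bijective F := by
    constructor
    · rintro ⟨u1, G1, h1⟩ ⟨u2, G2, h2⟩ heq
      have hgr : attachLeaf w u1 G1 = attachLeaf w u2 G2 := by
        have := congrArg Subtype.val heq
        exact this
      have hu : u1 = u2 := by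
        have h1 := attachLeaf_neighborSet_w u1 G1
        have h2 := attachLeaf_neighborSet_w u2 G2
        rw [hgr] at h1
        rw [h1] at h2
        exact Subtype.ext (Set.singleton_eq_singleton_iff.mp h2)
      subst hu
      have hG : G1 = G2 := by
        have := congrArg (SimpleGraph.comap (Subtype.val : {v : V // v ≠ w} → V)) hgr
        rwa [attachLeaf_comap, attachLeaf_comap] at this
      subst hG
      rfl
    · rintro ⟨G, hT, hdeg⟩
      have h1 : vdeg G w = 1 := hdeg w ▸ hdw ▸ rfl
      obtain ⟨u0, hu0⟩ := Set.ncard_eq_one.mp (by rw [← vdeg]; exact h1)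
      have hadj : G.Adj w u0 := by
        have : u0 ∈ G.neighborSet w := by rw [hu0]; rfl
        exact this
      have huniq : ∀ b, G.Adj w b → b = u0 := by
        intro b hb
        have : b ∈ G.neighborSet w := hb
        rwa [hu0] at this
      have hu0w : u0 ≠ w := hadj.ne'
      set u : {v : V // v ≠ w} := ⟨u0, hu0w⟩ with hu
      set G' := SimpleGraph.comap (Subtype.val : {v : V // v ≠ w} → V) G with hG'
      have hattach : attachLeaf w u G' = G := comap_attachLeaf hadj huniq
      have hT' : G'.IsTree := isTree_of_attachLeaf (hattach ▸ hT)
      have hdeg' : ∀ x, vdeg G' x + (if x = u then 1 else 0) = d x.val := by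
        intro x
        have := vdeg_attachLeaf u G' x
        rw [hattach] at this
        rw [← this, hdeg]
      refine ⟨⟨u, G', hT', hdeg'⟩, ?_⟩
      exact Subtype.ext hattach
  letI : ∀ u : {v : V // v ≠ w}, Fintype {G' : SimpleGraph {v : V // v ≠ w} //
      G'.IsTree ∧ ∀ x, vdeg G' x + (if x = u then 1 else 0) = d x.val} :=
    fun u => Fintype.ofFinite _
  letI : Fintype {G : SimpleGraph V // G.IsTree ∧ ∀ v, vdeg G v = d v} := Fintype.ofFinite _
  rw [← Nat.card_congr (Equiv.ofBijective F hbij)]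
  rw [Nat.card_eq_fintype_card, Fintype.card_sigma]
  congr 1
  ext u
  rw [Nat.card_eq_fintype_card]
lemma isAcyclic_of_card_le_two [Fintype V] (h : Fintype.card V ≤ 2) (G : SimpleGraph V) :
    G.IsAcyclic := by
  intro v c hc
  have h3 := hc.three_le_length
  have hnodup := hc.2
  have := hnodup.length_le_card
  have hlen := SimpleGraph.Walk.length_support c
  have htail : c.support.tail.length = c.support.length - 1 := by
    cases c.support <;> simp
  omega

lemma eq_of_card_two [Fintype V] (h : Fintype.card V = 2) {a z b : V}
    (hz : z ≠ a) (hb : b ≠ a) : z = b := by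
  classical
  by_contra hzb
  have h3 : ({a, z, b} : Finset V).card = 3 := by
    rw [Finset.card_insert_of_notMem (by simp [Ne.symm hz, Ne.symm hb]),
      Finset.card_insert_of_notMem (by simp [hzb]), Finset.card_singleton]
  have := Finset.card_le_univ ({a, z, b} : Finset V)
  omega

lemma vdeg_top [Fintype V] (v : V) : vdeg (⊤ : SimpleGraph V) v = Fintype.card V - 1 := by
  classical
  rw [vdeg]
  have : (⊤ : SimpleGraph V).neighborSet v = {v}ᶜ := by
    ext x; simp [SimpleGraph.mem_neighborSet, eq_comm, Ne]
  rw [this, Set.compl_eq_univ_diff, Set.ncard_diff (by simp), Set.ncard_singleton,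
    Set.ncard_univ, Nat.card_eq_fintype_card]

lemma tree_count : ∀ (n : ℕ), 2 ≤ n → ∀ (V : Type) [Fintype V] [DecidableEq V],
    Fintype.card V = n → ∀ d : V → ℕ, (∀ v, 1 ≤ d v) → (∑ v, d v = 2 * n - 2) →
    Nat.card {G : SimpleGraph V // G.IsTree ∧ ∀ v, vdeg G v = d v} *
      ∏ v, (d v - 1).factorial = (n - 2).factorial := by
  intro n hn
  induction n, hn using Nat.le_induction with
  | base =>
    intro V _ _ hcard d hd hsum
    -- all degrees are 1
    have hd1 : ∀ v, d v = 1 := by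
      intro v
      by_contra hv
      have h2 : 2 ≤ d v := by have := hd v; omega
      have hmem : v ∈ (Finset.univ : Finset V) := Finset.mem_univ v
      have hsplit := Finset.add_sum_erase Finset.univ d hmem
      have hge : (Finset.univ.erase v).card * 1 ≤ ∑ x ∈ Finset.univ.erase v, d x :=
        Finset.card_nsmul_le_sum _ _ _ (fun x _ => hd x)
      have hcarde : (Finset.univ.erase v).card = 1 := by
        rw [Finset.card_erase_of_mem hmem, Finset.card_univ, hcard]
      omega
    have huniq : ∀ G : SimpleGraph V, (G.IsTree ∧ ∀ v, vdeg G v = d v) ↔ G = ⊤ := by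
      intro G
      constructor
      · rintro ⟨hT, -⟩
        ext a b
        simp only [SimpleGraph.top_adj]
        constructor
        · exact fun h => h.ne
        · intro hab
          obtain ⟨p⟩ := hT.1.preconnected a b
          obtain ⟨z, hz, -, -⟩ := SimpleGraph.Walk.exists_eq_cons_of_ne hab p
          have : z = b := eq_of_card_two hcard hz.ne' (Ne.symm hab)
          exact this ▸ hz
      · rintro rfl
        refine ⟨⟨?_, isAcyclic_of_card_le_two (le_of_eq hcard) _⟩, ?_⟩
        · rw [SimpleGraph.connected_iff]
          refine ⟨?_, ?_⟩
          · intro a b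
            rcases eq_or_ne a b with rfl | hab
            · exact SimpleGraph.Reachable.refl a
            · exact SimpleGraph.Adj.reachable (by simpa using hab)
          · rw [← Fintype.card_pos_iff]; omega
        · intro v
          rw [vdeg_top, hcard, hd1]
    haveI : Unique {G : SimpleGraph V // G.IsTree ∧ ∀ v, vdeg G v = d v} := by
      refine ⟨⟨⟨⊤, (huniq ⊤).mpr rfl⟩⟩, ?_⟩
      rintro ⟨G, hG⟩
      exact Subtype.ext ((huniq G).mp hG)
    rw [Nat.card_unique]
    have : ∀ v : V, (d v - 1).factorial = 1 := fun v => by rw [hd1]; rfl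
    rw [Finset.prod_congr rfl (fun v _ => this v), Finset.prod_const_one]
    rfl
  | succ n hn IH =>
    intro V _ _ hcard d hd hsum
    -- find a leaf value
    have hexw : ∃ w, d w = 1 := by
      by_contra hno
      push_neg at hno
      have h2 : ∀ v : V, 2 ≤ d v := fun v => by have := hd v; have := hno v; omega
      have hge : (Finset.univ : Finset V).card * 2 ≤ ∑ v, d v :=
        Finset.card_nsmul_le_sum _ _ _ (fun x _ => h2 x)
      rw [Finset.card_univ, hcard] at hge
      omega
    obtain ⟨w, hdw⟩ := hexw
    have hcard' : Fintype.card {v : V // v ≠ w} = n := by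
      have := Fintype.card_subtype_compl (fun v => v = w)
      rw [Fintype.card_subtype_eq, hcard] at this
      exact this
    rw [card_step d w hdw, Finset.sum_mul]
    -- the product over V equals the product over the subtype
    have hP : ∏ v, (d v - 1).factorial = ∏ x : {v : V // v ≠ w}, (d x.val - 1).factorial := by
      rw [← Finset.mul_prod_erase Finset.univ _ (Finset.mem_univ w), hdw]
      rw [Nat.sub_self, Nat.factorial_zero, one_mul]
      exact Finset.prod_subtype (p := fun v => v ≠ w) (Finset.univ.erase w)
        (fun x => by simp [Finset.mem_erase]) (fun v => (d v - 1).factorial)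
    have hsum' : ∑ x : {v : V // v ≠ w}, d x.val = 2 * n - 1 := by
      have hsplit := Finset.add_sum_erase Finset.univ d (Finset.mem_univ w)
      have : ∑ x : {v : V // v ≠ w}, d x.val = ∑ v ∈ Finset.univ.erase w, d v :=
        (Finset.sum_subtype (p := fun v => v ≠ w) (Finset.univ.erase w)
          (fun x => by simp [Finset.mem_erase]) d).symm
      omega
    -- per-term evaluation
    have hterm : ∀ u : {v : V // v ≠ w},
        Nat.card {G' : SimpleGraph {v : V // v ≠ w} //
          G'.IsTree ∧ ∀ x, vdeg G' x + (if x = u then 1 else 0) = d x.val} *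
          ∏ v, (d v - 1).factorial = (d u.val - 1) * (n - 2).factorial := by
      intro u
      rcases eq_or_lt_of_le (hd u.val) with h1 | h2
      · -- bad case : d u = 1, count is zero
        haveI : IsEmpty {G' : SimpleGraph {v : V // v ≠ w} //
            G'.IsTree ∧ ∀ x, vdeg G' x + (if x = u then 1 else 0) = d x.val} := by
          constructor
          rintro ⟨G', hT, hdeg⟩
          have := hdeg u
          rw [if_pos rfl, ← h1] at this
          have hpos := one_le_vdeg hT.1 (by omega : 2 ≤ Fintype.card {v : V // v ≠ w}) u
          omega
        rw [Nat.card_of_isEmpty, ← h1]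
        simp
      · -- good case : d u ≥ 2
        set e : {v : V // v ≠ w} → ℕ := fun x => d x.val - (if x = u then 1 else 0) with he
        have hcardEq : Nat.card {G' : SimpleGraph {v : V // v ≠ w} //
            G'.IsTree ∧ ∀ x, vdeg G' x + (if x = u then 1 else 0) = d x.val} =
            Nat.card {G' : SimpleGraph {v : V // v ≠ w} //
            G'.IsTree ∧ ∀ x, vdeg G' x = e x} := by
          apply Nat.card_congr
          apply Equiv.subtypeEquivRight
          intro G'
          constructor
          · rintro ⟨hT, hdeg⟩
            refine ⟨hT, fun x => ?_⟩
            have h := hdeg x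
            have hdx := hd x.val
            by_cases hx : x = u <;> simp [he, hx] at h ⊢ <;> omega
          · rintro ⟨hT, hdeg⟩
            refine ⟨hT, fun x => ?_⟩
            have h := hdeg x
            have hdx := hd x.val
            by_cases hx : x = u <;> simp [he, hx] at h ⊢ <;> omega
        have he1 : ∀ x, 1 ≤ e x := by
          intro x
          have hdx := hd x.val
          by_cases hx : x = u <;> simp [he, hx] <;> omega
        have hesum : ∑ x : {v : V // v ≠ w}, e x = 2 * n - 2 := by
          have h1 : ∑ x : {v : V // v ≠ w}, (e x + (if x = u then 1 else 0)) =
              ∑ x : {v : V // v ≠ w}, d x.val := by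
            apply Finset.sum_congr rfl
            intro x _
            have hdx := hd x.val
            by_cases hx : x = u <;> simp [he, hx] <;> omega
          rw [Finset.sum_add_distrib, Finset.sum_ite_eq' Finset.univ u (fun _ => 1)] at h1
          simp only [Finset.mem_univ, if_pos] at h1
          have h2n : 2 ≤ 2 * n := by omega
          omega
        have hIH := IH {v : V // v ≠ w} hcard' e he1 hesum
        -- relate the two products
        have hPe : ∏ v, (d v - 1).factorial =
            (d u.val - 1) * ∏ x : {v : V // v ≠ w}, (e x - 1).factorial := by
          rw [hP]
          rw [← Finset.mul_prod_erase Finset.univ (fun x => (d x.val - 1).factorial)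
            (Finset.mem_univ u)]
          rw [← Finset.mul_prod_erase Finset.univ (fun x => (e x - 1).factorial)
            (Finset.mem_univ u)]
          have hprodeq : ∏ x ∈ Finset.univ.erase u, (d x.val - 1).factorial =
              ∏ x ∈ Finset.univ.erase u, (e x - 1).factorial := by
            apply Finset.prod_congr rfl
            intro x hx
            simp [he, (Finset.mem_erase.mp hx).1]
          rw [hprodeq, ← mul_assoc]
          congr 1
          have heu : e u - 1 = d u.val - 2 := by
            have : e u = d u.val - 1 := by simp [he]
            omega
          rw [heu]
          have hfac : d u.val - 1 = (d u.val - 2) + 1 := by omega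
          rw [hfac, Nat.factorial_succ]
        rw [hPe, ← mul_assoc, mul_comm _ (d u.val - 1), mul_assoc, hcardEq, hIH]
    rw [Finset.sum_congr rfl (fun u _ => hterm u)]
    rw [← Finset.sum_mul]
    have hsumd : ∑ u : {v : V // v ≠ w}, (d u.val - 1) = n - 1 := by
      have h1 : ∑ u : {v : V // v ≠ w}, ((d u.val - 1) + 1) =
          ∑ u : {v : V // v ≠ w}, d u.val := by
        apply Finset.sum_congr rfl
        intro x _
        have := hd x.val; omega
      rw [Finset.sum_add_distrib, Finset.sum_const, Finset.card_univ, hcard'] at h1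
      simp only [smul_eq_mul, mul_one] at h1
      omega
    rw [hsumd]
    have h12 : n + 1 - 2 = (n - 2) + 1 := by omega
    have h13 : n - 1 = (n - 2) + 1 := by omega
    rw [h12, h13, Nat.factorial_succ]
lemma fiber_decomp_ncard [Fintype V] [DecidableEq V] (v₀ : V) (d : V → ℕ) (i : ℕ) :
    {v : V | d v = i}.ncard =
      {x : {v : V // v ≠ v₀} | d x.val = i}.ncard + (if i = d v₀ then 1 else 0) := by
  have hset : {v : V | d v = i} =
      Subtype.val '' {x : {v : V // v ≠ v₀} | d x.val = i} ∪
        (if i = d v₀ then {v₀} else ∅) := by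
    ext v
    simp only [Set.mem_setOf_eq, Set.mem_union, Set.mem_image]
    constructor
    · intro hv
      by_cases h0 : v = v₀
      · subst h0
        right
        rw [if_pos hv.symm]
        exact rfl
      · exact Or.inl ⟨⟨v, h0⟩, hv, rfl⟩
    · rintro (⟨x, hx, rfl⟩ | hv)
      · exact hx
      · split at hv
        · rename_i h
          simp only [Set.mem_singleton_iff] at hv
          subst hv
          exact h.symm
        · exact absurd hv (Set.notMem_empty v)
  have hdisj : Disjoint (Subtype.val '' {x : {v : V // v ≠ v₀} | d x.val = i})
      (if i = d v₀ then ({v₀} : Set V) else ∅) := by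
    split
    · rw [Set.disjoint_singleton_right]
      rintro ⟨x, -, hx⟩
      exact x.2 hx
    · exact Set.disjoint_empty _
  rw [hset, Set.ncard_union_eq hdisj (Set.toFinite _) (Set.toFinite _),
    Set.ncard_image_of_injective _ Subtype.val_injective]
  congr 1
  split <;> simp

lemma fun_count : ∀ (n : ℕ) (V : Type) [Fintype V] [DecidableEq V],
    Fintype.card V = n → ∀ (I : Finset ℕ) (m : ℕ → ℕ), (∑ i ∈ I, m i = n) →
    Nat.card {d : V → ℕ // (∀ v, d v ∈ I) ∧ ∀ i ∈ I, {v | d v = i}.ncard = m i} *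
      ∏ i ∈ I, (m i).factorial = n.factorial := by
  intro n
  induction n with
  | zero =>
    intro V _ _ hcard I m hsum
    haveI hVe : IsEmpty V := Fintype.card_eq_zero_iff.mp hcard
    have hm0 : ∀ i ∈ I, m i = 0 := by
      intro i hi
      exact (Finset.sum_eq_zero_iff.mp hsum) i hi
    haveI : Unique {d : V → ℕ // (∀ v, d v ∈ I) ∧ ∀ i ∈ I, {v | d v = i}.ncard = m i} := by
      refine ⟨⟨⟨fun v => hVe.elim v, fun v => hVe.elim v, ?_⟩⟩, ?_⟩
      · intro i hi
        rw [hm0 i hi]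
        rw [Set.ncard_eq_zero (Set.toFinite _)]
        exact Set.eq_empty_of_isEmpty _
      · rintro ⟨d, -⟩
        refine Subtype.ext (funext fun v => hVe.elim v)
    rw [Nat.card_unique, one_mul, Finset.prod_eq_one (fun i hi => by rw [hm0 i hi]; rfl)]
    rfl
  | succ n IH =>
    intro V _ _ hcard I m hsum
    obtain ⟨v₀⟩ := Fintype.card_pos_iff.mp (by omega : 0 < Fintype.card V)
    have hcard' : Fintype.card {v : V // v ≠ v₀} = n := by
      have := Fintype.card_subtype_compl (fun v => v = v₀)
      rw [Fintype.card_subtype_eq, hcard] at this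
      rw [show n = n + 1 - 1 by omega]
      exact this
    have hterm : ∀ j : ↥I,
        Nat.card {d' : {v : V // v ≠ v₀} → ℕ //
          (∀ x, d' x ∈ I) ∧ ∀ i ∈ I, {x | d' x = i}.ncard + (if i = j.val then 1 else 0) = m i} *
          ∏ i ∈ I, (m i).factorial = m j.val * n.factorial := by
      intro j
      rcases Nat.eq_zero_or_pos (m j.val) with h0 | hpos
      · haveI : IsEmpty {d' : {v : V // v ≠ v₀} → ℕ //
            (∀ x, d' x ∈ I) ∧ ∀ i ∈ I, {x | d' x = i}.ncard + (if i = j.val then 1 else 0) = m i} := by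
          constructor
          rintro ⟨d', -, hd2⟩
          have := hd2 j.val j.2
          rw [if_pos rfl, h0] at this
          omega
        rw [Nat.card_of_isEmpty, h0]
        simp
      · set e : ℕ → ℕ := fun i => m i - (if i = j.val then 1 else 0) with he
        have hesum : ∑ i ∈ I, e i = n := by
          have h1 : ∑ i ∈ I, (e i + (if i = j.val then 1 else 0)) = ∑ i ∈ I, m i := by
            apply Finset.sum_congr rfl
            intro i hi
            by_cases hij : i = j.val <;> simp [he, hij] <;> omega
          rw [Finset.sum_add_distrib, Finset.sum_ite_eq' I j.val (fun _ => 1),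
            if_pos j.2] at h1
          show ∑ i ∈ I, e i = n
          omega
        have hIH := IH {v : V // v ≠ v₀} hcard' I e hesum
        have hPe : ∏ i ∈ I, (m i).factorial = m j.val * ∏ i ∈ I, (e i).factorial := by
          rw [← Finset.mul_prod_erase I (fun i => (m i).factorial) j.2,
            ← Finset.mul_prod_erase I (fun i => (e i).factorial) j.2]
          have hprodeq : ∏ i ∈ I.erase j.val, (m i).factorial =
              ∏ i ∈ I.erase j.val, (e i).factorial := by
            apply Finset.prod_congr rfl
            intro i hi
            simp [he, (Finset.mem_erase.mp hi).1]
          rw [hprodeq, ← mul_assoc]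
          congr 1
          have hej : e j.val = m j.val - 1 := by simp [he]
          have hfac : (m j.val).factorial = ((m j.val - 1) + 1).factorial := by
            rw [Nat.sub_add_cancel hpos]
          rw [hej, hfac, Nat.factorial_succ, Nat.sub_add_cancel hpos]
        have hcardEq : Nat.card {d' : {v : V // v ≠ v₀} → ℕ //
            (∀ x, d' x ∈ I) ∧ ∀ i ∈ I, {x | d' x = i}.ncard + (if i = j.val then 1 else 0) = m i} =
            Nat.card {d' : {v : V // v ≠ v₀} → ℕ //
            (∀ x, d' x ∈ I) ∧ ∀ i ∈ I, {x | d' x = i}.ncard = e i} := by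
          apply Nat.card_congr
          apply Equiv.subtypeEquivRight
          intro d'
          constructor
          · rintro ⟨ha, hb⟩
            refine ⟨ha, fun i hi => ?_⟩
            have h := hb i hi
            clear hIH hPe hesum hb ha
            by_cases hij : i = j.val <;> simp [he, hij] at h ⊢ <;> omega
          · rintro ⟨ha, hb⟩
            refine ⟨ha, fun i hi => ?_⟩
            have h := hb i hi
            clear hIH hPe hesum hb ha
            by_cases hij : i = j.val <;> simp [he, hij] at h ⊢ <;> omega
        rw [hPe, ← mul_assoc, mul_comm _ (m j.val), mul_assoc, hcardEq, hIH]
    -- the sigma decomposition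
    have hF : ∀ p : (Σ j : ↥I, {d' : {v : V // v ≠ v₀} → ℕ //
        (∀ x, d' x ∈ I) ∧ ∀ i ∈ I, {x | d' x = i}.ncard + (if i = j.val then 1 else 0) = m i}),
        (∀ v, (fun v => if h : v = v₀ then p.1.val else p.2.val ⟨v, h⟩) v ∈ I) ∧
        ∀ i ∈ I, {v | (fun v => if h : v = v₀ then p.1.val else p.2.val ⟨v, h⟩) v = i}.ncard = m i := by
      rintro ⟨j, d', hd1, hd2⟩
      constructor
      · intro v
        by_cases h : v = v₀
        · simp only [dif_pos h]; exact j.2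
        · simp only [dif_neg h]; exact hd1 ⟨v, h⟩
      · intro i hi
        rw [fiber_decomp_ncard v₀]
        simp only [dif_pos rfl]
        have hfib : {x : {v : V // v ≠ v₀} |
            (if h : x.val = v₀ then j.val else d' ⟨x.val, h⟩) = i} = {x | d' x = i} := by
          ext x
          simp only [Set.mem_setOf_eq, dif_neg x.2]
        rw [hfib]
        exact hd2 i hi
    let F : (Σ j : ↥I, {d' : {v : V // v ≠ v₀} → ℕ //
        (∀ x, d' x ∈ I) ∧ ∀ i ∈ I, {x | d' x = i}.ncard + (if i = j.val then 1 else 0) = m i}) →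
        {d : V → ℕ // (∀ v, d v ∈ I) ∧ ∀ i ∈ I, {v | d v = i}.ncard = m i} :=
      fun p => ⟨fun v => if h : v = v₀ then p.1.val else p.2.val ⟨v, h⟩, hF p⟩
    have hbij : Function.Bijective F := by
      constructor
      · rintro ⟨j1, d1, h1⟩ ⟨j2, d2, h2⟩ heq
        have hfun := congrArg Subtype.val heq
        simp only [F] at hfun
        have hj : j1 = j2 := by
          have := congrFun hfun v₀
          simp only [dif_pos rfl] at this
          exact Subtype.ext this
        subst hj
        have hd : d1 = d2 := by
          funext x
          have := congrFun hfun x.val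
          simpa only [dif_neg x.2] using this
        subst hd
        rfl
      · rintro ⟨d, h1, h2⟩
        refine ⟨⟨⟨d v₀, h1 v₀⟩, ⟨fun x => d x.val, fun x => h1 x.val, ?_⟩⟩, ?_⟩
        · intro i hi
          have hkey := fiber_decomp_ncard v₀ d i
          rw [h2 i hi] at hkey
          show {x : {v : V // v ≠ v₀} | d x.val = i}.ncard + (if i = d v₀ then 1 else 0) = m i
          omega
        · apply Subtype.ext
          funext v
          by_cases h : v = v₀
          · subst h; simp [F]
          · simp [F, dif_neg h]
    haveI : ∀ j : ↥I, Finite {d' : {v : V // v ≠ v₀} → ℕ //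
        (∀ x, d' x ∈ I) ∧ ∀ i ∈ I, {x | d' x = i}.ncard + (if i = j.val then 1 else 0) = m i} := by
      intro j
      apply Finite.of_injective (fun d => (fun x => (⟨d.val x, d.2.1 x⟩ : ↥I)))
      intro a b hab
      apply Subtype.ext
      funext x
      exact congrArg Subtype.val (congrFun hab x)
    haveI hFin : Finite {d : V → ℕ // (∀ v, d v ∈ I) ∧ ∀ i ∈ I, {v | d v = i}.ncard = m i} := by
      apply Finite.of_injective (fun d => (fun x => (⟨d.val x, d.2.1 x⟩ : ↥I)))
      intro a b hab
      apply Subtype.ext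
      funext x
      exact congrArg Subtype.val (congrFun hab x)
    letI : ∀ j : ↥I, Fintype {d' : {v : V // v ≠ v₀} → ℕ //
        (∀ x, d' x ∈ I) ∧ ∀ i ∈ I, {x | d' x = i}.ncard + (if i = j.val then 1 else 0) = m i} :=
      fun j => Fintype.ofFinite _
    letI : Fintype {d : V → ℕ // (∀ v, d v ∈ I) ∧ ∀ i ∈ I, {v | d v = i}.ncard = m i} :=
      Fintype.ofFinite _
    have step1 : Nat.card {d : V → ℕ // (∀ v, d v ∈ I) ∧ ∀ i ∈ I, {v | d v = i}.ncard = m i} =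
        ∑ j : ↥I, Nat.card {d' : {v : V // v ≠ v₀} → ℕ //
          (∀ x, d' x ∈ I) ∧ ∀ i ∈ I, {x | d' x = i}.ncard + (if i = j.val then 1 else 0) = m i} := by
      rw [← Nat.card_congr (Equiv.ofBijective F hbij), Nat.card_eq_fintype_card,
        Fintype.card_sigma]
      exact Finset.sum_congr rfl (fun j _ => Nat.card_eq_fintype_card.symm)
    rw [step1, Finset.sum_mul, Finset.sum_congr rfl (fun j _ => hterm j),
      Finset.sum_coe_sort I (fun i => m i * n.factorial), ← Finset.sum_mul, hsum,
      ← Nat.factorial_succ]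

/-- The number of labeled trees on `{1,…,n}` with exactly `m i` vertices of degree `i`
for every `1 ≤ i ≤ n-1` is `((n-2)! / ∏ ((i-1)!)^(m i)) * (n! / ∏ (m i)!)`. -/
theorem count_trees_with_degree_specification (n : ℕ) (hn : 2 ≤ n) (m : ℕ → ℕ)
    (hsum : ∑ i ∈ Finset.Icc 1 (n - 1), m i = n)
    (hdegsum : ∑ i ∈ Finset.Icc 1 (n - 1), i * m i = 2 * n - 2) :
    (Nat.card {G : SimpleGraph (Fin n) // G.IsTree ∧
        ∀ i ∈ Finset.Icc 1 (n - 1), {v : Fin n | vdeg G v = i}.ncard = m i} : ℚ) =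
      ((n - 2).factorial : ℚ) /
          (∏ i ∈ Finset.Icc 1 (n - 1), ((i - 1).factorial : ℚ) ^ (m i)) *
        ((n.factorial : ℚ) / ∏ i ∈ Finset.Icc 1 (n - 1), ((m i).factorial : ℚ)) := by

  classical
  set I : Finset ℕ := Finset.Icc 1 (n - 1) with hI
  set P : ℕ := ∏ i ∈ I, ((i - 1).factorial) ^ (m i) with hPdef
  set M : ℕ := ∏ i ∈ I, (m i).factorial with hMdef
  have hcardFin : Fintype.card (Fin n) = n := Fintype.card_fin n
  -- ncard of a fiber equals the filter card
  have hncard_filter : ∀ (d : Fin n → ℕ) (i : ℕ),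
      {v : Fin n | d v = i}.ncard = (Finset.univ.filter (fun v => d v = i)).card := by
    intro d i
    rw [Set.ncard_eq_toFinset_card']
    congr 1
    ext v
    simp
  -- the D-subtype and finiteness
  haveI hDfin : Finite {d : Fin n → ℕ // (∀ v, d v ∈ I) ∧
      ∀ i ∈ I, {v : Fin n | d v = i}.ncard = m i} := by
    apply Finite.of_injective (fun d => (fun x => (⟨d.val x, d.2.1 x⟩ : ↥I)))
    intro a b hab
    apply Subtype.ext
    funext x
    exact congrArg Subtype.val (congrFun hab x)
  -- sigma decomposition of the tree set by degree function
  have hF : ∀ p : (Σ d : {d : Fin n → ℕ // (∀ v, d v ∈ I) ∧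
        ∀ i ∈ I, {v : Fin n | d v = i}.ncard = m i},
        {G : SimpleGraph (Fin n) // G.IsTree ∧ ∀ v, vdeg G v = d.val v}),
      p.2.val.IsTree ∧ ∀ i ∈ I, {v : Fin n | vdeg p.2.val v = i}.ncard = m i := by
    rintro ⟨⟨d, hd1, hd2⟩, G, hT, hdeg⟩
    refine ⟨hT, fun i hi => ?_⟩
    have hset : {v : Fin n | vdeg G v = i} = {v : Fin n | d v = i} := by
      ext v; simp only [Set.mem_setOf_eq, hdeg v]
    rw [hset]
    exact hd2 i hi
  let F : (Σ d : {d : Fin n → ℕ // (∀ v, d v ∈ I) ∧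
        ∀ i ∈ I, {v : Fin n | d v = i}.ncard = m i},
        {G : SimpleGraph (Fin n) // G.IsTree ∧ ∀ v, vdeg G v = d.val v}) →
      {G : SimpleGraph (Fin n) // G.IsTree ∧
        ∀ i ∈ I, {v : Fin n | vdeg G v = i}.ncard = m i} :=
    fun p => ⟨p.2.val, hF p⟩
  have hbij : Function.Bijective F := by
    constructor
    · rintro ⟨⟨d1, h1⟩, G1, hT1, hdeg1⟩ ⟨⟨d2, h2⟩, G2, hT2, hdeg2⟩ heq
      have hG : G1 = G2 := congrArg Subtype.val heq
      subst hG
      have hd : d1 = d2 := by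
        funext v
        exact ((hdeg1 v).symm.trans (hdeg2 v) : d1 v = d2 v)
      subst hd
      rfl
    · rintro ⟨G, hT, hprof⟩
      have hmem : ∀ v, vdeg G v ∈ I := by
        intro v
        rw [hI, Finset.mem_Icc]
        refine ⟨one_le_vdeg hT.1 (by omega) v, ?_⟩
        have := vdeg_le G v
        rw [hcardFin] at this
        exact this
      exact ⟨⟨⟨fun v => vdeg G v, hmem, hprof⟩, ⟨G, hT, fun v => rfl⟩⟩, rfl⟩
  -- counts
  haveI : ∀ d : {d : Fin n → ℕ // (∀ v, d v ∈ I) ∧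
      ∀ i ∈ I, {v : Fin n | d v = i}.ncard = m i},
      Fintype {G : SimpleGraph (Fin n) // G.IsTree ∧ ∀ v, vdeg G v = d.val v} :=
    fun d => Fintype.ofFinite _
  haveI : Fintype {d : Fin n → ℕ // (∀ v, d v ∈ I) ∧
      ∀ i ∈ I, {v : Fin n | d v = i}.ncard = m i} := Fintype.ofFinite _
  haveI : Fintype {G : SimpleGraph (Fin n) // G.IsTree ∧
      ∀ i ∈ I, {v : Fin n | vdeg G v = i}.ncard = m i} := Fintype.ofFinite _
  have step1 : Nat.card {G : SimpleGraph (Fin n) // G.IsTree ∧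
      ∀ i ∈ I, {v : Fin n | vdeg G v = i}.ncard = m i} =
      ∑ d : {d : Fin n → ℕ // (∀ v, d v ∈ I) ∧ ∀ i ∈ I, {v : Fin n | d v = i}.ncard = m i},
        Nat.card {G : SimpleGraph (Fin n) // G.IsTree ∧ ∀ v, vdeg G v = d.val v} := by
    rw [← Nat.card_congr (Equiv.ofBijective F hbij), Nat.card_eq_fintype_card,
      Fintype.card_sigma]
    exact Finset.sum_congr rfl (fun d _ => Nat.card_eq_fintype_card.symm)
  -- each term
  have hterm : ∀ d : {d : Fin n → ℕ // (∀ v, d v ∈ I) ∧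
      ∀ i ∈ I, {v : Fin n | d v = i}.ncard = m i},
      Nat.card {G : SimpleGraph (Fin n) // G.IsTree ∧ ∀ v, vdeg G v = d.val v} * P =
        (n - 2).factorial := by
    rintro ⟨d, hd1, hd2⟩
    have hmaps : ∀ v ∈ Finset.univ, d v ∈ I := fun v _ => hd1 v
    have hfilter : ∀ i ∈ I, (Finset.univ.filter (fun v => d v = i)).card = m i := by
      intro i hi
      rw [← hncard_filter d i]
      exact hd2 i hi
    have hd_ge : ∀ v, 1 ≤ d v := by
      intro v
      have := hd1 v
      rw [hI, Finset.mem_Icc] at this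
      exact this.1
    have hdsum : ∑ v, d v = 2 * n - 2 := by
      have hgroup := Finset.sum_fiberwise_of_maps_to hmaps d
      have hinner : ∀ i ∈ I, ∑ v ∈ Finset.univ.filter (fun v => d v = i), d v = i * m i := by
        intro i hi
        rw [Finset.sum_congr rfl (fun v hv => (Finset.mem_filter.mp hv).2),
          Finset.sum_const, hfilter i hi, smul_eq_mul, mul_comm]
      rw [Finset.sum_congr rfl hinner] at hgroup
      rw [← hgroup, hdegsum]
    have hprod : ∏ v, (d v - 1).factorial = P := by
      have hgroup := Finset.prod_fiberwise_of_maps_to hmaps (fun v => (d v - 1).factorial)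
      have hinner : ∀ i ∈ I, ∏ v ∈ Finset.univ.filter (fun v => d v = i),
          (d v - 1).factorial = ((i - 1).factorial) ^ (m i) := by
        intro i hi
        rw [Finset.prod_congr rfl (fun v hv => by
          rw [(Finset.mem_filter.mp hv).2]), Finset.prod_const, hfilter i hi]
      rw [Finset.prod_congr rfl hinner] at hgroup
      rw [← hgroup, hPdef]
    rw [← hprod]
    exact tree_count n hn (Fin n) hcardFin d hd_ge hdsum
  -- the function count
  have hfun := fun_count n (Fin n) hcardFin I m hsum
  rw [← hMdef] at hfun
  -- put it together in ℕ
  set K : ℕ := Nat.card {d : Fin n → ℕ // (∀ v, d v ∈ I) ∧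
      ∀ i ∈ I, {v : Fin n | d v = i}.ncard = m i} with hKdef
  have hKcard : K = Fintype.card {d : Fin n → ℕ // (∀ v, d v ∈ I) ∧
      ∀ i ∈ I, {v : Fin n | d v = i}.ncard = m i} := Nat.card_eq_fintype_card
  have key : Nat.card {G : SimpleGraph (Fin n) // G.IsTree ∧
      ∀ i ∈ I, {v : Fin n | vdeg G v = i}.ncard = m i} * P = K * (n - 2).factorial := by
    rw [step1, Finset.sum_mul, Finset.sum_congr rfl (fun d _ => hterm d),
      Finset.sum_const, hKcard, Finset.card_univ, smul_eq_mul]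
  -- positivity
  have hP0 : 0 < P := by
    rw [hPdef]
    exact Finset.prod_pos fun i _ => pow_pos (Nat.factorial_pos _) _
  have hM0 : 0 < M := by
    rw [hMdef]
    exact Finset.prod_pos fun i _ => Nat.factorial_pos _
  -- final rational computation
  have hcast1 : (∏ i ∈ I, ((i - 1).factorial : ℚ) ^ (m i)) = (P : ℚ) := by
    rw [hPdef]; push_cast; ring
  have hcast2 : (∏ i ∈ I, ((m i).factorial : ℚ)) = (M : ℚ) := by
    rw [hMdef]; push_cast; ring
  rw [hcast1, hcast2]
  have hnat : (Nat.card {G : SimpleGraph (Fin n) // G.IsTree ∧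
      ∀ i ∈ I, {v : Fin n | vdeg G v = i}.ncard = m i}) * (P * M) =
      (n - 2).factorial * n.factorial := by
    rw [← mul_assoc, key, mul_assoc, mul_comm (n-2).factorial, ← mul_assoc, hfun, mul_comm]
  have hP0' : (P : ℚ) ≠ 0 := by exact_mod_cast hP0.ne'
  have hM0' : (M : ℚ) ≠ 0 := by exact_mod_cast hM0.ne'
  field_simp
  rw [← mul_assoc] at hnat
  exact_mod_cast hnat
end

section
/- For n ≥ 2, let U_n be the polynomial with rational coefficients in the variables δ_1, …, δ_{n−1} defined by U_n := (1/n!) · Σ_T Π_{v} δ_{deg_T(v)}, where the sum runs over all trees T on the labeled vertex set {1,…,n} and deg_T(v) is the degree of vertex v in T. Then U_2(δ_1) = δ_1²/2 and, for every n ≥ 3, U_n(δ_1,…,δ_{n−1}) = δ_2 · U_{n−1}(δ_1,…,δ_{n−2}) + Σ_{i=2}^{n−2} δ_{i+1} · J_i(δ_1,…,δ_{n−2}), where J_i is the unique polynomial whose partial derivative with respect to δ_1 equals ∂U_{n−1}/∂δ_i and which vanishes at δ_1 = 0 (i.e. J_i(δ_1,…) = ∫_0^{δ_1} (∂U_{n−1}/∂δ_i)(x,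 δ_2,…,δ_{n−2}) dx). -/
open MvPolynomial

/-- `Upoly n = (1/n!) ∑_T ∏_v δ_{deg_T v}`, summed over all trees `T` on `{1,…,n}`;
the variable `X i` plays the role of `δ_i`. -/
noncomputable def Upoly (n : ℕ) : MvPolynomial ℕ ℚ := by
  classical
  exact (1 / (n.factorial : ℚ)) •
    ∑ G ∈ Finset.univ.filter (fun G : SimpleGraph (Fin n) => G.IsTree),
      ∏ v : Fin n, MvPolynomial.X (vdeg G v)

lemma Upoly_spec (n : ℕ) [DecidablePred (fun G : SimpleGraph (Fin n) => G.IsTree)] :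
    Upoly n = (1 / (n.factorial : ℚ)) •
      ∑ G ∈ Finset.univ.filter (fun G : SimpleGraph (Fin n) => G.IsTree),
        ∏ v : Fin n, MvPolynomial.X (vdeg G v) := by
  unfold Upoly
  congr 1
  apply Finset.sum_congr _ (fun _ _ => rfl)
  exact Finset.filter_congr_decidable _ _ _

/-- The zero-substitution for variable 1. -/
noncomputable def Zsub : ℕ → MvPolynomial ℕ ℚ :=
  fun j : ℕ => if j = 1 then (0 : MvPolynomial ℕ ℚ) else X j

lemma coeff_pderiv (i : ℕ) (P : MvPolynomial ℕ ℚ) (m : ℕ →₀ ℕ) :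
    coeff m (pderiv i P) = ((m i : ℚ) + 1) * coeff (m + Finsupp.single i 1) P := by
  induction P using MvPolynomial.induction_on' with
  | add p q hp hq => simp [hp, hq, mul_add]
  | monomial μ c =>
    rw [pderiv_monomial, coeff_monomial, coeff_monomial]
    by_cases h : μ = m + Finsupp.single i 1
    · subst h
      rw [if_pos (add_tsub_cancel_right _ _), if_pos rfl]
      simp [mul_comm]
    · rw [if_neg h]
      by_cases hμ : μ i = 0
      · by_cases h2 : μ - Finsupp.single i 1 = m
        · rw [if_pos h2]; simp [hμ]
        · rw [if_neg h2]; ring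
      · have : μ - Finsupp.single i 1 ≠ m := by
          intro hc
          apply h
          rw [← hc, tsub_add_cancel_of_le]
          rwa [Finsupp.single_le_iff, Nat.one_le_iff_ne_zero]
        rw [if_neg this]; ring

lemma coeff_aeval_Zsub (P : MvPolynomial ℕ ℚ) (m : ℕ →₀ ℕ) (hm : m 1 = 0) :
    coeff m (aeval Zsub P) = coeff m P := by
  induction P using MvPolynomial.induction_on' with
  | add p q hp hq => rw [map_add, coeff_add, coeff_add, hp, hq]
  | monomial μ c =>
    rw [aeval_monomial]
    by_cases h : μ 1 = 0
    · have : (μ.prod fun j k => Zsub j ^ k) = μ.prod fun j k => (X j : MvPolynomial ℕ ℚ) ^ k := by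
        apply Finsupp.prod_congr
        intro j hj
        have : j ≠ 1 := fun hc => by simp [hc, h] at hj
        simp [Zsub, this]
      rw [this, algebraMap_eq, ← monomial_eq]
    · have h1 : (1 : ℕ) ∈ μ.support := by simpa using h
      have : (μ.prod fun j k => Zsub j ^ k) = 0 := by
        apply Finset.prod_eq_zero h1
        simp [Zsub, h]
      rw [this, mul_zero]
      have : μ ≠ m := fun hc => h (hc ▸ hm)
      simp [coeff_monomial, this]

lemma eq_zero_of_pderiv_one (P : MvPolynomial ℕ ℚ) (h1 : pderiv 1 P = 0)
    (h0 : aeval Zsub P = 0) : P = 0 := by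
  ext m
  rw [coeff_zero]
  by_cases hm : m 1 = 0
  · rw [← coeff_aeval_Zsub P m hm, h0, coeff_zero]
  · have hle : Finsupp.single 1 1 ≤ m := by
      rwa [Finsupp.single_le_iff, Nat.one_le_iff_ne_zero]
    have := coeff_pderiv 1 P (m - Finsupp.single 1 1)
    rw [h1, tsub_add_cancel_of_le hle, coeff_zero] at this
    have hne : (((((m - Finsupp.single 1 1) : ℕ →₀ ℕ) 1 : ℕ) : ℚ) + 1) ≠ 0 :=
      Nat.cast_add_one_ne_zero _
    exact (mul_eq_zero.mp this.symm).resolve_left hne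

lemma pderiv_prod_X {α : Type*} [DecidableEq α] (j : ℕ) (s : Finset α) (d : α → ℕ) :
    pderiv j (∏ v ∈ s, (X (d v) : MvPolynomial ℕ ℚ)) =
      ∑ v ∈ s.filter (fun v => d v = j), ∏ w ∈ s.erase v, (X (d w) : MvPolynomial ℕ ℚ) := by
  classical
  induction s using Finset.induction_on with
  | empty => simp
  | @insert a s ha ih =>
    rw [Finset.prod_insert ha, pderiv_mul, ih, Finset.filter_insert]
    have hX : pderiv j (X (d a) : MvPolynomial ℕ ℚ) = if d a = j then 1 else 0 := by
      rw [pderiv_X]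
      rcases eq_or_ne (d a) j with h | h
      · simp [h, Pi.single_apply]
      · simp [Pi.single_apply, Ne.symm h, h]
    have herase : ∀ v ∈ s.filter (fun v => d v = j),
        (insert a s).erase v = insert a (s.erase v) := by
      intro v hv
      rw [Finset.erase_insert_of_ne]
      rintro rfl
      exact ha (Finset.mem_of_mem_filter _ hv)
    by_cases h : d a = j
    · rw [if_pos h, hX, if_pos h, Finset.sum_insert (fun hc => ha (Finset.mem_of_mem_filter _ hc)),
        Finset.erase_insert ha, one_mul]
      congr 1
      rw [Finset.mul_sum]
      apply Finset.sum_congr rfl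
      intro v hv
      rw [herase v hv, Finset.prod_insert (fun hc => ha (Finset.mem_of_mem_erase hc))]
    · rw [if_neg h, hX, if_neg h, zero_mul, zero_add, Finset.mul_sum]
      apply Finset.sum_congr rfl
      intro v hv
      rw [herase v hv, Finset.prod_insert (fun hc => ha (Finset.mem_of_mem_erase hc))]

namespace SimpleGraph
variable {V W : Type*}

/-- The canonical homomorphism from `G` to `G.map f`. -/
def mapHom (f : V ↪ W) (G : SimpleGraph V) : G →g G.map f :=
  ⟨f, fun h => (map_adj_apply).mpr h⟩

lemma exists_walk_map (f : V ↪ W) (G : SimpleGraph V) :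
    ∀ {x y : W} (p : (G.map f).Walk x y) (a b : V) (ha : f a = x) (hb : f b = y),
      ∃ q : G.Walk a b, q.map (mapHom f G) = p.copy ha.symm hb.symm := by
  intro x y p
  induction p with
  | nil =>
    intro a b ha hb
    subst ha
    have : b = a := f.injective (hb.trans rfl)
    subst this
    exact ⟨Walk.nil, by simp; rfl⟩
  | @cons x z y h p ih =>
    intro a b ha hb
    subst ha
    obtain ⟨-, u, w, huw, hu, hw⟩ := h
    have : u = a := f.injective hu
    subst this
    subst hw
    obtain ⟨q, hq⟩ := ih w b rfl hb
    subst hb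
    refine ⟨Walk.cons huw q, ?_⟩
    simp only [Walk.map_cons, Walk.copy_rfl_rfl] at hq ⊢
    rw [hq]
    rfl

lemma IsAcyclic.mapEmb (f : V ↪ W) {G : SimpleGraph V} (hG : G.IsAcyclic) :
    (G.map f).IsAcyclic := by
  intro x c hc
  cases c with
  | nil => exact hc.not_of_nil
  | @cons x z y h p =>
    obtain ⟨-, u, w, huw, hu, hw⟩ := id h
    subst hu
    obtain ⟨q, hq⟩ := exists_walk_map f G (Walk.cons h p) u u rfl rfl
    rw [Walk.copy_rfl_rfl] at hq
    rw [← hq] at hc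
    exact hG q ((Walk.map_isCycle_iff_of_injective f.injective).mp hc)

lemma IsAcyclic.comapEmb (f : V ↪ W) {G : SimpleGraph W} (hG : G.IsAcyclic) :
    (G.comap f).IsAcyclic := by
  intro x c hc
  exact hG _ ((Walk.map_isCycle_iff_of_injective (f := (⟨f, id⟩ : G.comap f →g G))
    f.injective).mpr hc)

lemma vdeg_eq_degree [Fintype V] (G : SimpleGraph V) [DecidableRel G.Adj] (v : V) :
    vdeg G v = G.degree v := by
  rw [vdeg, ← card_neighborFinset_eq_degree, neighborFinset_def, Set.ncard_eq_toFinset_card']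

lemma exists_adj_of_connected [Fintype V] {G : SimpleGraph V} (hG : G.Connected)
    (hcard : 2 ≤ Fintype.card V) (v : V) : ∃ w, G.Adj v w := by
  obtain ⟨w, hw⟩ := Fintype.exists_ne_of_one_lt_card (by omega) v
  obtain ⟨p⟩ := hG (v) (w)
  cases p with
  | nil => exact absurd rfl hw.symm
  | cons h q => exact ⟨_, h⟩

lemma vdeg_pos [Fintype V] {G : SimpleGraph V} (hG : G.Connected)
    (hcard : 2 ≤ Fintype.card V) (v : V) : 0 < vdeg G v := by
  obtain ⟨w, hw⟩ := exists_adj_of_connected hG hcard v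
  rw [vdeg, Set.ncard_pos (Set.toFinite _)]
  exact ⟨w, hw⟩

lemma vdeg_le [Fintype V] (G : SimpleGraph V) (v : V) : vdeg G v ≤ Fintype.card V - 1 := by
  classical
  have h : G.neighborSet v ⊆ {v}ᶜ := fun w hw => by
    simp only [Set.mem_compl_iff, Set.mem_singleton_iff]
    rintro rfl
    exact G.irrefl hw
  calc vdeg G v ≤ ({v}ᶜ : Set V).ncard := Set.ncard_le_ncard h (Set.toFinite _)
    _ = Fintype.card V - 1 := by
        rw [Set.ncard_eq_toFinset_card']
        simp [Finset.card_compl]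

lemma exists_leaf [Fintype V] {G : SimpleGraph V} (hG : G.IsTree)
    (hcard : 2 ≤ Fintype.card V) : ∃ v, vdeg G v = 1 := by
  classical
  by_contra hno
  push_neg at hno
  have h2 : ∀ v, 2 ≤ G.degree v := by
    intro v
    have hpos := vdeg_pos hG.isConnected hcard v
    have hne := hno v
    rw [vdeg_eq_degree] at hpos hne
    omega
  have hsum := G.sum_degrees_eq_twice_card_edges
  have hedge := hG.card_edgeFinset
  have hge : 2 * Fintype.card V ≤ ∑ v, G.degree v := by
    calc 2 * Fintype.card V = ∑ _v : V, 2 := by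
          rw [Finset.sum_const, Finset.card_univ, smul_eq_mul, mul_comm]
      _ ≤ ∑ v, G.degree v := Finset.sum_le_sum fun v _ => h2 v
  omega

lemma adj_eq_of_vdeg_one {G : SimpleGraph V} {v a b : V} (h : vdeg G v = 1)
    (h1 : G.Adj v a) (h2 : G.Adj v b) : a = b := by
  rw [vdeg, Set.ncard_eq_one] at h
  obtain ⟨c, hc⟩ := h
  have ha : a ∈ G.neighborSet v := h1
  have hb : b ∈ G.neighborSet v := h2
  rw [hc] at ha hb
  rw [Set.mem_singleton_iff.mp ha, Set.mem_singleton_iff.mp hb]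

lemma exists_first_edge {G : SimpleGraph V} {x y : V} (p : G.Walk x y) (hxy : x ≠ y) :
    ∃ z, G.Adj x z ∧ s(x, z) ∈ p.edges := by
  cases p with
  | nil => exact absurd rfl hxy
  | cons h q => exact ⟨_, h, by simp⟩

end SimpleGraph

section Att
open SimpleGraph Fin

variable {m : ℕ}

/-- Attach a new leaf `last` to vertex `castSucc v`. -/
def att (G' : SimpleGraph (Fin (m+2))) (v : Fin (m+2)) : SimpleGraph (Fin (m+3)) :=
  G'.map Fin.castSuccEmb ⊔ SimpleGraph.edge (Fin.last (m+2)) v.castSucc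

open scoped Classical in
/-- The neighbor of the last vertex, pulled back along `castSucc`. -/
noncomputable def fwdv (G : SimpleGraph (Fin (m+3))) : Fin (m+2) :=
  if h : ∃ u : Fin (m+2), G.Adj (Fin.last (m+2)) u.castSucc then h.choose else 0

variable {G' : SimpleGraph (Fin (m+2))} {v : Fin (m+2)}

lemma att_adj {a b : Fin (m+3)} : (att G' v).Adj a b ↔
    (∃ a' b', G'.Adj a' b' ∧ castSucc a' = a ∧ castSucc b' = b) ∨
    ((a = last (m+2) ∧ b = castSucc v) ∨ (a = castSucc v ∧ b = last (m+2))) := by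
  have hne : castSucc v ≠ last (m+2) := (castSucc_lt_last v).ne
  constructor
  · rintro (h | h)
    · obtain ⟨_, a', b', h, ha, hb⟩ := h
      exact Or.inl ⟨a', b', h, ha, hb⟩
    · rw [edge_adj] at h
      rcases h.1 with ⟨rfl, rfl⟩ | ⟨rfl, rfl⟩
      · exact Or.inr (Or.inl ⟨rfl, rfl⟩)
      · exact Or.inr (Or.inr ⟨rfl, rfl⟩)
  · rintro (⟨a', b', h, ha, hb⟩ | (⟨rfl, rfl⟩ | ⟨rfl, rfl⟩))
    · exact Or.inl ((SimpleGraph.map_adj _ _ _ _).mpr ⟨a', b', h, ha, hb⟩)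
    · exact Or.inr (by rw [edge_adj]; exact ⟨Or.inl ⟨rfl, rfl⟩, Ne.symm hne⟩)
    · exact Or.inr (by rw [edge_adj]; exact ⟨Or.inr ⟨rfl, rfl⟩, hne⟩)

lemma att_adj_last {w : Fin (m+3)} : (att G' v).Adj (last (m+2)) w ↔ w = castSucc v := by
  rw [att_adj]
  constructor
  · rintro (⟨a', b', _, ha, _⟩ | (⟨_, rfl⟩ | ⟨hv, _⟩))
    · exact absurd ha (castSucc_lt_last a').ne
    · rfl
    · exact absurd hv.symm (castSucc_lt_last v).ne
  · rintro rfl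
    exact Or.inr (Or.inl ⟨rfl, rfl⟩)

lemma att_nbr_last : (att G' v).neighborSet (last (m+2)) = {castSucc v} := by
  ext w; simp [SimpleGraph.mem_neighborSet, att_adj_last]

lemma att_adj_castSucc {w : Fin (m+2)} {z : Fin (m+3)} :
    (att G' v).Adj (castSucc w) z ↔
      (∃ b', G'.Adj w b' ∧ castSucc b' = z) ∨ (w = v ∧ z = last (m+2)) := by
  rw [att_adj]
  constructor
  · rintro (⟨a', b', h, ha, hb⟩ | (⟨hw, _⟩ | ⟨hw, rfl⟩))
    · obtain rfl : a' = w := castSucc_injective _ ha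
      exact Or.inl ⟨b', h, hb⟩
    · exact absurd hw (castSucc_lt_last w).ne
    · exact Or.inr ⟨castSucc_injective _ hw, rfl⟩
  · rintro (⟨b', h, hb⟩ | ⟨rfl, rfl⟩)
    · exact Or.inl ⟨w, b', h, rfl, hb⟩
    · exact Or.inr (Or.inr ⟨rfl, rfl⟩)

lemma att_nbr_castSucc {w : Fin (m+2)} (hw : w ≠ v) :
    (att G' v).neighborSet (castSucc w) = castSucc '' (G'.neighborSet w) := by
  ext z
  simp only [SimpleGraph.mem_neighborSet, att_adj_castSucc, Set.mem_image]
  constructor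
  · rintro (⟨b', h, hb⟩ | ⟨hv, _⟩)
    · exact ⟨b', h, hb⟩
    · exact absurd hv hw
  · rintro ⟨b', h, hb⟩
    exact Or.inl ⟨b', h, hb⟩

lemma att_nbr_v :
    (att G' v).neighborSet (castSucc v) =
      insert (last (m+2)) (castSucc '' (G'.neighborSet v)) := by
  ext z
  simp only [SimpleGraph.mem_neighborSet, att_adj_castSucc, Set.mem_insert_iff, Set.mem_image]
  constructor
  · rintro (⟨b', h, hb⟩ | ⟨_, rfl⟩)
    · exact Or.inr ⟨b', h, hb⟩
    · exact Or.inl rfl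
  · rintro (rfl | ⟨b', h, hb⟩)
    · exact Or.inr ⟨by simp, rfl⟩
    · exact Or.inl ⟨b', h, hb⟩

lemma vdeg_att_last : vdeg (att G' v) (last (m+2)) = 1 := by
  rw [vdeg, att_nbr_last, Set.ncard_singleton]

lemma vdeg_att_castSucc {w : Fin (m+2)} (hw : w ≠ v) :
    vdeg (att G' v) (castSucc w) = vdeg G' w := by
  rw [vdeg, att_nbr_castSucc hw, Set.ncard_image_of_injective _ (castSucc_injective _), vdeg]

lemma vdeg_att_v : vdeg (att G' v) (castSucc v) = vdeg G' v + 1 := by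
  rw [vdeg, att_nbr_v, Set.ncard_insert_of_notMem ?hnm (Set.toFinite _),
    Set.ncard_image_of_injective _ (castSucc_injective _), vdeg]
  case hnm =>
    rintro ⟨b', _, hb⟩
    exact (castSucc_lt_last b').ne hb

/-- The canonical hom from `G'` into `att G' v`. -/
def attHom : G' →g att G' v :=
  ⟨castSucc, fun h => att_adj.mpr (Or.inl ⟨_, _, h, rfl, rfl⟩)⟩

lemma att_connected (hG' : G'.Connected) : (att G' v).Connected := by
  rw [connected_iff]
  refine ⟨?_, ⟨last (m+2)⟩⟩
  have key : ∀ a : Fin (m+3), (att G' v).Reachable a (castSucc v) := by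
    intro a
    by_cases ha : a = last (m+2)
    · subst ha
      exact (att_adj_last.mpr rfl).reachable
    · obtain ⟨a₀, rfl⟩ := Fin.exists_castSucc_eq.mpr ha
      exact (hG' a₀ v).map (attHom (G' := G') (v := v))
  intro a b
  exact (key a).trans (key b).symm

lemma att_isAcyclic (hG' : G'.IsAcyclic) : (att G' v).IsAcyclic := by
  intro x c hc
  by_cases hl : last (m+2) ∈ c.support
  · have hc' := hc.rotate hl
    revert hc'
    generalize c.rotate _ hl = d
    intro hc'
    cases d with
    | nil => exact hc'.not_of_nil
    | @cons _ z _ h q =>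
      obtain rfl : z = castSucc v := att_adj_last.mp h
      have hq : s(last (m+2), castSucc v) ∈ q.edges := by
        obtain ⟨z2, h2, hmem⟩ := SimpleGraph.exists_first_edge q.reverse
          ((castSucc_lt_last v).ne.symm)
        obtain rfl : z2 = castSucc v := att_adj_last.mp h2
        rwa [Walk.edges_reverse, List.mem_reverse] at hmem
      have hnodup := hc'.edges_nodup
      rw [Walk.edges_cons] at hnodup
      exact (List.nodup_cons.mp hnodup).1 hq
  · have hsub : ∀ e ∈ c.edges, e ∈ (G'.map Fin.castSuccEmb).edgeSet := by
      intro e he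
      have hH := c.edges_subset_edgeSet he
      revert hH he
      induction e using Sym2.ind with
      | _ a b =>
        intro he hH
        rw [SimpleGraph.mem_edgeSet] at hH ⊢
        rcases att_adj.mp hH with ⟨a', b', h, ha, hb⟩ | (⟨rfl, _⟩ | ⟨_, rfl⟩)
        · exact (SimpleGraph.map_adj _ _ _ _).mpr ⟨a', b', h, ha, hb⟩
        · exact absurd (Walk.fst_mem_support_of_mem_edges c he) hl
        · exact absurd (Walk.snd_mem_support_of_mem_edges c he) hl
    exact (hG'.mapEmb Fin.castSuccEmb) _ (hc.transfer hsub)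

lemma att_isTree (hG' : G'.IsTree) : (att G' v).IsTree :=
  ⟨att_connected hG'.isConnected, att_isAcyclic hG'.IsAcyclic⟩

lemma att_comap : (att G' v).comap (castSucc : Fin (m+2) → Fin (m+3)) = G' := by
  ext a b
  rw [comap_adj, att_adj]
  constructor
  · rintro (⟨a', b', h, ha, hb⟩ | (⟨ha, _⟩ | ⟨_, hb⟩))
    · obtain rfl : a' = a := castSucc_injective _ ha
      obtain rfl : b' = b := castSucc_injective _ hb
      exact h
    · exact absurd ha (castSucc_lt_last a).ne
    · exact absurd hb (castSucc_lt_last b).ne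
  · intro h
    exact Or.inl ⟨a, b, h, rfl, rfl⟩

lemma comap_att {G : SimpleGraph (Fin (m+3))} (hdeg : vdeg G (last (m+2)) = 1)
    (hv : G.Adj (last (m+2)) (castSucc v)) :
    att (G.comap (castSucc : Fin (m+2) → Fin (m+3))) v = G := by
  ext a b
  rw [att_adj]
  constructor
  · rintro (⟨a', b', h, rfl, rfl⟩ | (⟨rfl, rfl⟩ | ⟨rfl, rfl⟩))
    · exact h
    · exact hv
    · exact hv.symm
  · intro h
    by_cases ha : a = last (m+2)
    · subst ha
      exact Or.inr (Or.inl ⟨rfl, SimpleGraph.adj_eq_of_vdeg_one hdeg h hv⟩)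
    by_cases hb : b = last (m+2)
    · subst hb
      exact Or.inr (Or.inr ⟨SimpleGraph.adj_eq_of_vdeg_one hdeg h.symm hv, rfl⟩)
    · obtain ⟨a₀, rfl⟩ := Fin.exists_castSucc_eq.mpr ha
      obtain ⟨b₀, rfl⟩ := Fin.exists_castSucc_eq.mpr hb
      exact Or.inl ⟨a₀, b₀, h, rfl, rfl⟩

lemma fwdv_spec {G : SimpleGraph (Fin (m+3))} (hdeg : vdeg G (last (m+2)) = 1)
    (hv : G.Adj (last (m+2)) (castSucc v)) : fwdv G = v := by
  have h : ∃ u : Fin (m+2), G.Adj (Fin.last (m+2)) u.castSucc := ⟨v, hv⟩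
  rw [fwdv, dif_pos h]
  exact castSucc_injective _
    (SimpleGraph.adj_eq_of_vdeg_one hdeg h.choose_spec hv)

lemma comap_connected {G : SimpleGraph (Fin (m+3))} (hG : G.Connected)
    (hdeg : vdeg G (last (m+2)) = 1) :
    (G.comap (castSucc : Fin (m+2) → Fin (m+3))).Connected := by
  rw [connected_iff]
  refine ⟨?_, ⟨0⟩⟩
  have key : ∀ (k : ℕ) {x y : Fin (m+3)} (p : G.Walk x y), p.length ≤ k →
      ∀ (a b : Fin (m+2)), castSucc a = x → castSucc b = y →
      (G.comap (castSucc : Fin (m+2) → Fin (m+3))).Reachable a b := by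
    intro k
    induction k with
    | zero =>
      intro x y p hp a b ha hb
      cases p with
      | nil =>
        obtain rfl : a = b := castSucc_injective _ (ha.trans hb.symm)
        exact Reachable.refl a
      | cons h q => simp [Walk.length_cons] at hp
    | succ k ih =>
      intro x y p hp a b ha hb
      cases p with
      | nil =>
        obtain rfl : a = b := castSucc_injective _ (ha.trans hb.symm)
        exact Reachable.refl a
      | @cons _ z _ h q =>
        by_cases hz : z = last (m+2)
        · subst hz
          cases q with
          | nil => exact absurd hb (castSucc_lt_last b).ne
          | @cons _ z2 _ h2 q2 =>
            obtain rfl : x = z2 := SimpleGraph.adj_eq_of_vdeg_one hdeg h.symm h2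
            refine ih q2 ?_ a b ha hb
            simp only [Walk.length_cons] at hp
            omega
        · obtain ⟨c, rfl⟩ := Fin.exists_castSucc_eq.mpr hz
          subst ha
          have hstep : (G.comap (castSucc : Fin (m+2) → Fin (m+3))).Adj a c := h
          refine hstep.reachable.trans (ih q ?_ c b rfl hb)
          simp only [Walk.length_cons] at hp
          omega
  intro a b
  obtain ⟨p⟩ := hG (castSucc a) (castSucc b)
  exact key p.length p le_rfl a b rfl rfl

lemma comap_isTree {G : SimpleGraph (Fin (m+3))} (hG : G.IsTree)
    (hdeg : vdeg G (last (m+2)) = 1) :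
    (G.comap (castSucc : Fin (m+2) → Fin (m+3))).IsTree := by
  refine ⟨comap_connected hG.isConnected hdeg, ?_⟩
  have := hG.IsAcyclic.comapEmb ⟨castSucc, castSucc_injective _⟩
  exact this

end Att

section Sums
open SimpleGraph Fin Finset

/-- The finset of trees on `Fin N`. -/
noncomputable def treeset (N : ℕ) : Finset (SimpleGraph (Fin N)) := by
  classical exact Finset.univ.filter (fun G => G.IsTree)

lemma mem_treeset {N : ℕ} {G : SimpleGraph (Fin N)} : G ∈ treeset N ↔ G.IsTree := by
  unfold treeset
  simp

lemma Upoly_treeset (N : ℕ) :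
    Upoly N = (1 / (N.factorial : ℚ)) • ∑ G ∈ treeset N, ∏ v : Fin N, X (vdeg G v) := by
  unfold Upoly treeset
  rfl

/-- Transfer of trees along a vertex equivalence. -/
lemma isTree_comap_equiv {N : ℕ} (e : Fin N ≃ Fin N) {G : SimpleGraph (Fin N)}
    (hG : G.IsTree) : (G.comap ⇑e).IsTree := by
  constructor
  · let ι : G.comap ⇑e ≃g G := ⟨e, Iff.rfl⟩
    exact hG.isConnected.map ι.symm.toHom ι.symm.toEquiv.surjective
  · exact hG.IsAcyclic.comapEmb e.toEmbedding

lemma vdeg_comap_equiv {N : ℕ} (e : Fin N ≃ Fin N) (G : SimpleGraph (Fin N)) (x : Fin N) :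
    vdeg (G.comap ⇑e) x = vdeg G (e x) := by
  have h : (G.comap ⇑e).neighborSet x = ⇑e.symm '' (G.neighborSet (e x)) := by
    ext z
    simp [SimpleGraph.mem_neighborSet, Equiv.symm_apply_eq, eq_comm]
  rw [vdeg, h, Set.ncard_image_of_injective _ e.symm.injective, vdeg]

open scoped Classical in
lemma sum_swap_leaf {N : ℕ} (ℓ : Fin N) :
    ∑ G ∈ treeset N, (if vdeg G ℓ = 1 then ∏ w ∈ univ.erase ℓ, (X (vdeg G w) : MvPolynomial ℕ ℚ) else 0)
      = ∑ G ∈ treeset N,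
        (if vdeg G (ℓ) = 1 then ∏ w ∈ univ.erase ℓ, (X (vdeg G w) : MvPolynomial ℕ ℚ) else 0) :=
  rfl

end Sums

section Sums2
open SimpleGraph Fin Finset

variable {m : ℕ}

open scoped Classical in
lemma swap_step {N : ℕ} (ℓ L : Fin N) :
    ∑ G ∈ treeset N,
        (if vdeg G ℓ = 1 then ∏ w ∈ univ.erase ℓ, (X (vdeg G w) : MvPolynomial ℕ ℚ) else 0)
      = ∑ G ∈ treeset N,
        (if vdeg G L = 1 then ∏ w ∈ univ.erase L, (X (vdeg G w) : MvPolynomial ℕ ℚ) else 0) := by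
  set e := Equiv.swap ℓ L with he
  have hee : ∀ G : SimpleGraph (Fin N), (G.comap ⇑e).comap ⇑e = G := by
    intro G
    rw [SimpleGraph.comap_comap]
    have : ⇑e ∘ ⇑e = id := by
      funext z
      simp [e, Equiv.swap_apply_self]
    rw [this, SimpleGraph.comap_id]
  refine Finset.sum_nbij' (fun G => G.comap ⇑e) (fun G => G.comap ⇑e) ?_ ?_ ?_ ?_ ?_
  · intro G hG
    exact mem_treeset.mpr (isTree_comap_equiv e (mem_treeset.mp hG))
  · intro G hG
    exact mem_treeset.mpr (isTree_comap_equiv e (mem_treeset.mp hG))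
  · intro G _; exact hee G
  · intro G _; exact hee G
  · intro G _
    simp only [vdeg_comap_equiv]
    rw [show e L = ℓ from Equiv.swap_apply_right ℓ L]
    refine if_congr Iff.rfl ?_ rfl
    refine Finset.prod_nbij' (fun w => e w) (fun w => e w) ?_ ?_ ?_ ?_ ?_
    · intro w hw
      rw [mem_erase] at hw ⊢
      refine ⟨?_, mem_univ _⟩
      intro hc
      apply hw.1
      have := congrArg e hc
      rwa [Equiv.swap_apply_self, Equiv.swap_apply_right] at this
    · intro w hw
      rw [mem_erase] at hw ⊢
      refine ⟨?_, mem_univ _⟩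
      intro hc
      apply hw.1
      have := congrArg e hc
      rwa [Equiv.swap_apply_self, Equiv.swap_apply_left] at this
    · intro w _; exact Equiv.swap_apply_self _ _ _
    · intro w _; exact Equiv.swap_apply_self _ _ _
    · intro w _; simp [e, Equiv.swap_apply_self]

open scoped Classical in
lemma step_A (m : ℕ) :
    ∑ G ∈ treeset (m+3), pderiv 1 (∏ v, (X (vdeg G v) : MvPolynomial ℕ ℚ))
      = ((m+3 : ℚ)) • ∑ G ∈ (treeset (m+3)).filter (fun G => vdeg G (last (m+2)) = 1),
          ∏ w ∈ univ.erase (last (m+2)), (X (vdeg G w) : MvPolynomial ℕ ℚ) := by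
  calc ∑ G ∈ treeset (m+3), pderiv 1 (∏ v, (X (vdeg G v) : MvPolynomial ℕ ℚ))
      = ∑ G ∈ treeset (m+3), ∑ ℓ : Fin (m+3),
          (if vdeg G ℓ = 1 then ∏ w ∈ univ.erase ℓ, (X (vdeg G w) : MvPolynomial ℕ ℚ) else 0) := by
        refine sum_congr rfl fun G _ => ?_
        rw [pderiv_prod_X 1 univ (vdeg G), sum_filter]
    _ = ∑ ℓ : Fin (m+3), ∑ G ∈ treeset (m+3),
          (if vdeg G ℓ = 1 then ∏ w ∈ univ.erase ℓ, (X (vdeg G w) : MvPolynomial ℕ ℚ) else 0) :=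
        Finset.sum_comm
    _ = ∑ _ℓ : Fin (m+3), ∑ G ∈ treeset (m+3),
          (if vdeg G (last (m+2)) = 1 then
            ∏ w ∈ univ.erase (last (m+2)), (X (vdeg G w) : MvPolynomial ℕ ℚ) else 0) :=
        sum_congr rfl fun ℓ _ => swap_step ℓ (last (m+2))
    _ = (m+3) • ∑ G ∈ treeset (m+3),
          (if vdeg G (last (m+2)) = 1 then
            ∏ w ∈ univ.erase (last (m+2)), (X (vdeg G w) : MvPolynomial ℕ ℚ) else 0) := by
        rw [Finset.sum_const, Finset.card_univ, Fintype.card_fin]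
    _ = ((m+3 : ℚ)) • ∑ G ∈ (treeset (m+3)).filter (fun G => vdeg G (last (m+2)) = 1),
          ∏ w ∈ univ.erase (last (m+2)), (X (vdeg G w) : MvPolynomial ℕ ℚ) := by
        rw [sum_filter, ← Nat.cast_smul_eq_nsmul ℚ]
        norm_cast

lemma fwdv_adj {G : SimpleGraph (Fin (m+3))} (hdeg : vdeg G (last (m+2)) = 1) :
    G.Adj (last (m+2)) (castSucc (fwdv G)) := by
  obtain ⟨u, hu⟩ := Set.ncard_eq_one.mp hdeg
  have hadj : G.Adj (last (m+2)) u := by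
    have : u ∈ G.neighborSet (last (m+2)) := by rw [hu]; exact Set.mem_singleton u
    exact this
  have hne : u ≠ last (m+2) := fun hc => G.irrefl (hc ▸ hadj)
  obtain ⟨u₀, rfl⟩ := Fin.exists_castSucc_eq.mpr hne
  have h : ∃ w : Fin (m+2), G.Adj (last (m+2)) w.castSucc := ⟨u₀, hadj⟩
  rw [fwdv, dif_pos h]
  exact h.choose_spec

open scoped Classical in
lemma att_prod (G' : SimpleGraph (Fin (m+2))) (v : Fin (m+2)) :
    ∏ w ∈ (univ : Finset (Fin (m+3))).erase (last (m+2)),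
        (X (vdeg (att G' v) w) : MvPolynomial ℕ ℚ)
      = X (vdeg G' v + 1) * ∏ w ∈ univ.erase v, (X (vdeg G' w) : MvPolynomial ℕ ℚ) := by
  have huniv : (univ : Finset (Fin (m+3))).erase (last (m+2)) = univ.map castSuccEmb := by
    rw [Fin.univ_castSuccEmb, Finset.erase_cons]
  rw [huniv, Finset.prod_map,
    ← Finset.mul_prod_erase univ
      (fun w => (X (vdeg (att G' v) (castSuccEmb w)) : MvPolynomial ℕ ℚ)) (Finset.mem_univ v)]
  congr 1
  · rw [show ((castSuccEmb v : Fin (m+3))) = castSucc v from rfl, vdeg_att_v]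
  · refine Finset.prod_congr rfl fun w hw => ?_
    rw [show ((castSuccEmb w : Fin (m+3))) = castSucc w from rfl,
      vdeg_att_castSucc (Finset.mem_erase.mp hw).1]

open scoped Classical in
lemma step_B (m : ℕ) :
    ∑ G ∈ (treeset (m+3)).filter (fun G => vdeg G (last (m+2)) = 1),
        ∏ w ∈ univ.erase (last (m+2)), (X (vdeg G w) : MvPolynomial ℕ ℚ)
      = ∑ p ∈ (treeset (m+2)) ×ˢ (univ : Finset (Fin (m+2))),
          X (vdeg p.1 p.2 + 1) * ∏ w ∈ univ.erase p.2, (X (vdeg p.1 w) : MvPolynomial ℕ ℚ) := by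
  refine (Finset.sum_nbij' (fun p => att p.1 p.2)
    (fun G => (G.comap (castSucc : Fin (m+2) → Fin (m+3)), fwdv G)) ?_ ?_ ?_ ?_ ?_).symm
  · rintro ⟨G', v⟩ hp
    rw [mem_product] at hp
    rw [mem_filter, mem_treeset]
    exact ⟨att_isTree (mem_treeset.mp hp.1), vdeg_att_last⟩
  · intro G hG
    rw [mem_filter, mem_treeset] at hG
    rw [mem_product, mem_treeset]
    exact ⟨comap_isTree hG.1 hG.2, mem_univ _⟩
  · rintro ⟨G', v⟩ hp
    have h1 : (att G' v).comap (castSucc : Fin (m+2) → Fin (m+3)) = G' := att_comap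
    have h2 : fwdv (att G' v) = v :=
      fwdv_spec vdeg_att_last (att_adj_last.mpr rfl)
    simp [h1, h2]
  · intro G hG
    rw [mem_filter] at hG
    exact comap_att hG.2 (fwdv_adj hG.2)
  · rintro ⟨G', v⟩ _
    exact (att_prod G' v).symm

open scoped Classical in
lemma step_C (G' : SimpleGraph (Fin (m+2))) (hG' : G'.IsTree) :
    ∑ i ∈ Finset.Icc 1 (m+1), (X (i+1) : MvPolynomial ℕ ℚ) *
        ∑ v ∈ univ.filter (fun v => vdeg G' v = i),
          ∏ w ∈ univ.erase v, (X (vdeg G' w) : MvPolynomial ℕ ℚ)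
      = ∑ v : Fin (m+2), X (vdeg G' v + 1) *
          ∏ w ∈ univ.erase v, (X (vdeg G' w) : MvPolynomial ℕ ℚ) := by
  have hmaps : ∀ v ∈ (univ : Finset (Fin (m+2))), vdeg G' v ∈ Finset.Icc 1 (m+1) := by
    intro v _
    rw [Finset.mem_Icc]
    constructor
    · exact SimpleGraph.vdeg_pos hG'.isConnected (by simp) v
    · have := SimpleGraph.vdeg_le G' v
      simpa using this
  rw [← Finset.sum_fiberwise_of_maps_to hmaps
    (fun v => (X (vdeg G' v + 1) : MvPolynomial ℕ ℚ) * ∏ w ∈ univ.erase v, X (vdeg G' w))]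
  refine sum_congr rfl fun i _ => ?_
  rw [Finset.mul_sum]
  refine sum_congr rfl fun v hv => ?_
  rw [(Finset.mem_filter.mp hv).2]

end Sums2

section Final
open SimpleGraph Fin Finset

lemma main_pderiv (m : ℕ) :
    pderiv 1 (Upoly (m+3)) =
      ∑ i ∈ Finset.Icc 1 (m+1), (X (i+1) : MvPolynomial ℕ ℚ) * pderiv i (Upoly (m+2)) := by
  classical
  rw [Upoly_treeset (m+3), Upoly_treeset (m+2)]
  rw [Derivation.map_smul, map_sum, step_A, step_B]
  have hR : ∀ i ∈ Finset.Icc 1 (m+1),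
      (X (i+1) : MvPolynomial ℕ ℚ) * (pderiv i) ((1 / (((m+2).factorial : ℕ) : ℚ)) •
        ∑ G' ∈ treeset (m+2), ∏ v, (X (vdeg G' v) : MvPolynomial ℕ ℚ))
      = (1 / (((m+2).factorial : ℕ) : ℚ)) • (∑ G' ∈ treeset (m+2),
          (X (i+1) : MvPolynomial ℕ ℚ) *
            ∑ v ∈ univ.filter (fun v => vdeg G' v = i),
              ∏ w ∈ univ.erase v, (X (vdeg G' w) : MvPolynomial ℕ ℚ)) := by
    intro i _
    rw [Derivation.map_smul, map_sum, mul_smul_comm, Finset.mul_sum]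
    congr 1
    refine Finset.sum_congr rfl fun G' _ => ?_
    rw [pderiv_prod_X i univ (vdeg G')]
  rw [Finset.sum_congr rfl hR, ← Finset.smul_sum, Finset.sum_comm]
  have hC : ∀ G' ∈ treeset (m+2),
      ∑ i ∈ Finset.Icc 1 (m+1), (X (i+1) : MvPolynomial ℕ ℚ) *
          ∑ v ∈ univ.filter (fun v => vdeg G' v = i),
            ∏ w ∈ univ.erase v, (X (vdeg G' w) : MvPolynomial ℕ ℚ)
        = ∑ v : Fin (m+2), X (vdeg G' v + 1) *
            ∏ w ∈ univ.erase v, (X (vdeg G' w) : MvPolynomial ℕ ℚ) := by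
    intro G' hG'
    exact step_C G' (mem_treeset.mp hG')
  rw [Finset.sum_congr rfl hC]
  rw [smul_smul, ← Finset.sum_product']
  congr 1
  · have h2 : ((m+2).factorial : ℚ) ≠ 0 := by
      exact_mod_cast Nat.factorial_ne_zero _
    have h3 : ((m : ℚ) + 3) ≠ 0 := by positivity
    rw [show (m+3).factorial = (m+3) * (m+2).factorial from Nat.factorial_succ (m+2)]
    push_cast
    field_simp

lemma aeval_Upoly_zero (N : ℕ) (hN : 2 ≤ N) : aeval Zsub (Upoly N) = 0 := by
  classical
  rw [Upoly_treeset, map_smul, map_sum]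
  have : ∀ G ∈ treeset N, aeval Zsub (∏ v : Fin N, (X (vdeg G v) : MvPolynomial ℕ ℚ)) = 0 := by
    intro G hG
    obtain ⟨v, hv⟩ := SimpleGraph.exists_leaf (mem_treeset.mp hG) (by simpa using hN)
    rw [map_prod]
    apply Finset.prod_eq_zero (Finset.mem_univ v)
    rw [hv]
    simp [Zsub]
  rw [Finset.sum_congr rfl this]
  simp

lemma top_isTree_fin2 : (⊤ : SimpleGraph (Fin 2)).IsTree := by
  constructor
  · rw [connected_iff]
    refine ⟨?_, ⟨0⟩⟩
    intro a b
    by_cases hab : a = b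
    · exact hab ▸ Reachable.refl a
    · exact ((SimpleGraph.top_adj a b).mpr hab).reachable
  · intro x c hc
    have h3 := hc.three_le_length
    have hnd := hc.support_nodup
    have hlen := c.length_support
    have := hnd.length_le_card
    simp only [Fintype.card_fin] at this
    have : c.support.tail.length = c.length := by
      rw [List.length_tail, hlen]
      omega
    omega

lemma vdeg_top_fin2 (v : Fin 2) : vdeg (⊤ : SimpleGraph (Fin 2)) v = 1 := by
  classical
  have h : (⊤ : SimpleGraph (Fin 2)).neighborSet v = {v}ᶜ := by
    ext w
    simp [SimpleGraph.top_adj, ne_comm]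
  rw [vdeg, h, Set.ncard_eq_toFinset_card']
  simp [Finset.card_compl]

lemma treeset_two : treeset 2 = {(⊤ : SimpleGraph (Fin 2))} := by
  ext G
  rw [mem_treeset, Finset.mem_singleton]
  constructor
  · intro hG
    ext a b
    rw [SimpleGraph.top_adj]
    constructor
    · exact G.ne_of_adj
    · intro hab
      obtain ⟨w, hw⟩ := SimpleGraph.exists_adj_of_connected hG.isConnected (by simp) a
      have hwa : w ≠ a := (G.ne_of_adj hw).symm
      have : w = b := by
        apply Fin.ext
        have h1 := a.isLt
        have h2 := b.isLt
        have h3 := w.isLt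
        have h4 : (w : ℕ) ≠ (a : ℕ) := fun hc => hwa (Fin.ext hc)
        have h5 : (a : ℕ) ≠ (b : ℕ) := fun hc => hab (Fin.ext hc)
        omega
      exact this ▸ hw
  · rintro rfl
    exact top_isTree_fin2

lemma Upoly_two : Upoly 2 = (1 / 2 : ℚ) • (X 1 : MvPolynomial ℕ ℚ) ^ 2 := by
  rw [Upoly_treeset, treeset_two, Finset.sum_singleton]
  have : ∏ v : Fin 2, (X (vdeg (⊤ : SimpleGraph (Fin 2)) v) : MvPolynomial ℕ ℚ)
      = (X 1 : MvPolynomial ℕ ℚ) ^ 2 := by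
    rw [Fin.prod_univ_two, vdeg_top_fin2, vdeg_top_fin2, sq]
  rw [this]
  norm_num

end Final


/-- `U_2(δ_1) = δ_1²/2`, and for `n ≥ 3`,
`U_n = δ_2 U_{n-1} + ∑_{i=2}^{n-2} δ_{i+1} ∫_0^{δ_1} ∂U_{n-1}/∂δ_i dx`, where the
"integral" `J i` is characterized by `∂(J i)/∂δ_1 = ∂U_{n-1}/∂δ_i` and `J i` vanishes
at `δ_1 = 0`. -/
theorem Upoly_recurrence :
    Upoly 2 = (1 / 2 : ℚ) • (X 1) ^ 2 ∧
    ∀ n : ℕ, 3 ≤ n → ∀ J : ℕ → MvPolynomial ℕ ℚ,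
      (∀ i ∈ Finset.Icc 2 (n - 2),
        pderiv 1 (J i) = pderiv i (Upoly (n - 1)) ∧
        aeval (fun j : ℕ => if j = 1 then (0 : MvPolynomial ℕ ℚ) else X j) (J i) = 0) →
      Upoly n = X 2 * Upoly (n - 1) +
        ∑ i ∈ Finset.Icc 2 (n - 2), X (i + 1) * J i := by
  constructor
  · exact Upoly_two
  · intro n hn J hJ
    obtain ⟨m, rfl⟩ : ∃ m, n = m + 3 := ⟨n - 3, by omega⟩
    have e1 : m + 3 - 1 = m + 2 := rfl
    have e2 : m + 3 - 2 = m + 1 := rfl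
    rw [e1, e2] at hJ ⊢
    set R : MvPolynomial ℕ ℚ :=
      X 2 * Upoly (m+2) + ∑ i ∈ Finset.Icc 2 (m+1), X (i+1) * J i with hR
    refine sub_eq_zero.mp (eq_zero_of_pderiv_one _ ?_ ?_)
    · rw [map_sub]
      have hpr : pderiv 1 R = ∑ i ∈ Finset.Icc 1 (m+1),
          (X (i+1) : MvPolynomial ℕ ℚ) * pderiv i (Upoly (m+2)) := by
        rw [hR, map_add, map_sum]
        have hterm : ∀ i ∈ Finset.Icc 2 (m+1),
            pderiv 1 ((X (i+1) : MvPolynomial ℕ ℚ) * J i)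
              = X (i+1) * pderiv i (Upoly (m+2)) := by
          intro i hi
          have hi2 : 2 ≤ i := (Finset.mem_Icc.mp hi).1
          rw [pderiv_mul, (hJ i hi).1, pderiv_X_of_ne (show i + 1 ≠ 1 by omega),
            zero_mul, zero_add]
        rw [Finset.sum_congr rfl hterm]
        have hsplit : Finset.Icc 1 (m+1) = insert 1 (Finset.Icc 2 (m+1)) := by
          ext j
          simp only [Finset.mem_Icc, Finset.mem_insert]
          omega
        rw [hsplit, Finset.sum_insert (by simp)]
        rw [pderiv_mul, pderiv_X_of_ne (show (2 : ℕ) ≠ 1 by omega), zero_mul, zero_add]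
      rw [hpr, main_pderiv m, sub_self]
    · rw [map_sub, hR, map_add, map_mul, map_sum]
      have hz : aeval Zsub (Upoly (m+3)) = 0 := aeval_Upoly_zero (m+3) (by omega)
      have hz2 : aeval Zsub (Upoly (m+2)) = 0 := aeval_Upoly_zero (m+2) (by omega)
      have hterm : ∀ i ∈ Finset.Icc 2 (m+1),
          aeval Zsub ((X (i+1) : MvPolynomial ℕ ℚ) * J i) = 0 := by
        intro i hi
        rw [map_mul]
        have h0 : aeval Zsub (J i) = 0 := (hJ i hi).2
        rw [h0, mul_zero]
      rw [Finset.sum_congr rfl hterm, hz, hz2, mul_zero]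
      simp
end

section
/- For every sequence m(n) of positive integers with liminf_{n→∞} m(n)/n > 0 and 2·m(n) ≤ n, the ratio [ n! / ( C(C(n,2), m(n)) · (n − m(n))! ) ] / [ (2π·n·m(n)/(n − m(n)))^{1/2} · 2^{m(n)} · n^{n} · m(n)^{m(n)} · n^{−2m(n)} · (n − m(n))^{−(n − m(n))} · exp( −2m(n) + m(n)/n + m(n)²/n² ) ] tends to 1 as n → ∞. -/
open Filter Real

namespace StirlingRatioAux

open Finset

/-- log of the Stirling sequence. -/
noncomputable def sl (k : ℕ) : ℝ := Real.log (Stirling.stirlingSeq k)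

/-- sum of log(1 - i/N). -/
noncomputable def T (N b : ℕ) : ℝ := ∑ i ∈ Finset.range b, Real.log (1 - (i : ℝ) / N)

/-- The explicit error term. -/
noncomputable def E (n b : ℕ) : ℝ :=
  (sl n + sl b - sl (n - b) - Real.log π / 2)
    + (-(T (n.choose 2) b + (b : ℝ) * ((b : ℝ) - 1) / (2 * ((n.choose 2 : ℕ) : ℝ))))
    + ((b : ℝ) * ((b : ℝ) - 1) / (2 * ((n.choose 2 : ℕ) : ℝ)) - (b : ℝ) ^ 2 / (n : ℝ) ^ 2)
    + (-(b : ℝ) * (Real.log (1 - 1 / (n : ℝ)) + 1 / (n : ℝ)))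

lemma choose2_cast : ∀ n : ℕ, ((n.choose 2 : ℕ) : ℝ) = (n : ℝ) * ((n : ℝ) - 1) / 2
  | 0 => by simp
  | (k + 1) => by
      have h : (k + 1).choose 2 = k.choose 1 + k.choose 2 := Nat.choose_succ_succ k 1
      rw [h]
      push_cast
      rw [choose2_cast k]
      simp [Nat.choose_one_right]
      ring

lemma log_factorial {k : ℕ} (hk : 1 ≤ k) :
    Real.log (k.factorial : ℝ)
      = sl k + (Real.log 2 + Real.log k) / 2 + k * Real.log k - k := by
  have hk0 : (0 : ℝ) < (k : ℝ) := by exact_mod_cast hk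
  have h := Stirling.log_stirlingSeq_formula k
  have h2 : Real.log (2 * (k : ℝ)) = Real.log 2 + Real.log k :=
    Real.log_mul two_ne_zero (ne_of_gt hk0)
  have h3 : Real.log ((k : ℝ) / Real.exp 1) = Real.log k - 1 := by
    rw [Real.log_div (ne_of_gt hk0) (Real.exp_ne_zero 1), Real.log_exp]
  rw [sl]
  rw [h, h2, h3]
  ring

lemma log_choose {N b : ℕ} (hb : b ≤ N) (hN : 1 ≤ N) :
    Real.log ((N.choose b : ℕ) : ℝ)
      = b * Real.log N + T N b - Real.log (b.factorial : ℝ) := by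
  have hNR : (0 : ℝ) < (N : ℝ) := by exact_mod_cast hN
  have hdesc : (N.descFactorial b : ℝ) = (b.factorial : ℝ) * (N.choose b : ℝ) := by
    exact_mod_cast congrArg (Nat.cast : ℕ → ℝ) (Nat.descFactorial_eq_factorial_mul_choose N b)
  have hprod : (N.descFactorial b : ℝ) = ∏ i ∈ range b, ((N : ℝ) - i) := by
    rw [Nat.descFactorial_eq_prod_range]
    push_cast
    refine Finset.prod_congr rfl fun i hi => ?_
    have : i ≤ N := le_trans (le_of_lt (mem_range.mp hi)) hb
    push_cast [this]
    ring
  have hterm : ∀ i ∈ range b, (N : ℝ) - i ≠ 0 := by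
    intro i hi
    have h1 : i < N := lt_of_lt_of_le (mem_range.mp hi) hb
    have : (i : ℝ) < (N : ℝ) := by exact_mod_cast h1
    linarith
  have hlogdesc : Real.log (N.descFactorial b : ℝ)
      = b * Real.log N + T N b := by
    rw [hprod, Real.log_prod hterm]
    have : ∀ i ∈ range b, Real.log ((N : ℝ) - i)
        = Real.log N + Real.log (1 - (i : ℝ) / N) := by
      intro i hi
      have h1 : (N : ℝ) - i = (N : ℝ) * (1 - (i : ℝ) / N) := by field_simp
      rw [h1, Real.log_mul (ne_of_gt hNR)]
      have h2 := hterm i hi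
      intro hzero
      apply h2
      rw [h1, hzero, mul_zero]
    rw [Finset.sum_congr rfl this, Finset.sum_add_distrib, Finset.sum_const, card_range, T]
    simp [nsmul_eq_mul]
  have hchoosepos : (0 : ℝ) < (N.choose b : ℝ) := by
    exact_mod_cast Nat.choose_pos hb
  have hfacpos : (0 : ℝ) < (b.factorial : ℝ) := by exact_mod_cast b.factorial_pos
  have : Real.log (N.descFactorial b : ℝ)
      = Real.log (b.factorial : ℝ) + Real.log (N.choose b : ℝ) := by
    rw [hdesc, Real.log_mul (ne_of_gt hfacpos) (ne_of_gt hchoosepos)]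
  rw [hlogdesc] at this
  linarith

lemma abs_log_bound {x : ℝ} (h0 : 0 ≤ x) (h1 : x ≤ 1 / 2) :
    |Real.log (1 - x) + x| ≤ 2 * x ^ 2 := by
  have hx : (0 : ℝ) < 1 - x := by linarith
  have hup : Real.log (1 - x) + x ≤ 0 := by
    have := Real.log_le_sub_one_of_pos hx
    linarith
  have hinv : Real.log (1 - x) = -Real.log (1 - x)⁻¹ := by rw [Real.log_inv]; ring
  have h3 := Real.log_le_sub_one_of_pos (inv_pos.mpr hx)
  have h4 : (1 - x)⁻¹ - 1 = x / (1 - x) := by field_simp; ring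
  have h5 : x / (1 - x) ≤ x + 2 * x ^ 2 := by
    rw [div_le_iff₀ hx]
    nlinarith
  rw [abs_of_nonpos hup]
  rw [hinv] at hup ⊢
  linarith [h3, h4.symm ▸ h3]

lemma main_eq (n b : ℕ) (hn : 3 ≤ n) (hb : 1 ≤ b) (h2 : 2 * b ≤ n) :
    ((n.factorial : ℝ) / (((n.choose 2).choose b : ℝ) * (((n - b).factorial : ℝ)))) /
      (Real.sqrt (2 * π * n * b / ((n : ℝ) - b)) *
        2 ^ b * (n : ℝ) ^ n * (b : ℝ) ^ b /
        (n : ℝ) ^ (2 * b) / ((n : ℝ) - b) ^ (n - b) *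
        Real.exp (-2 * (b : ℝ) + (b : ℝ) / n + (b : ℝ) ^ 2 / (n : ℝ) ^ 2))
      = Real.exp (E n b) := by
  have hbn : b ≤ n := by omega
  have hnb1 : 1 ≤ n - b := by omega
  have hn1 : 1 ≤ n := by omega
  have hnR : (0 : ℝ) < n := by exact_mod_cast (by omega : 0 < n)
  have hbR : (0 : ℝ) < b := by exact_mod_cast hb
  have hbltR : (b : ℝ) < n := by exact_mod_cast (by omega : b < n)
  have hnbR : (0 : ℝ) < (n : ℝ) - b := by linarith
  have hn1R : (0 : ℝ) < (n : ℝ) - 1 := by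
    have : (3 : ℝ) ≤ n := by exact_mod_cast hn
    linarith
  have hNnat : n ≤ n.choose 2 := by
    rw [Nat.choose_two_right]
    rw [Nat.le_div_iff_mul_le (by norm_num)]
    have : 2 ≤ n - 1 := by omega
    exact Nat.mul_le_mul_left n this
  have hbN : b ≤ n.choose 2 := le_trans hbn hNnat
  have hN1 : 1 ≤ n.choose 2 := le_trans hn1 hNnat
  have hcast : ((n - b : ℕ) : ℝ) = (n : ℝ) - b := by
    push_cast [hbn]; ring
  -- positivity
  have hCpos : (0 : ℝ) < ((n.choose 2).choose b : ℝ) := by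
    exact_mod_cast Nat.choose_pos hbN
  have hfn_pos : (0 : ℝ) < (n.factorial : ℝ) := by exact_mod_cast n.factorial_pos
  have hfnb_pos : (0 : ℝ) < ((n - b).factorial : ℝ) := by exact_mod_cast (n - b).factorial_pos
  have hX : (0 : ℝ) < (n.factorial : ℝ) / (((n.choose 2).choose b : ℝ) * (((n - b).factorial : ℝ))) :=
    div_pos hfn_pos (mul_pos hCpos hfnb_pos)
  have hsqarg : (0 : ℝ) < 2 * π * n * b / ((n : ℝ) - b) :=
    div_pos (by positivity) hnbR
  have hsq : (0 : ℝ) < Real.sqrt (2 * π * n * b / ((n : ℝ) - b)) := Real.sqrt_pos.mpr hsqarg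
  have h2b_pos : (0 : ℝ) < (2 : ℝ) ^ b := by positivity
  have hnn_pos : (0 : ℝ) < (n : ℝ) ^ n := pow_pos hnR n
  have hbb_pos : (0 : ℝ) < (b : ℝ) ^ b := pow_pos hbR b
  have hn2b_pos : (0 : ℝ) < (n : ℝ) ^ (2 * b) := pow_pos hnR _
  have hnbnb_pos : (0 : ℝ) < ((n : ℝ) - b) ^ (n - b) := pow_pos hnbR _
  have hY : (0 : ℝ) < Real.sqrt (2 * π * n * b / ((n : ℝ) - b)) *
        2 ^ b * (n : ℝ) ^ n * (b : ℝ) ^ b /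
        (n : ℝ) ^ (2 * b) / ((n : ℝ) - b) ^ (n - b) *
        Real.exp (-2 * (b : ℝ) + (b : ℝ) / n + (b : ℝ) ^ 2 / (n : ℝ) ^ 2) :=
    mul_pos (div_pos (div_pos (mul_pos (mul_pos (mul_pos hsq h2b_pos) hnn_pos) hbb_pos)
      hn2b_pos) hnbnb_pos) (Real.exp_pos _)
  have key : ((n.factorial : ℝ) / (((n.choose 2).choose b : ℝ) * (((n - b).factorial : ℝ)))) /
      (Real.sqrt (2 * π * n * b / ((n : ℝ) - b)) *
        2 ^ b * (n : ℝ) ^ n * (b : ℝ) ^ b /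
        (n : ℝ) ^ (2 * b) / ((n : ℝ) - b) ^ (n - b) *
        Real.exp (-2 * (b : ℝ) + (b : ℝ) / n + (b : ℝ) ^ 2 / (n : ℝ) ^ 2))
      = Real.exp (Real.log ((n.factorial : ℝ) / (((n.choose 2).choose b : ℝ) * (((n - b).factorial : ℝ))))
          - Real.log (Real.sqrt (2 * π * n * b / ((n : ℝ) - b)) *
        2 ^ b * (n : ℝ) ^ n * (b : ℝ) ^ b /
        (n : ℝ) ^ (2 * b) / ((n : ℝ) - b) ^ (n - b) *
        Real.exp (-2 * (b : ℝ) + (b : ℝ) / n + (b : ℝ) ^ 2 / (n : ℝ) ^ 2))) := by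
    rw [Real.exp_sub, Real.exp_log hX, Real.exp_log hY]
  rw [key]
  congr 1
  -- expand logs
  have hlogfac_n := log_factorial hn1
  have hlogfac_b := log_factorial hb
  have hlogfac_nb := log_factorial hnb1
  rw [hcast] at hlogfac_nb
  have hlogchoose := log_choose hbN hN1
  have hlogN : Real.log ((n.choose 2 : ℕ) : ℝ) = Real.log n + Real.log ((n : ℝ) - 1) - Real.log 2 := by
    rw [choose2_cast n, Real.log_div (ne_of_gt (mul_pos hnR hn1R)) two_ne_zero,
      Real.log_mul (ne_of_gt hnR) (ne_of_gt hn1R)]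
  have hlog1n : Real.log (1 - 1 / (n : ℝ)) = Real.log ((n : ℝ) - 1) - Real.log n := by
    rw [show (1 : ℝ) - 1 / (n : ℝ) = ((n : ℝ) - 1) / n from by field_simp,
      Real.log_div (ne_of_gt hn1R) (ne_of_gt hnR)]
  rw [Real.log_div (ne_of_gt hfn_pos) (ne_of_gt (mul_pos hCpos hfnb_pos)),
    Real.log_mul (ne_of_gt hCpos) (ne_of_gt hfnb_pos),
    Real.log_mul (ne_of_gt (div_pos (div_pos (mul_pos (mul_pos (mul_pos hsq h2b_pos) hnn_pos) hbb_pos)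
      hn2b_pos) hnbnb_pos)) (Real.exp_ne_zero _),
    Real.log_div (ne_of_gt (div_pos (mul_pos (mul_pos (mul_pos hsq h2b_pos) hnn_pos) hbb_pos)
      hn2b_pos)) (ne_of_gt hnbnb_pos),
    Real.log_div (ne_of_gt (mul_pos (mul_pos (mul_pos hsq h2b_pos) hnn_pos) hbb_pos))
      (ne_of_gt hn2b_pos),
    Real.log_mul (ne_of_gt (mul_pos (mul_pos hsq h2b_pos) hnn_pos)) (ne_of_gt hbb_pos),
    Real.log_mul (ne_of_gt (mul_pos hsq h2b_pos)) (ne_of_gt hnn_pos),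
    Real.log_mul (ne_of_gt hsq) (ne_of_gt h2b_pos),
    Real.log_sqrt hsqarg.le,
    Real.log_div (ne_of_gt (by positivity : (0:ℝ) < 2 * π * n * b)) (ne_of_gt hnbR),
    Real.log_mul (ne_of_gt (by positivity : (0:ℝ) < 2 * π * n)) (ne_of_gt hbR),
    Real.log_mul (ne_of_gt (by positivity : (0:ℝ) < 2 * π)) (ne_of_gt hnR),
    Real.log_mul (two_ne_zero) (ne_of_gt Real.pi_pos),
    Real.log_pow, Real.log_pow, Real.log_pow, Real.log_pow, Real.log_pow,
    Real.log_exp,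
    hlogchoose, hlogfac_n, hlogfac_b, hlogfac_nb, hlogN, hcast]
  unfold E
  rw [hlog1n]
  push_cast
  ring


end StirlingRatioAux

open StirlingRatioAux

/-- Stirling-type estimate: for `m(n)` with `liminf m(n)/n > 0` and `2m(n) ≤ n`,
`n!/(C(C(n,2),m)·(n-m)!) ∼ (2πnm/(n-m))^{1/2} 2^m n^n m^m n^{-2m} (n-m)^{-(n-m)}
  · exp(-2m + m/n + m²/n²)`. -/
theorem stirling_ratio (m : ℕ → ℕ)
    (h2m : ∀ n, 2 * m n ≤ n)
    (hliminf : 0 < Filter.atTop.liminf (fun n : ℕ => (m n : ℝ) / (n : ℝ))) :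
    Tendsto
      (fun n : ℕ =>
        ((n.factorial : ℝ) /
            (((n.choose 2).choose (m n) : ℝ) * (((n - m n).factorial : ℝ)))) /
          (Real.sqrt (2 * π * n * (m n) / ((n : ℝ) - m n)) *
            2 ^ (m n) * (n : ℝ) ^ n * (m n : ℝ) ^ (m n) /
            (n : ℝ) ^ (2 * m n) / ((n : ℝ) - m n) ^ (n - m n) *
            Real.exp (-2 * (m n : ℝ) + (m n : ℝ) / n + (m n : ℝ) ^ 2 / (n : ℝ) ^ 2)))
      atTop (nhds 1) := by
  classical
  -- deduce eventual lower bound on m n / n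
  have hbdd : Filter.IsBoundedUnder (· ≥ ·) atTop (fun n : ℕ => (m n : ℝ) / (n : ℝ)) :=
    Filter.isBoundedUnder_of ⟨0, fun n => div_nonneg (Nat.cast_nonneg _) (Nat.cast_nonneg _)⟩
  set l := Filter.atTop.liminf (fun n : ℕ => (m n : ℝ) / (n : ℝ)) with hldef
  have hc : 0 < l / 2 := by linarith
  have hev1 : ∀ᶠ n in atTop, l / 2 < (m n : ℝ) / n :=
    Filter.eventually_lt_of_lt_liminf (by linarith) hbdd
  -- m n → ∞
  have hmR : Tendsto (fun n : ℕ => ((m n : ℕ) : ℝ)) atTop atTop := by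
    apply tendsto_atTop_mono' atTop ?_ (Tendsto.const_mul_atTop hc tendsto_natCast_atTop_atTop)
    filter_upwards [hev1, eventually_gt_atTop 0] with n h hn0
    have hnR : (0 : ℝ) < n := by exact_mod_cast hn0
    exact le_of_lt ((lt_div_iff₀ hnR).mp h)
  have hm_top : Tendsto m atTop atTop := tendsto_natCast_atTop_iff.mp hmR
  have hm1 : ∀ᶠ n in atTop, 1 ≤ m n := hm_top.eventually_ge_atTop 1
  -- n - m n → ∞
  have hnmR : Tendsto (fun n : ℕ => ((n - m n : ℕ) : ℝ)) atTop atTop := by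
    apply tendsto_atTop_mono' atTop ?_
      (Tendsto.atTop_div_const (by norm_num : (0:ℝ) < 2) tendsto_natCast_atTop_atTop)
    filter_upwards [] with n
    have h1 : m n ≤ n := by have := h2m n; omega
    rw [Nat.cast_sub h1]
    have h2 : (2 : ℝ) * m n ≤ n := by exact_mod_cast h2m n
    linarith
  have hnm_top : Tendsto (fun n : ℕ => n - m n) atTop atTop := tendsto_natCast_atTop_iff.mp hnmR
  -- sl tends to log π / 2
  have hsl : Tendsto sl atTop (nhds (Real.log π / 2)) := by
    have h1 : Tendsto (fun k => Real.log (Stirling.stirlingSeq k)) atTop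
        (nhds (Real.log (Real.sqrt π))) :=
      (Stirling.tendsto_stirlingSeq_sqrt_pi).log (ne_of_gt (Real.sqrt_pos.mpr Real.pi_pos))
    rw [Real.log_sqrt Real.pi_pos.le] at h1
    exact h1
  -- part 1
  have hpart1 : Tendsto (fun n : ℕ => sl n + sl (m n) - sl (n - m n) - Real.log π / 2)
      atTop (nhds 0) := by
    have h0 := ((hsl.add (hsl.comp hm_top)).sub (hsl.comp hnm_top)).sub
      (tendsto_const_nhds (x := Real.log π / 2) (f := atTop))
    simp only [Function.comp] at h0
    convert h0 using 2
    ring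
  -- auxiliary limit
  have hg : ∀ C : ℝ, Tendsto (fun n : ℕ => C / ((n : ℝ) - 1)) atTop (nhds 0) := by
    intro C
    apply Tendsto.div_atTop (tendsto_const_nhds (x := C) (f := atTop))
    have := tendsto_atTop_add_const_right atTop (-1 : ℝ) tendsto_natCast_atTop_atTop
    simpa [sub_eq_add_neg] using this
  -- useful eventual facts
  have hfacts : ∀ᶠ n : ℕ in atTop, 3 ≤ n ∧ 1 ≤ m n := by
    filter_upwards [eventually_ge_atTop 3, hm1] with n h3 h1
    exact ⟨h3, h1⟩
  -- part 2
  have hpart2 : Tendsto (fun n : ℕ =>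
      -(T (n.choose 2) (m n) + (m n : ℝ) * ((m n : ℝ) - 1) / (2 * ((n.choose 2 : ℕ) : ℝ))))
      atTop (nhds 0) := by
    apply squeeze_zero_norm' (a := fun n : ℕ => 4 / ((n : ℝ) - 1)) ?_ (hg 4)
    filter_upwards [hfacts] with n hn
    obtain ⟨h3, h1⟩ := hn
    have h2 := h2m n
    have hnR : (0 : ℝ) < n := by exact_mod_cast (by omega : 0 < n)
    have hn1R : (0 : ℝ) < (n : ℝ) - 1 := by
      have : (3 : ℝ) ≤ n := by exact_mod_cast h3
      linarith
    have hbn' : ((m n : ℝ)) ≤ n := by exact_mod_cast (by omega : m n ≤ n)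
    have h2b : (2 : ℝ) * m n ≤ n := by exact_mod_cast h2
    have hNR : ((n.choose 2 : ℕ) : ℝ) = (n : ℝ) * ((n : ℝ) - 1) / 2 := choose2_cast n
    have hNpos : (0 : ℝ) < ((n.choose 2 : ℕ) : ℝ) := by
      rw [hNR]; positivity
    -- rewrite second summand as a sum
    have hsum : (m n : ℝ) * ((m n : ℝ) - 1) / (2 * ((n.choose 2 : ℕ) : ℝ))
        = ∑ i ∈ Finset.range (m n), (i : ℝ) / ((n.choose 2 : ℕ) : ℝ) := by
      rw [← Finset.sum_div]
      have hg3 : (∑ i ∈ Finset.range (m n), (i : ℝ)) = (m n : ℝ) * ((m n : ℝ) - 1) / 2 := by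
        have hc2 := congrArg (Nat.cast : ℕ → ℝ) (Finset.sum_range_id_mul_two (m n))
        push_cast [Nat.cast_sub h1] at hc2
        linarith
      rw [hg3]
      field_simp
    have hTsum : T (n.choose 2) (m n) + (m n : ℝ) * ((m n : ℝ) - 1) / (2 * ((n.choose 2 : ℕ) : ℝ))
        = ∑ i ∈ Finset.range (m n),
            (Real.log (1 - (i : ℝ) / ((n.choose 2 : ℕ) : ℝ)) + (i : ℝ) / ((n.choose 2 : ℕ) : ℝ)) := by
      rw [hsum, T, Finset.sum_add_distrib]
    have hiN : ∀ i ∈ Finset.range (m n), (i : ℝ) / ((n.choose 2 : ℕ) : ℝ) ≤ 1 / ((n : ℝ) - 1) := by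
      intro i hi
      have hib : (i : ℝ) ≤ m n := by
        exact_mod_cast le_of_lt (Finset.mem_range.mp hi)
      rw [hNR, div_le_div_iff₀ (by positivity) hn1R]
      nlinarith
    have hhalf : 1 / ((n : ℝ) - 1) ≤ 1 / 2 := by
      rw [div_le_div_iff₀ hn1R (by norm_num)]
      have : (3 : ℝ) ≤ n := by exact_mod_cast h3
      linarith
    rw [norm_eq_abs, abs_neg, hTsum]
    calc |∑ i ∈ Finset.range (m n),
            (Real.log (1 - (i : ℝ) / ((n.choose 2 : ℕ) : ℝ)) + (i : ℝ) / ((n.choose 2 : ℕ) : ℝ))|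
        ≤ ∑ i ∈ Finset.range (m n),
            |Real.log (1 - (i : ℝ) / ((n.choose 2 : ℕ) : ℝ)) + (i : ℝ) / ((n.choose 2 : ℕ) : ℝ)| :=
          Finset.abs_sum_le_sum_abs _ _
      _ ≤ ∑ i ∈ Finset.range (m n), 2 * (1 / ((n : ℝ) - 1)) ^ 2 := by
          apply Finset.sum_le_sum
          intro i hi
          have h0i : (0 : ℝ) ≤ (i : ℝ) / ((n.choose 2 : ℕ) : ℝ) := by positivity
          have hup := le_trans (hiN i hi) hhalf
          calc |Real.log (1 - (i : ℝ) / ((n.choose 2 : ℕ) : ℝ)) + (i : ℝ) / ((n.choose 2 : ℕ) : ℝ)|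
              ≤ 2 * ((i : ℝ) / ((n.choose 2 : ℕ) : ℝ)) ^ 2 := abs_log_bound h0i hup
            _ ≤ 2 * (1 / ((n : ℝ) - 1)) ^ 2 := by
                have := pow_le_pow_left₀ h0i (hiN i hi) 2
                linarith
      _ = (m n : ℝ) * (2 * (1 / ((n : ℝ) - 1)) ^ 2) := by
          rw [Finset.sum_const, Finset.card_range, nsmul_eq_mul]
      _ ≤ 4 / ((n : ℝ) - 1) := by
          have hkey : (m n : ℝ) * (2 * (1 / ((n : ℝ) - 1)) ^ 2) = 2 * (m n : ℝ) / ((n : ℝ) - 1) ^ 2 := by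
            field_simp
          have hn2 : (n : ℝ) ≤ 2 * ((n : ℝ) - 1) := by
            have : (3 : ℝ) ≤ n := by exact_mod_cast h3
            linarith
          rw [hkey, div_le_div_iff₀ (by positivity) hn1R]
          nlinarith [mul_le_mul_of_nonneg_right hbn' hn1R.le, mul_le_mul_of_nonneg_right hn2 hn1R.le]
  -- part 3
  have hpart3 : Tendsto (fun n : ℕ =>
      (m n : ℝ) * ((m n : ℝ) - 1) / (2 * ((n.choose 2 : ℕ) : ℝ)) - (m n : ℝ) ^ 2 / (n : ℝ) ^ 2)
      atTop (nhds 0) := by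
    apply squeeze_zero_norm' (a := fun n : ℕ => 1 / ((n : ℝ) - 1)) ?_ (hg 1)
    filter_upwards [hfacts] with n hn
    obtain ⟨h3, h1⟩ := hn
    have h2 := h2m n
    have hnR : (0 : ℝ) < n := by exact_mod_cast (by omega : 0 < n)
    have hn1R : (0 : ℝ) < (n : ℝ) - 1 := by
      have : (3 : ℝ) ≤ n := by exact_mod_cast h3
      linarith
    have hbn' : ((m n : ℝ)) ≤ n := by exact_mod_cast (by omega : m n ≤ n)
    have hb0 : (0 : ℝ) ≤ (m n : ℝ) := Nat.cast_nonneg _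
    have hNR : ((n.choose 2 : ℕ) : ℝ) = (n : ℝ) * ((n : ℝ) - 1) / 2 := choose2_cast n
    have heq : (m n : ℝ) * ((m n : ℝ) - 1) / (2 * ((n.choose 2 : ℕ) : ℝ)) - (m n : ℝ) ^ 2 / (n : ℝ) ^ 2
        = (m n : ℝ) * ((m n : ℝ) - (n : ℝ)) / ((n : ℝ) ^ 2 * ((n : ℝ) - 1)) := by
      rw [hNR]
      field_simp
      ring
    rw [norm_eq_abs, heq, abs_div, abs_of_pos (by positivity : (0:ℝ) < (n : ℝ) ^ 2 * ((n : ℝ) - 1)),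
      div_le_div_iff₀ (by positivity) hn1R]
    have habs : |(m n : ℝ) * ((m n : ℝ) - (n : ℝ))| ≤ (n : ℝ) ^ 2 := by
      rw [abs_mul, abs_of_nonneg hb0, abs_of_nonpos (by linarith : (m n : ℝ) - (n : ℝ) ≤ 0)]
      nlinarith
    nlinarith [habs, hn1R]
  -- part 4
  have hpart4 : Tendsto (fun n : ℕ =>
      -(m n : ℝ) * (Real.log (1 - 1 / (n : ℝ)) + 1 / (n : ℝ))) atTop (nhds 0) := by
    apply squeeze_zero_norm' (a := fun n : ℕ => 2 / ((n : ℝ) - 1)) ?_ (hg 2)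
    filter_upwards [hfacts] with n hn
    obtain ⟨h3, h1⟩ := hn
    have h2 := h2m n
    have hnR : (0 : ℝ) < n := by exact_mod_cast (by omega : 0 < n)
    have hn1R : (0 : ℝ) < (n : ℝ) - 1 := by
      have : (3 : ℝ) ≤ n := by exact_mod_cast h3
      linarith
    have hbn' : ((m n : ℝ)) ≤ n := by exact_mod_cast (by omega : m n ≤ n)
    have hb0 : (0 : ℝ) ≤ (m n : ℝ) := Nat.cast_nonneg _
    have hx0 : (0 : ℝ) ≤ 1 / (n : ℝ) := by positivity
    have hx1 : 1 / (n : ℝ) ≤ 1 / 2 := by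
      rw [div_le_div_iff₀ hnR (by norm_num)]
      have : (3 : ℝ) ≤ n := by exact_mod_cast h3
      linarith
    have hlb := abs_log_bound hx0 hx1
    rw [norm_eq_abs, abs_mul, abs_neg, abs_of_nonneg hb0]
    calc (m n : ℝ) * |Real.log (1 - 1 / (n : ℝ)) + 1 / (n : ℝ)|
        ≤ (m n : ℝ) * (2 * (1 / (n : ℝ)) ^ 2) := by
          exact mul_le_mul_of_nonneg_left hlb hb0
      _ ≤ 2 / ((n : ℝ) - 1) := by
          have hkey : (m n : ℝ) * (2 * (1 / (n : ℝ)) ^ 2) = 2 * (m n : ℝ) / (n : ℝ) ^ 2 := by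
            field_simp
          rw [hkey, div_le_div_iff₀ (by positivity) hn1R]
          nlinarith [mul_le_mul_of_nonneg_right hbn' hnR.le, hn1R, hnR]
  -- combine
  have hE : Tendsto (fun n : ℕ => E n (m n)) atTop (nhds 0) := by
    have hsum := ((hpart1.add hpart2).add hpart3).add hpart4
    unfold E
    simpa using hsum
  have hexp : Tendsto (fun n : ℕ => Real.exp (E n (m n))) atTop (nhds 1) := by
    have := (Real.continuous_exp.continuousAt (x := (0:ℝ))).tendsto.comp hE
    rw [Real.exp_zero] at this
    exact this
  apply hexp.congr'
  filter_upwards [hfacts] with n hn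
  exact (main_eq n (m n) hn.1 hn.2 (h2m n)).symm
end

section
/- For every sequence m(n) of nonnegative integers with m(n) ≤ n for all n, one has C(C(n,2), m(n)) · 2^{m(n)} · m(n)! · n^{−2m(n)} · exp( m(n)/n + m(n)²/n² ) → 1 as n → ∞. -/
open Filter

lemma ccasym_factor_lb (a : ℝ) (h0 : 0 ≤ a) (h2 : a ≤ 1/2) :
    Real.exp (-a - 2*a^2) ≤ 1 - a := by
  have h1 : (a + 2*a^2) + 1 ≤ Real.exp (a + 2*a^2) := Real.add_one_le_exp _
  have h3 : Real.exp (-a - 2*a^2) * Real.exp (a + 2*a^2) = 1 := by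
    rw [← Real.exp_add]; ring_nf; exact Real.exp_zero
  nlinarith [Real.exp_pos (-a - 2*a^2), Real.exp_pos (a + 2*a^2), sq_nonneg a,
    mul_nonneg h0 h0]

lemma ccasym_sum_range_cast (k : ℕ) :
    (∑ i ∈ Finset.range k, (i:ℝ)) * 2 = (k:ℝ)^2 - k := by
  induction k with
  | zero => simp
  | succ k ih => rw [Finset.sum_range_succ]; push_cast; ring_nf; ring_nf at ih; linarith

/-- `C(C(n,2), m(n)) · 2^{m(n)} · m(n)! · n^{-2m(n)} · exp(m(n)/n + m(n)²/n²) → 1`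
whenever `m(n) ≤ n`. -/
theorem choose_choose_asymptotics (m : ℕ → ℕ) (hm : ∀ n, m n ≤ n) :
    Tendsto
      (fun n : ℕ =>
        ((n.choose 2).choose (m n) : ℝ) * 2 ^ (m n) * ((m n).factorial : ℝ) /
            (n : ℝ) ^ (2 * m n) *
          Real.exp ((m n : ℝ) / n + (m n : ℝ) ^ 2 / (n : ℝ) ^ 2))
      atTop (nhds 1) := by
  have hlo : Tendsto (fun n : ℕ => Real.exp (-18 / n)) atTop (nhds 1) := by
    have := (Real.continuous_exp.tendsto 0).comp (tendsto_const_div_atTop_nhds_zero_nat (-18))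
    simpa [Function.comp_def] using this
  have hhi : Tendsto (fun n : ℕ => Real.exp (1 / n)) atTop (nhds 1) := by
    have := (Real.continuous_exp.tendsto 0).comp (tendsto_const_div_atTop_nhds_zero_nat 1)
    simpa [Function.comp_def] using this
  have key : ∀ᶠ n : ℕ in atTop,
      Real.exp (-18 / n) ≤
        ((n.choose 2).choose (m n) : ℝ) * 2 ^ (m n) * ((m n).factorial : ℝ) /
            (n : ℝ) ^ (2 * m n) *
          Real.exp ((m n : ℝ) / n + (m n : ℝ) ^ 2 / (n : ℝ) ^ 2) ∧
        ((n.choose 2).choose (m n) : ℝ) * 2 ^ (m n) * ((m n).factorial : ℝ) /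
            (n : ℝ) ^ (2 * m n) *
          Real.exp ((m n : ℝ) / n + (m n : ℝ) ^ 2 / (n : ℝ) ^ 2) ≤ Real.exp (1 / n) := by
    filter_upwards [eventually_ge_atTop 6] with n hn6
    set k := m n with hk
    have hkn : k ≤ n := hm n
    clear hk
    clear_value k
    have hn0 : (0:ℝ) < n := by positivity
    have hnR : (6:ℝ) ≤ n := by exact_mod_cast hn6
    have hkR : (k:ℝ) ≤ n := by exact_mod_cast hkn
    set a : ℕ → ℝ := fun i => ((n:ℝ) + 2*i) / (n:ℝ)^2 with ha
    -- bounds on a i for i < k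
    have hab : ∀ i ∈ Finset.range k, 0 ≤ a i ∧ a i ≤ 3 / n := by
      intro i hi
      have hik : i < k := Finset.mem_range.mp hi
      have hiR : (i:ℝ) ≤ (n:ℝ) - 1 := by
        have h1 : (i:ℝ) + 1 ≤ (n:ℝ) := by exact_mod_cast (by omega : i + 1 ≤ n)
        linarith
      refine ⟨div_nonneg (by positivity) (by positivity), ?_⟩
      rw [ha]
      rw [div_le_div_iff₀ (by positivity) hn0]
      nlinarith
    have ha12 : ∀ i ∈ Finset.range k, a i ≤ 1/2 := by
      intro i hi
      have h1 := (hab i hi).2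
      have h3n : (3:ℝ)/n ≤ 1/2 := by
        rw [div_le_div_iff₀ hn0 (by norm_num)]; linarith
      linarith
    -- cast of factors
    have hcast : ∀ i ∈ Finset.range k, ((n*(n-1) - 2*i : ℕ) : ℝ) = (1 - a i) * (n:ℝ)^2 := by
      intro i hi
      have hik : i < k := Finset.mem_range.mp hi
      have h2i : 2*i ≤ n*(n-1) := by
        calc 2*i ≤ 2*(n-1) := by omega
          _ ≤ n*(n-1) := Nat.mul_le_mul_right _ (by omega)
      have h1n : 1 ≤ n := by omega
      rw [Nat.cast_sub h2i, Nat.cast_mul, Nat.cast_sub h1n]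
      push_cast
      rw [ha]
      field_simp
      ring
    have hsuma : ∑ i ∈ Finset.range k, a i = ((k:ℝ)*n + (k:ℝ)^2 - k) / (n:ℝ)^2 := by
      rw [ha, ← Finset.sum_div]
      congr 1
      rw [Finset.sum_add_distrib, Finset.sum_const, Finset.card_range, ← Finset.mul_sum,
        nsmul_eq_mul]
      have := ccasym_sum_range_cast k
      linarith
    clear ha
    clear_value a
    -- nat product identity
    have hprodnat : 2^k * (k.factorial * (n.choose 2).choose k) =
        ∏ i ∈ Finset.range k, (n*(n-1) - 2*i) := by
      rw [← Nat.descFactorial_eq_factorial_mul_choose, Nat.descFactorial_eq_prod_range]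
      have h2 : 2 * n.choose 2 = n * (n-1) := by
        rw [Nat.choose_two_right]
        exact Nat.mul_div_cancel' (Nat.even_mul_pred_self n).two_dvd
      have hterm : ∀ i ∈ Finset.range k, n*(n-1) - 2*i = 2 * (n.choose 2 - i) := by
        intro i _
        conv_rhs => rw [Nat.mul_sub, h2]
      rw [Finset.prod_congr rfl hterm, Finset.prod_mul_distrib, Finset.prod_const,
        Finset.card_range]
    -- real product identity
    have hcastprod : (∏ i ∈ Finset.range k, ((n*(n-1) - 2*i : ℕ) : ℝ)) =
        (∏ i ∈ Finset.range k, (1 - a i)) * ((n:ℝ)^2)^k := by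
      rw [Finset.prod_congr rfl hcast, Finset.prod_mul_distrib, Finset.prod_const,
        Finset.card_range]
    have hR := congrArg (fun x : ℕ => (x:ℝ)) hprodnat
    simp only [Nat.cast_mul, Nat.cast_pow, Nat.cast_ofNat, Nat.cast_prod] at hR
    rw [hcastprod] at hR
    set P : ℝ := ∏ i ∈ Finset.range k, (1 - a i) with hP
    have hreal : ((n.choose 2).choose k : ℝ) * 2 ^ k * (k.factorial : ℝ) / (n:ℝ)^(2*k) = P := by
      have hne : ((n:ℝ)^2)^k ≠ 0 := by positivity
      rw [pow_mul, div_eq_iff hne]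
      linear_combination hR
    -- bounds on P
    have hlbP : Real.exp (∑ i ∈ Finset.range k, (-a i - 2*(a i)^2)) ≤ P := by
      rw [Real.exp_sum]
      apply Finset.prod_le_prod
      · intro i _; positivity
      · intro i hi
        exact ccasym_factor_lb (a i) (hab i hi).1 (ha12 i hi)
    have hubP : P ≤ Real.exp (∑ i ∈ Finset.range k, (-a i)) := by
      rw [Real.exp_sum]
      apply Finset.prod_le_prod
      · intro i hi
        have := ccasym_factor_lb (a i) (hab i hi).1 (ha12 i hi)
        have := Real.exp_pos (-(a i) - 2*(a i)^2)
        linarith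
      · intro i hi
        have := Real.add_one_le_exp (-(a i))
        linarith
    -- sum computations
    have hsumsq : ∑ i ∈ Finset.range k, 2*(a i)^2 ≤ (18:ℝ) / n := by
      have hterm : ∀ i ∈ Finset.range k, 2*(a i)^2 ≤ (18:ℝ)/(n:ℝ)^2 := by
        intro i hi
        obtain ⟨h0, h1⟩ := hab i hi
        have h3 : (a i)^2 ≤ (3/(n:ℝ))^2 := by nlinarith
        have h9 : (3/(n:ℝ))^2 = 9/(n:ℝ)^2 := by rw [div_pow]; norm_num
        rw [h9] at h3
        have h18 : (18:ℝ)/(n:ℝ)^2 = 2 * (9/(n:ℝ)^2) := by ring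
        linarith only [h3, h18]
      calc ∑ i ∈ Finset.range k, 2*(a i)^2 ≤ ∑ _i ∈ Finset.range k, (18:ℝ)/(n:ℝ)^2 :=
            Finset.sum_le_sum hterm
        _ = (k:ℝ) * ((18:ℝ)/(n:ℝ)^2) := by rw [Finset.sum_const, Finset.card_range, nsmul_eq_mul]
        _ ≤ (n:ℝ) * ((18:ℝ)/(n:ℝ)^2) := by
            apply mul_le_mul_of_nonneg_right hkR (by positivity)
        _ = (18:ℝ) / n := by field_simp
    -- key exponent identity
    have hexpid : (k:ℝ)/n + (k:ℝ)^2/(n:ℝ)^2 - (∑ i ∈ Finset.range k, a i) = (k:ℝ)/(n:ℝ)^2 := by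
      rw [hsuma]; field_simp; ring
    have hEpos : (0:ℝ) < Real.exp ((k:ℝ)/n + (k:ℝ)^2/(n:ℝ)^2) := Real.exp_pos _
    rw [hreal]
    constructor
    · -- lower bound
      have h1 : Real.exp (∑ i ∈ Finset.range k, (-a i - 2*(a i)^2)) *
          Real.exp ((k:ℝ)/n + (k:ℝ)^2/(n:ℝ)^2) ≤
          P * Real.exp ((k:ℝ)/n + (k:ℝ)^2/(n:ℝ)^2) :=
        mul_le_mul_of_nonneg_right hlbP hEpos.le
      refine le_trans ?_ h1
      rw [← Real.exp_add, Real.exp_le_exp]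
      have hs : ∑ i ∈ Finset.range k, (-a i - 2*(a i)^2) =
          -(∑ i ∈ Finset.range k, a i) - (∑ i ∈ Finset.range k, 2*(a i)^2) := by
        rw [← Finset.sum_neg_distrib, ← Finset.sum_sub_distrib]
      rw [hs]
      have hk2 : (0:ℝ) ≤ (k:ℝ)/(n:ℝ)^2 := by positivity
      have h18 : (-18:ℝ)/(n:ℝ) = -((18:ℝ)/(n:ℝ)) := by ring
      linarith only [hk2, hexpid, hsumsq, h18]
    · -- upper bound
      have h1 : P * Real.exp ((k:ℝ)/n + (k:ℝ)^2/(n:ℝ)^2) ≤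
          Real.exp (∑ i ∈ Finset.range k, (-a i)) *
            Real.exp ((k:ℝ)/n + (k:ℝ)^2/(n:ℝ)^2) :=
        mul_le_mul_of_nonneg_right hubP hEpos.le
      refine h1.trans ?_
      rw [← Real.exp_add, Real.exp_le_exp]
      have hs : ∑ i ∈ Finset.range k, (-a i) = -(∑ i ∈ Finset.range k, a i) := by
        rw [← Finset.sum_neg_distrib]
      rw [hs]
      have hkn2 : (k:ℝ)/(n:ℝ)^2 ≤ 1/(n:ℝ) := by
        rw [div_le_div_iff₀ (by positivity) hn0]
        nlinarith
      linarith only [hexpid, hkn2]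
  exact tendsto_of_tendsto_of_tendsto_of_le_of_le' hlo hhi
    (key.mono fun n h => h.1) (key.mono fun n h => h.2)
end

section
/- Fix λ ∈ ℝ and r ∈ ℕ, and let M(n) := ⌈ (n/2)·(1 + λ·n^{−1/3}) ⌉. Then the ratio [ n! / ( C(C(n,2), M(n)) · (n − M(n) + r)! ) ] / [ √(2πn) · 2^{n − M(n) + r} · n^{−r} · exp( −λ³/6 + 3/4 − n ) ] tends to 1 as n → ∞. -/
open Filter Real

open Topology


set_option maxHeartbeats 1000000
namespace SRCaux

lemma logTaylor3 {x : ℝ} (h : |x| < 1) :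
    |Real.log (1+x) - (x - x^2/2 + x^3/3)| ≤ |x|^4 / (1 - |x|) := by
  have := Real.abs_log_sub_add_sum_range_le (x := -x) (by rwa [abs_neg]) 3
  rw [abs_neg] at this
  refine le_trans (le_of_eq ?_) this
  rw [show (1 : ℝ) - -x = 1 + x by ring]
  rw [Finset.sum_range_succ, Finset.sum_range_succ, Finset.sum_range_one]
  push_cast
  ring_nf

lemma logTaylor2 {u : ℝ} (h : |u| < 1) :
    |Real.log (1-u) - (-u - u^2/2)| ≤ |u|^3 / (1 - |u|) := by
  have := Real.abs_log_sub_add_sum_range_le (x := u) h 2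
  refine le_trans (le_of_eq ?_) this
  rw [Finset.sum_range_succ, Finset.sum_range_one]
  push_cast
  ring_nf


noncomputable def M (lam : ℝ) (n : ℕ) : ℕ := ⌈((n : ℝ) / 2) * (1 + lam * (n : ℝ) ^ (-(1 / 3 : ℝ)))⌉₊
noncomputable def mu (lam : ℝ) (n : ℕ) : ℝ := M lam n
noncomputable def t (lam : ℝ) (n : ℕ) : ℝ := lam * (n : ℝ) ^ (-(1 / 3 : ℝ))
noncomputable def x (lam : ℝ) (n : ℕ) : ℝ := (2 * mu lam n - n) / n
noncomputable def yy (lam : ℝ) (r : ℕ) (n : ℕ) : ℝ := ((n : ℝ) - 2 * mu lam n + 2 * r) / n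
noncomputable def nu (n : ℕ) : ℝ := (n.choose 2 : ℝ)
noncomputable def K (lam : ℝ) (r : ℕ) (n : ℕ) : ℕ := n - M lam n + r
noncomputable def ka (lam : ℝ) (r : ℕ) (n : ℕ) : ℝ := K lam r n

variable (lam : ℝ) (r : ℕ)

lemma t_tendsto : Tendsto (t lam) atTop (𝓝 0) := by
  have h1 : Tendsto (fun z : ℝ => z ^ (-(1/3 : ℝ))) atTop (𝓝 0) :=
    tendsto_rpow_neg_atTop (by norm_num)
  have h2 : Tendsto (fun n : ℕ => (n : ℝ) ^ (-(1/3 : ℝ))) atTop (𝓝 0) :=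
    h1.comp tendsto_natCast_atTop_atTop
  have h3 := h2.const_mul lam
  rw [mul_zero] at h3
  exact h3

lemma mu_lb (n : ℕ) : (n : ℝ) / 2 * (1 + t lam n) ≤ mu lam n := Nat.le_ceil _

lemma t_small : ∀ᶠ n : ℕ in atTop, |t lam n| ≤ 1/10 := by
  have h := (t_tendsto lam).abs
  rw [abs_zero] at h
  exact (h.eventually_le_const (by norm_num : (0:ℝ) < 1/10)).mono fun n hn => hn

lemma mu_ub : ∀ᶠ n : ℕ in atTop, mu lam n < (n : ℝ) / 2 * (1 + t lam n) + 1 := by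
  filter_upwards [t_small lam] with n ht
  have h0 : (0:ℝ) ≤ (n : ℝ) / 2 * (1 + t lam n) := by
    have : (0:ℝ) ≤ 1 + t lam n := by
      have := abs_le.mp ht; linarith [this.1]
    positivity
  exact Nat.ceil_lt_add_one h0



lemma mu_lb' : ∀ᶠ n : ℕ in atTop, 2/5 * (n:ℝ) ≤ mu lam n := by
  filter_upwards [t_small lam] with n ht
  have h1 := mu_lb lam n
  have h2 := (abs_le.mp ht).1
  have h0 : (0:ℝ) ≤ (n:ℝ) := Nat.cast_nonneg n
  nlinarith

lemma mu_ub' : ∀ᶠ n : ℕ in atTop, mu lam n ≤ 3/5 * (n:ℝ) := by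
  filter_upwards [t_small lam, mu_ub lam, eventually_ge_atTop 20] with n ht h1 hn
  have h2 := (abs_le.mp ht).2
  have h0 : (20:ℝ) ≤ (n:ℝ) := by exact_mod_cast hn
  nlinarith

lemma M_le_n : ∀ᶠ n : ℕ in atTop, M lam n ≤ n := by
  filter_upwards [mu_ub' lam] with n h
  have h0 : (0:ℝ) ≤ (n:ℝ) := Nat.cast_nonneg n
  have : (M lam n : ℝ) ≤ (n : ℝ) := by unfold mu at h; linarith
  exact_mod_cast this

lemma ka_eq : ∀ᶠ n : ℕ in atTop, ka lam r n = (n:ℝ) - mu lam n + r := by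
  filter_upwards [M_le_n lam] with n h
  unfold ka K mu
  push_cast [Nat.cast_sub h]
  ring

lemma two_div_n : Tendsto (fun n : ℕ => 2/(n:ℝ)) atTop (𝓝 0) :=
  tendsto_const_div_atTop_nhds_zero_nat 2

lemma x_bounds : ∀ᶠ n : ℕ in atTop, t lam n ≤ x lam n ∧ x lam n ≤ t lam n + 2/(n:ℝ) := by
  filter_upwards [mu_ub lam, eventually_ge_atTop 1] with n h1 hn
  have h0 : (0:ℝ) < (n:ℝ) := by exact_mod_cast hn
  have h2 := mu_lb lam n
  constructor
  · rw [x, le_div_iff₀ h0]; nlinarith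
  · have hc : (2/(n:ℝ))*(n:ℝ) = 2 := div_mul_cancel₀ 2 (ne_of_gt h0)
    rw [x, div_le_iff₀ h0]; nlinarith

lemma x_to_zero : Tendsto (x lam) atTop (𝓝 0) := by
  refine tendsto_of_tendsto_of_tendsto_of_le_of_le' (t_tendsto lam)
    (by simpa using (t_tendsto lam).add (two_div_n)) ?_ ?_
  · exact (x_bounds lam).mono fun n h => h.1
  · exact (x_bounds lam).mono fun n h => h.2

lemma x_small : ∀ᶠ n : ℕ in atTop, |x lam n| ≤ 1/5 := by
  have h := (x_to_zero lam).abs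
  rw [abs_zero] at h
  exact h.eventually_le_const (by norm_num : (0:ℝ) < 1/5)

lemma rpow_third_mul_t : ∀ᶠ n : ℕ in atTop, (n:ℝ) ^ (1/3:ℝ) * t lam n = lam := by
  filter_upwards [eventually_ge_atTop 1] with n hn
  have h0 : (0:ℝ) < (n:ℝ) := by exact_mod_cast hn
  rw [t, mul_comm lam, ← mul_assoc, ← Real.rpow_add h0]
  norm_num

lemma rpow_third_div_n : ∀ᶠ n : ℕ in atTop, (n:ℝ) ^ (1/3:ℝ) * (2/(n:ℝ)) = 2 * (n:ℝ) ^ (-(2/3):ℝ) := by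
  filter_upwards [eventually_ge_atTop 1] with n hn
  have h0 : (0:ℝ) < (n:ℝ) := by exact_mod_cast hn
  rw [mul_div_assoc', mul_comm ((n:ℝ)^(1/3:ℝ)), mul_div_assoc]
  congr 1
  rw [div_eq_iff (ne_of_gt h0)]
  have h2 : (n:ℝ) ^ (-(2/3):ℝ) * (n:ℝ) ^ (1:ℝ) = (n:ℝ) ^ (1/3:ℝ) := by
    rw [← Real.rpow_add h0]; norm_num
  rw [Real.rpow_one] at h2
  exact h2.symm

lemma n23_to_zero : Tendsto (fun n : ℕ => 2 * (n:ℝ) ^ (-(2/3):ℝ)) atTop (𝓝 0) := by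
  have h1 : Tendsto (fun z : ℝ => z ^ (-(2/3 : ℝ))) atTop (𝓝 0) :=
    tendsto_rpow_neg_atTop (by norm_num)
  have h2 := (h1.comp tendsto_natCast_atTop_atTop).const_mul 2
  rw [mul_zero] at h2
  exact h2

lemma n13x : Tendsto (fun n : ℕ => (n:ℝ) ^ (1/3:ℝ) * x lam n) atTop (𝓝 lam) := by
  have hup : Tendsto (fun n : ℕ => lam + 2 * (n:ℝ) ^ (-(2/3):ℝ)) atTop (𝓝 lam) := by
    simpa using (tendsto_const_nhds (x := lam) (f := atTop (α := ℕ))).add (n23_to_zero)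
  refine tendsto_of_tendsto_of_tendsto_of_le_of_le' tendsto_const_nhds hup ?_ ?_
  · filter_upwards [x_bounds lam, rpow_third_mul_t lam] with n h he
    have h0 : (0:ℝ) ≤ (n:ℝ) ^ (1/3:ℝ) := Real.rpow_nonneg (Nat.cast_nonneg n) _
    calc lam = (n:ℝ) ^ (1/3:ℝ) * t lam n := he.symm
    _ ≤ (n:ℝ) ^ (1/3:ℝ) * x lam n := by nlinarith [h.1]
  · filter_upwards [x_bounds lam, rpow_third_mul_t lam, rpow_third_div_n] with n h he hd
    calc (n:ℝ) ^ (1/3:ℝ) * x lam n ≤ (n:ℝ) ^ (1/3:ℝ) * (t lam n + 2/(n:ℝ)) := by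
          nlinarith [Real.rpow_nonneg (Nat.cast_nonneg n) (1/3:ℝ), h.2]
    _ = lam + 2 * (n:ℝ) ^ (-(2/3):ℝ) := by rw [mul_add, he, hd]

lemma nx3 : Tendsto (fun n : ℕ => (n:ℝ) * x lam n ^ 3) atTop (𝓝 (lam ^ 3)) := by
  have h := (n13x lam).pow 3
  refine h.congr' ?_
  filter_upwards [eventually_ge_atTop 1] with n hn
  have h0 : (0:ℝ) ≤ (n:ℝ) := Nat.cast_nonneg n
  rw [mul_pow, ← Real.rpow_natCast ((n:ℝ)^(1/3:ℝ)) 3, ← Real.rpow_mul h0]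
  norm_num

lemma rpow_23 : Tendsto (fun n : ℕ => (n:ℝ) ^ (-(2/3):ℝ)) atTop (𝓝 0) :=
  (tendsto_rpow_neg_atTop (by norm_num)).comp tendsto_natCast_atTop_atTop

lemma y_eq : ∀ᶠ n : ℕ in atTop, yy lam r n = 2*(r:ℝ)/(n:ℝ) - x lam n := by
  filter_upwards [eventually_ge_atTop 1] with n hn
  have h0 : (n:ℝ) ≠ 0 := by exact_mod_cast Nat.one_le_iff_ne_zero.mp hn
  rw [yy, x]
  field_simp
  ring

lemma rdiv_n : Tendsto (fun n : ℕ => 2*(r:ℝ)/(n:ℝ)) atTop (𝓝 0) := by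
  have := tendsto_const_div_atTop_nhds_zero_nat (2*(r:ℝ))
  exact this

lemma y_to_zero : Tendsto (yy lam r) atTop (𝓝 0) := by
  have h := (rdiv_n r).sub (x_to_zero lam)
  rw [sub_zero] at h
  exact h.congr' ((y_eq lam r).mono fun n hn => hn.symm)

lemma y_small : ∀ᶠ n : ℕ in atTop, |yy lam r n| ≤ 2/5 := by
  have h := (y_to_zero lam r).abs
  rw [abs_zero] at h
  exact h.eventually_le_const (by norm_num : (0:ℝ) < 2/5)

lemma n13y : Tendsto (fun n : ℕ => (n:ℝ) ^ (1/3:ℝ) * yy lam r n) atTop (𝓝 (-lam)) := by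
  have hr : Tendsto (fun n : ℕ => (2*(r:ℝ)) * (n:ℝ) ^ (-(2/3):ℝ)) atTop (𝓝 0) := by
    have := (rpow_23).const_mul (2*(r:ℝ)); rwa [mul_zero] at this
  have h := hr.sub (n13x lam)
  rw [zero_sub] at h
  refine h.congr' ?_
  filter_upwards [y_eq lam r, eventually_ge_atTop 1] with n hy hn
  have h0 : (0:ℝ) < (n:ℝ) := by exact_mod_cast hn
  rw [hy]
  have hkey : (n:ℝ) ^ ((1:ℝ)/3) = (n:ℝ) ^ (-(2/3):ℝ) * (n:ℝ) := by
    have h2 : (n:ℝ) ^ (-(2/3):ℝ) * (n:ℝ) ^ (1:ℝ) = (n:ℝ) ^ (1/3:ℝ) := by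
      rw [← Real.rpow_add h0]; norm_num
    rw [Real.rpow_one] at h2; exact h2.symm
  rw [hkey]
  have h0' : (n:ℝ) ≠ 0 := ne_of_gt h0
  field_simp

lemma ny3 : Tendsto (fun n : ℕ => (n:ℝ) * yy lam r n ^ 3) atTop (𝓝 (-(lam ^ 3))) := by
  have h := (n13y lam r).pow 3
  have he : (-lam)^3 = -(lam^3) := by ring
  rw [he] at h
  refine h.congr' ?_
  filter_upwards [eventually_ge_atTop 1] with n hn
  have h0 : (0:ℝ) ≤ (n:ℝ) := Nat.cast_nonneg n
  rw [mul_pow, ← Real.rpow_natCast ((n:ℝ)^(1/3:ℝ)) 3, ← Real.rpow_mul h0]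
  norm_num

lemma nu_eq (n : ℕ) : nu n = (n:ℝ)*((n:ℝ)-1)/2 := Nat.cast_choose_two (K := ℝ) n

lemma nu_lb : ∀ᶠ n : ℕ in atTop, (n:ℝ)^2/3 ≤ nu n := by
  filter_upwards [eventually_ge_atTop 3] with n hn
  have h0 : (3:ℝ) ≤ (n:ℝ) := by exact_mod_cast hn
  rw [nu_eq]; nlinarith

lemma nu_pos : ∀ᶠ n : ℕ in atTop, 0 < nu n := by
  filter_upwards [nu_lb, eventually_ge_atTop 3] with n h hn
  have h0 : (3:ℝ) ≤ (n:ℝ) := by exact_mod_cast hn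
  nlinarith

lemma mu_div_n : Tendsto (fun n : ℕ => mu lam n / (n:ℝ)) atTop (𝓝 (1/2)) := by
  have h := ((x_to_zero lam).const_add 1).div_const 2
  rw [add_zero] at h
  refine h.congr' ?_
  filter_upwards [eventually_ge_atTop 1] with n hn
  have h0 : (n:ℝ) ≠ 0 := by exact_mod_cast Nat.one_le_iff_ne_zero.mp hn
  rw [x]; field_simp; ring

lemma mu_eq : ∀ᶠ n : ℕ in atTop, mu lam n = (n:ℝ)/2 * (1 + x lam n) := by
  filter_upwards [eventually_ge_atTop 1] with n hn
  have h0 : (n:ℝ) ≠ 0 := by exact_mod_cast Nat.one_le_iff_ne_zero.mp hn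
  rw [x]; field_simp; ring

lemma ka_eq2 : ∀ᶠ n : ℕ in atTop, ka lam r n = (n:ℝ)/2 * (1 + yy lam r n) := by
  filter_upwards [ka_eq lam r, eventually_ge_atTop 1] with n hk hn
  have h0 : (n:ℝ) ≠ 0 := by exact_mod_cast Nat.one_le_iff_ne_zero.mp hn
  rw [hk, yy]; field_simp; ring

lemma ka_div_n : Tendsto (fun n : ℕ => ka lam r n / (n:ℝ)) atTop (𝓝 (1/2)) := by
  have h := ((y_to_zero lam r).const_add 1).div_const 2
  rw [add_zero] at h
  refine h.congr' ?_
  filter_upwards [ka_eq2 lam r, eventually_ge_atTop 1] with n hk hn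
  have h0 : (n:ℝ) ≠ 0 := by exact_mod_cast Nat.one_le_iff_ne_zero.mp hn
  rw [hk]; field_simp

lemma nu_div_n2 : Tendsto (fun n : ℕ => nu n / (n:ℝ)^2) atTop (𝓝 (1/2)) := by
  have h1 : Tendsto (fun n : ℕ => (1 - 1/(n:ℝ))/2) atTop (𝓝 (1/2)) := by
    have := ((tendsto_one_div_atTop_nhds_zero_nat (𝕜 := ℝ)).const_sub 1).div_const 2
    rwa [sub_zero] at this
  refine h1.congr' ?_
  filter_upwards [eventually_ge_atTop 1] with n hn
  have h0 : (n:ℝ) ≠ 0 := by exact_mod_cast Nat.one_le_iff_ne_zero.mp hn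
  rw [nu_eq]; field_simp

lemma n2_div_nu : Tendsto (fun n : ℕ => (n:ℝ)^2 / nu n) atTop (𝓝 2) := by
  have h := (nu_div_n2).inv₀ (by norm_num)
  norm_num at h
  exact h

lemma u_nonneg (n : ℕ) : 0 ≤ mu lam n / nu n := by
  apply div_nonneg
  · exact Nat.cast_nonneg _
  · exact Nat.cast_nonneg _

lemma u_bound : ∀ᶠ n : ℕ in atTop, mu lam n / nu n ≤ 2/(n:ℝ) := by
  filter_upwards [mu_ub' lam, nu_lb, eventually_ge_atTop 3] with n h1 h2 hn
  have h0 : (3:ℝ) ≤ (n:ℝ) := by exact_mod_cast hn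
  have hnu : (0:ℝ) < nu n := by nlinarith
  rw [div_le_div_iff₀ hnu (by linarith : (0:ℝ) < (n:ℝ))]
  nlinarith

lemma u_to_zero : Tendsto (fun n : ℕ => mu lam n / nu n) atTop (𝓝 0) := by
  refine tendsto_of_tendsto_of_tendsto_of_le_of_le' tendsto_const_nhds two_div_n
    (Eventually.of_forall fun n => u_nonneg lam n) (u_bound lam)

lemma mu2_div_nu : Tendsto (fun n : ℕ => mu lam n^2 / nu n) atTop (𝓝 (1/2)) := by
  have h := ((mu_div_n lam).pow 2).mul n2_div_nu
  norm_num at h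
  refine h.congr' ?_
  filter_upwards [nu_pos, eventually_ge_atTop 1] with n h1 hn
  have h0 : (n:ℝ) ≠ 0 := by exact_mod_cast Nat.one_le_iff_ne_zero.mp hn
  field_simp

lemma mu3_div_nu2 : Tendsto (fun n : ℕ => mu lam n^3 / nu n^2) atTop (𝓝 0) := by
  have h := (((mu_div_n lam).pow 3).mul (n2_div_nu.pow 2)).mul tendsto_one_div_atTop_nhds_zero_nat
  rw [mul_zero] at h
  refine h.congr' ?_
  filter_upwards [nu_pos, eventually_ge_atTop 1] with n h1 hn
  have h0 : (n:ℝ) ≠ 0 := by exact_mod_cast Nat.one_le_iff_ne_zero.mp hn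
  field_simp


noncomputable def Main (lam : ℝ) (r : ℕ) (n : ℕ) : ℝ :=
  mu lam n * Real.log (1 + x lam n) - ka lam r n * Real.log (1 + yy lam r n)
  + (nu n - mu lam n) * Real.log (1 - mu lam n / nu n)
  - mu lam n * Real.log (1 - 1/(n:ℝ)) + ka lam r n

noncomputable def P (lam : ℝ) (r : ℕ) (n : ℕ) : ℝ :=
  (r:ℝ)/2*(x lam n - yy lam r n)
  - 1/12*((n:ℝ)*x lam n^3 - (n:ℝ)*yy lam r n^3)
  + (r:ℝ)/3*(x lam n - yy lam r n)*(x lam n^2 + yy lam r n^2)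
  + mu lam n^2/(2*nu n) + mu lam n^3/(2*nu n^2) + mu lam n/(n:ℝ) + mu lam n/(2*(n:ℝ)^2)

lemma P_tendsto : Tendsto (P lam r) atTop (𝓝 (3/4 - lam^3/6)) := by
  have hxy : Tendsto (fun n => x lam n - yy lam r n) atTop (𝓝 0) := by
    have := (x_to_zero lam).sub (y_to_zero lam r); rwa [sub_zero] at this
  have h1 := hxy.const_mul ((r:ℝ)/2)
  rw [mul_zero] at h1
  have h2 := ((nx3 lam).sub (ny3 lam r)).const_mul (1/12 : ℝ)
  have h3 : Tendsto (fun n => (r:ℝ)/3*(x lam n - yy lam r n)*(x lam n^2 + yy lam r n^2))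
      atTop (𝓝 0) := by
    have := ((hxy.const_mul ((r:ℝ)/3)).mul (((x_to_zero lam).pow 2).add ((y_to_zero lam r).pow 2)))
    simpa using this
  have h4 := (mu2_div_nu lam).div_const 2
  have h5 := (mu3_div_nu2 lam).div_const 2
  have h6 := mu_div_n lam
  have h7 : Tendsto (fun n : ℕ => mu lam n/(2*(n:ℝ)^2)) atTop (𝓝 0) := by
    have h := (mu_div_n lam).mul ((tendsto_one_div_atTop_nhds_zero_nat).div_const 2)
    norm_num at h
    refine h.congr' ?_
    filter_upwards [eventually_ge_atTop 1] with n hn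
    have h0 : (n:ℝ) ≠ 0 := by exact_mod_cast Nat.one_le_iff_ne_zero.mp hn
    field_simp
  have := ((((((h1.sub h2).add h3).add h4).add h5).add h6).add h7)
  have he : (0:ℝ) - 1/12*(lam^3 - -lam^3) + 0 + 1/2/2 + 0/2 + 1/2 + 0 = 3/4 - lam^3/6 := by ring
  rw [he] at this
  exact this.congr fun n => by unfold P; ring

lemma err_bound (A : ℝ) (p : ℕ) (h0 : 0 ≤ A) (h : A ≤ 1/2) : A^p/(1-A) ≤ 2*A^p := by
  rw [div_le_iff₀ (by linarith)]
  have h1 : 0 ≤ A^p * (1 - 2*A) := mul_nonneg (pow_nonneg h0 p) (by linarith)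
  nlinarith [h1]

lemma sq_aux (a : ℝ) (h : 5 ≤ a) : 3/5*a ≤ a^2/3 := by nlinarith

lemma alg_id (n m v rr k X Y U : ℝ) (hn : n ≠ 0) (hv : v ≠ 0)
    (hX : X = (2*m-n)/n) (hY : Y = (n-2*m+2*rr)/n) (hU : U = m/v) (hk : k = n-m+rr) :
    m*(X - X^2/2 + X^3/3) - k*(Y - Y^2/2 + Y^3/3) + (v-m)*(-U - U^2/2)
      - m*(-(1/n) - (1/n)^2/2) + k
    = rr/2*(X-Y) - 1/12*(n*X^3 - n*Y^3) + rr/3*(X-Y)*(X^2+Y^2)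
      + m^2/(2*v) + m^3/(2*v^2) + m/n + m/(2*n^2) := by
  subst hX hY hU hk
  field_simp
  ring

lemma main_sub_P : ∀ᶠ n : ℕ in atTop,
    |Main lam r n - P lam r n| ≤
      2*|(n:ℝ)*x lam n^3| * |x lam n| + 2*|(n:ℝ)*yy lam r n^3| * |yy lam r n|
      + 2*(mu lam n^3/nu n^2) + 2/(n:ℝ)^2 := by
  filter_upwards [x_small lam, y_small lam r, mu_lb' lam, mu_ub' lam, nu_lb, nu_pos,
    ka_eq lam r, u_bound lam, eventually_ge_atTop (5*r+5)] with n hx hy hml hmu hnl hnp hka hub hn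
  have hn5' : ((5*r+5 : ℕ):ℝ) ≤ (n:ℝ) := Nat.cast_le.mpr hn
  have hn5 : (5*(r:ℝ)+5) ≤ (n:ℝ) := by push_cast at hn5'; linarith
  have hr0 : (0:ℝ) ≤ (r:ℝ) := Nat.cast_nonneg r
  have hn0 : (0:ℝ) < (n:ℝ) := by linarith
  have hn0' : (n:ℝ) ≠ 0 := ne_of_gt hn0
  have hnu0 : nu n ≠ 0 := ne_of_gt hnp
  have hMain : Main lam r n = mu lam n * Real.log (1 + x lam n)
      - ka lam r n * Real.log (1 + yy lam r n)
      + (nu n - mu lam n) * Real.log (1 - mu lam n / nu n)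
      - mu lam n * Real.log (1 - 1/(n:ℝ)) + ka lam r n := rfl
  have hPr : P lam r n = (r:ℝ)/2*(x lam n - yy lam r n)
      - 1/12*((n:ℝ)*x lam n^3 - (n:ℝ)*yy lam r n^3)
      + (r:ℝ)/3*(x lam n - yy lam r n)*(x lam n^2 + yy lam r n^2)
      + mu lam n^2/(2*nu n) + mu lam n^3/(2*nu n^2) + mu lam n/(n:ℝ)
      + mu lam n/(2*(n:ℝ)^2) := rfl
  have hXd : x lam n = (2*mu lam n - (n:ℝ))/(n:ℝ) := rfl
  have hYd : yy lam r n = ((n:ℝ) - 2*mu lam n + 2*(r:ℝ))/(n:ℝ) := rfl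
  rw [hMain, hPr]
  set m := mu lam n with hmdef
  set v := nu n with hvdef
  set k := ka lam r n with hkdef
  set X := x lam n with hXdef
  set Y := yy lam r n with hYdef
  clear_value m v k X Y
  clear hMain hPr
  set U := m / v with hUdef
  set L1 := Real.log (1 + X) with hL1
  set L2 := Real.log (1 + Y) with hL2
  set L3 := Real.log (1 - U) with hL3
  set L4 := Real.log (1 - 1/(n:ℝ)) with hL4
  set E1 := L1 - (X - X^2/2 + X^3/3) with hE1d
  set E2 := L2 - (Y - Y^2/2 + Y^3/3) with hE2d
  set E3 := L3 - (-U - U^2/2) with hE3d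
  set E4 := L4 - (-(1/(n:ℝ)) - (1/(n:ℝ))^2/2) with hE4d
  have hU0 : 0 ≤ U := by
    rw [hUdef]; exact div_nonneg (by linarith) (by linarith)
  have hUhalf : U ≤ 1/2 := by
    refine le_trans hub ?_
    rw [div_le_div_iff₀ hn0 (by norm_num : (0:ℝ) < 2)]
    linarith
  have hUabs : |U| ≤ 1/2 := by rwa [abs_of_nonneg hU0]
  have hVabs : |1/(n:ℝ)| ≤ 1/2 := by
    rw [abs_of_nonneg (by positivity)]
    rw [div_le_div_iff₀ hn0 (by norm_num : (0:ℝ) < 2)]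
    linarith
  have hid : m * L1 - k * L2 + (v - m) * L3 - m * L4 + k
      - ((r:ℝ)/2*(X - Y) - 1/12*((n:ℝ)*X^3 - (n:ℝ)*Y^3) + (r:ℝ)/3*(X - Y)*(X^2 + Y^2)
        + m^2/(2*v) + m^3/(2*v^2) + m/(n:ℝ) + m/(2*(n:ℝ)^2))
      = m * E1 - k * E2 + (v - m) * E3 - m * E4 := by
    have halg := alg_id (n:ℝ) m v (r:ℝ) k X Y U hn0' hnu0 hXd hYd hUdef hka
    rw [hE1d, hE2d, hE3d, hE4d]
    linear_combination halg
  rw [hid]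
  -- error bounds
  have hE1 : |E1| ≤ 2*|X|^4 := by
    have h := logTaylor3 (x := X) (lt_of_le_of_lt hx (by norm_num))
    rw [← hL1, ← hE1d] at h
    exact h.trans (err_bound |X| 4 (abs_nonneg _) (hx.trans (by norm_num)))
  have hE2 : |E2| ≤ 2*|Y|^4 := by
    have h := logTaylor3 (x := Y) (lt_of_le_of_lt hy (by norm_num))
    rw [← hL2, ← hE2d] at h
    exact h.trans (err_bound |Y| 4 (abs_nonneg _) (hy.trans (by norm_num)))
  have hE3 : |E3| ≤ 2*|U|^3 := by
    have h := logTaylor2 (u := U) (lt_of_le_of_lt hUabs (by norm_num))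
    rw [← hL3, ← hE3d] at h
    exact h.trans (err_bound |U| 3 (abs_nonneg _) hUabs)
  have hE4 : |E4| ≤ 2*|1/(n:ℝ)|^3 := by
    have h := logTaylor2 (u := 1/(n:ℝ)) (lt_of_le_of_lt hVabs (by norm_num))
    rw [← hL4, ← hE4d] at h
    exact h.trans (err_bound |1/(n:ℝ)| 3 (abs_nonneg _) hVabs)
  clear_value E1 E2 E3 E4
  have hm0 : 0 ≤ m := by linarith
  have hk0 : 0 ≤ k := by rw [hka]; linarith
  have hnm0 : 0 ≤ v - m := by
    have := sq_aux (n:ℝ) (by linarith)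
    linarith
  have hkan : k ≤ (n:ℝ) := by rw [hka]; linarith
  have hmun : m ≤ (n:ℝ) := by linarith
  have htri : |m * E1 - k * E2 + (v - m) * E3 - m * E4|
      ≤ m * |E1| + k * |E2| + (v - m) * |E3| + m * |E4| := by
    calc _ ≤ |m * E1 - k * E2 + (v - m) * E3| + |m * E4| := abs_sub _ _
    _ ≤ |m * E1 - k * E2| + |(v - m) * E3| + |m * E4| := by gcongr; exact abs_add_le _ _
    _ ≤ |m * E1| + |k * E2| + |(v - m) * E3| + |m * E4| := by gcongr; exact abs_sub _ _
    _ = m * |E1| + k * |E2| + (v - m) * |E3| + m * |E4| := by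
          rw [abs_mul, abs_mul, abs_mul, abs_mul,
            abs_of_nonneg hm0, abs_of_nonneg hk0, abs_of_nonneg hnm0]
  refine htri.trans ?_
  have b1 : m * |E1| ≤ 2*|(n:ℝ)*X^3| * |X| := by
    have heq : 2*|(n:ℝ)*X^3| * |X| = (n:ℝ) * (2*|X|^4) := by
      rw [abs_mul, abs_of_nonneg (le_of_lt hn0), abs_pow]; ring
    rw [heq]
    exact mul_le_mul hmun hE1 (abs_nonneg E1) (le_of_lt hn0)
  have b2 : k * |E2| ≤ 2*|(n:ℝ)*Y^3| * |Y| := by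
    have heq : 2*|(n:ℝ)*Y^3| * |Y| = (n:ℝ) * (2*|Y|^4) := by
      rw [abs_mul, abs_of_nonneg (le_of_lt hn0), abs_pow]; ring
    rw [heq]
    exact mul_le_mul hkan hE2 (abs_nonneg E2) (le_of_lt hn0)
  have b3 : (v - m) * |E3| ≤ 2*(m^3/v^2) := by
    have h1 : (v - m) * |E3| ≤ v * (2*|U|^3) :=
      mul_le_mul (by linarith) hE3 (abs_nonneg E3) (by linarith)
    refine h1.trans (le_of_eq ?_)
    rw [abs_of_nonneg hU0, hUdef]
    have key : v * (m / v)^3 = m^3 / v^2 := by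
      rw [div_pow, eq_div_iff (pow_ne_zero 2 hnu0)]
      field_simp
    linear_combination 2 * key
  have b4 : m * |E4| ≤ 2/(n:ℝ)^2 := by
    have h1 : m * |E4| ≤ (n:ℝ) * (2*|1/(n:ℝ)|^3) :=
      mul_le_mul hmun hE4 (abs_nonneg E4) (le_of_lt hn0)
    refine h1.trans (le_of_eq ?_)
    rw [abs_of_nonneg (by positivity : (0:ℝ) ≤ 1/(n:ℝ))]
    field_simp
  linarith

lemma B_tendsto : Tendsto (fun n : ℕ =>
    2*|(n:ℝ)*x lam n^3| * |x lam n| + 2*|(n:ℝ)*yy lam r n^3| * |yy lam r n|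
      + 2*(mu lam n^3/nu n^2) + 2/(n:ℝ)^2) atTop (𝓝 0) := by
  have h1 := (((nx3 lam).abs.const_mul 2).mul (x_to_zero lam).abs)
  have h2 := (((ny3 lam r).abs.const_mul 2).mul (y_to_zero lam r).abs)
  have h3 := (mu3_div_nu2 lam).const_mul 2
  have h4 : Tendsto (fun n : ℕ => 2/(n:ℝ)^2) atTop (𝓝 0) := by
    have := (two_div_n).mul tendsto_one_div_atTop_nhds_zero_nat
    rw [mul_zero] at this
    refine this.congr' ?_
    filter_upwards [eventually_ge_atTop 1] with n hn
    have h0 : (n:ℝ) ≠ 0 := by exact_mod_cast Nat.one_le_iff_ne_zero.mp hn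
    field_simp
  have := ((h1.add h2).add h3).add h4
  simpa using this

lemma Main_tendsto : Tendsto (Main lam r) atTop (𝓝 (3/4 - lam^3/6)) := by
  have hdiff : Tendsto (fun n => Main lam r n - P lam r n) atTop (𝓝 0) :=
    squeeze_zero_norm' (main_sub_P lam r) (B_tendsto lam r)
  have := hdiff.add (P_tendsto lam r)
  rw [zero_add] at this
  exact this.congr fun n => by ring


noncomputable def Fn (lam : ℝ) (r : ℕ) (n : ℕ) : ℝ :=
  ((n.factorial : ℝ) /
      (((n.choose 2).choose (M lam n) : ℝ) * ((n - M lam n + r).factorial : ℝ))) /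
    (Real.sqrt (2 * π * n) * 2 ^ (n - M lam n + r) / (n : ℝ) ^ r *
      Real.exp (-lam ^ 3 / 6 + 3 / 4 - n))

noncomputable def LS (lam : ℝ) (r : ℕ) (n : ℕ) : ℝ :=
  Real.log (Stirling.stirlingSeq n) + Real.log (Stirling.stirlingSeq (M lam n))
  + Real.log (Stirling.stirlingSeq (n.choose 2 - M lam n))
  - Real.log (Stirling.stirlingSeq (n.choose 2)) - Real.log (Stirling.stirlingSeq (K lam r n))

noncomputable def LH (lam : ℝ) (r : ℕ) (n : ℕ) : ℝ :=
  1/2 * Real.log (mu lam n * (nu n - mu lam n) / (nu n * ka lam r n * π))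

lemma sq_aux2 (a : ℝ) (h : 5 ≤ a) : 3/5*a + 1 ≤ a^2/3 := by nlinarith

-- eventual nat facts
lemma M_ge_one : ∀ᶠ n : ℕ in atTop, 1 ≤ M lam n := by
  filter_upwards [mu_lb' lam, eventually_ge_atTop 5] with n h hn
  have hn5 : (5:ℝ) ≤ (n:ℝ) := by exact_mod_cast hn
  have : (1:ℝ) ≤ (M lam n : ℝ) := by unfold mu at h; linarith
  exact_mod_cast this

lemma M_lt_N : ∀ᶠ n : ℕ in atTop, M lam n + 1 ≤ n.choose 2 := by
  filter_upwards [mu_ub' lam, nu_lb, eventually_ge_atTop 5] with n h hnu hn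
  have hn5 : (5:ℝ) ≤ (n:ℝ) := by exact_mod_cast hn
  have h2 := sq_aux2 (n:ℝ) hn5
  have : ((M lam n : ℕ):ℝ) + 1 ≤ ((n.choose 2 : ℕ):ℝ) := by
    unfold mu at h; unfold nu at hnu; linarith
  exact_mod_cast this

lemma M_lt_n : ∀ᶠ n : ℕ in atTop, M lam n + 1 ≤ n := by
  filter_upwards [mu_ub' lam, eventually_ge_atTop 5] with n h hn
  have hn5 : (5:ℝ) ≤ (n:ℝ) := by exact_mod_cast hn
  have : ((M lam n : ℕ):ℝ) + 1 ≤ (n:ℝ) := by unfold mu at h; linarith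
  exact_mod_cast this

lemma NM_cast : ∀ᶠ n : ℕ in atTop, ((n.choose 2 - M lam n : ℕ) : ℝ) = nu n - mu lam n := by
  filter_upwards [M_lt_N lam] with n h
  have : M lam n ≤ n.choose 2 := by omega
  push_cast [Nat.cast_sub this]
  rfl

lemma K_ge_one : ∀ᶠ n : ℕ in atTop, 1 ≤ K lam r n := by
  filter_upwards [M_lt_n lam] with n h
  unfold K
  omega

-- tendsto atTop facts
lemma M_top : Tendsto (M lam) atTop atTop := by
  rw [← tendsto_natCast_atTop_iff (R := ℝ)]
  apply tendsto_atTop_mono' atTop ((mu_lb' lam).mono fun n h => h)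
  have h1 : Tendsto (fun n : ℕ => (n:ℝ)) atTop atTop := tendsto_natCast_atTop_atTop
  exact h1.const_mul_atTop (by norm_num)

lemma K_top : Tendsto (K lam r) atTop atTop := by
  rw [← tendsto_natCast_atTop_iff (R := ℝ)]
  have hev : ∀ᶠ n : ℕ in atTop, 2/5 * (n:ℝ) ≤ (K lam r n : ℝ) := by
    filter_upwards [mu_ub' lam, ka_eq lam r] with n h hk
    have := Nat.cast_nonneg (α := ℝ) r
    unfold ka at hk
    rw [hk]
    linarith
  apply tendsto_atTop_mono' atTop hev
  exact tendsto_natCast_atTop_atTop.const_mul_atTop (by norm_num)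

lemma N_top : Tendsto (fun n : ℕ => n.choose 2) atTop atTop := by
  rw [← tendsto_natCast_atTop_iff (R := ℝ)]
  have hev : ∀ᶠ n : ℕ in atTop, (n:ℝ) ≤ ((n.choose 2 : ℕ) : ℝ) := by
    filter_upwards [nu_lb, eventually_ge_atTop 5] with n h hn
    have hn5 : (5:ℝ) ≤ (n:ℝ) := by exact_mod_cast hn
    have : (n:ℝ) ≤ (n:ℝ)^2/3 := by nlinarith
    unfold nu at h
    linarith
  exact tendsto_atTop_mono' atTop hev tendsto_natCast_atTop_atTop

lemma NM_top : Tendsto (fun n : ℕ => n.choose 2 - M lam n) atTop atTop := by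
  rw [← tendsto_natCast_atTop_iff (R := ℝ)]
  have hev : ∀ᶠ n : ℕ in atTop, (n:ℝ) ≤ ((n.choose 2 - M lam n : ℕ) : ℝ) := by
    filter_upwards [NM_cast lam, nu_lb, mu_ub' lam, eventually_ge_atTop 5] with n hc h hm hn
    have hn5 : (5:ℝ) ≤ (n:ℝ) := by exact_mod_cast hn
    rw [hc]
    have h2 := sq_aux2 (n:ℝ) hn5
    nlinarith
  exact tendsto_atTop_mono' atTop hev tendsto_natCast_atTop_atTop

lemma LS_tendsto : Tendsto (LS lam r) atTop (𝓝 (Real.log (Real.sqrt π))) := by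
  have hlog : Tendsto (fun z : ℝ => Real.log z) (𝓝 (Real.sqrt π)) (𝓝 (Real.log (Real.sqrt π))) :=
    (Real.continuousAt_log (by positivity)).tendsto
  have base := Stirling.tendsto_stirlingSeq_sqrt_pi
  have h1 := hlog.comp base
  have h2 := hlog.comp (base.comp (M_top lam))
  have h3 := hlog.comp (base.comp (NM_top lam))
  have h4 := hlog.comp (base.comp N_top)
  have h5 := hlog.comp (base.comp (K_top lam r))
  have := ((((h1.add h2).add h3).sub h4).sub h5)
  have he : Real.log (Real.sqrt π) + Real.log (Real.sqrt π) + Real.log (Real.sqrt π)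
      - Real.log (Real.sqrt π) - Real.log (Real.sqrt π) = Real.log (Real.sqrt π) := by ring
  rw [he] at this
  exact this

lemma LH_tendsto : Tendsto (LH lam r) atTop (𝓝 (-(Real.log (Real.sqrt π)))) := by
  have hmk : Tendsto (fun n => mu lam n / ka lam r n) atTop (𝓝 1) := by
    have h := (mu_div_n lam).div (ka_div_n lam r) (by norm_num)
    norm_num at h
    refine h.congr' ?_
    filter_upwards [ka_eq lam r, mu_ub' lam, eventually_ge_atTop 5] with n hk hm hn
    have hn5 : (5:ℝ) ≤ (n:ℝ) := by exact_mod_cast hn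
    have hn0 : (n:ℝ) ≠ 0 := by linarith
    have hka0 : ka lam r n ≠ 0 := by
      have := Nat.cast_nonneg (α := ℝ) r
      rw [hk]; intro hc; nlinarith
    simp only [Pi.div_apply]
    field_simp
  have hw : Tendsto (fun n => (nu n - mu lam n) / nu n) atTop (𝓝 1) := by
    have h := (tendsto_const_nhds (x := (1:ℝ)) (f := atTop (α := ℕ))).sub (u_to_zero lam)
    rw [sub_zero] at h
    refine h.congr' ?_
    filter_upwards [nu_pos] with n hp
    rw [sub_div, div_self (ne_of_gt hp)]
  have hinner : Tendsto (fun n => mu lam n * (nu n - mu lam n) / (nu n * ka lam r n * π))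
      atTop (𝓝 (1/π)) := by
    have h := (hmk.mul hw).div_const π
    have he : (1:ℝ) * 1 / π = 1/π := by ring
    rw [he] at h
    refine h.congr' ?_
    filter_upwards [nu_pos, ka_eq lam r, mu_lb' lam, mu_ub' lam, eventually_ge_atTop 5]
      with n hp hk hm1 hm2 hn
    have hn5 : (5:ℝ) ≤ (n:ℝ) := by exact_mod_cast hn
    have hka0 : ka lam r n ≠ 0 := by
      have := Nat.cast_nonneg (α := ℝ) r
      rw [hk]; intro hc; nlinarith
    have hpi : π ≠ 0 := ne_of_gt Real.pi_pos
    field_simp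
  have hlog : Tendsto (fun z : ℝ => Real.log z) (𝓝 (1/π)) (𝓝 (Real.log (1/π))) :=
    (Real.continuousAt_log (by positivity)).tendsto
  have h := (hlog.comp hinner).const_mul (1/2 : ℝ)
  have he : 1/2 * Real.log (1/π) = -(Real.log (Real.sqrt π)) := by
    rw [Real.log_div one_ne_zero (ne_of_gt Real.pi_pos), Real.log_one,
      Real.log_sqrt Real.pi_pos.le]
    ring
  rw [he] at h
  exact h

lemma log_factorial (k : ℕ) :
    Real.log (k.factorial) = Real.log (Stirling.stirlingSeq k)
      + 1/2 * Real.log (2*k) + k * Real.log k - k := by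
  have h := Stirling.log_stirlingSeq_formula k
  rcases Nat.eq_zero_or_pos k with hk | hk
  · subst hk; simp
  · have h2 : Real.log ((k:ℝ) / Real.exp 1) = Real.log k - 1 := by
      rw [Real.log_div (Nat.cast_ne_zero.mpr (by omega)) (Real.exp_ne_zero 1), Real.log_exp]
    rw [h2] at h
    linear_combination -h

lemma Fn_pos : ∀ᶠ n : ℕ in atTop, 0 < Fn lam r n := by
  filter_upwards [M_lt_N lam, eventually_ge_atTop 1] with n hMN hn
  have hchoose : 0 < (n.choose 2).choose (M lam n) := Nat.choose_pos (by omega)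
  have hC : (0:ℝ) < ((n.choose 2).choose (M lam n) : ℝ) := by exact_mod_cast hchoose
  have hfn : (0:ℝ) < (n.factorial : ℝ) := by exact_mod_cast n.factorial_pos
  have hfK : (0:ℝ) < ((n - M lam n + r).factorial : ℝ) := by
    exact_mod_cast (n - M lam n + r).factorial_pos
  have hn0 : (0:ℝ) < (n:ℝ) := by exact_mod_cast hn
  have hsq : (0:ℝ) < Real.sqrt (2*π*(n:ℝ)) := Real.sqrt_pos.mpr (by positivity)
  unfold Fn
  apply div_pos (div_pos hfn (mul_pos hC hfK))
  apply mul_pos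
  · apply div_pos (mul_pos hsq (by positivity)) (by positivity)
  · exact Real.exp_pos _

lemma logF_eq : ∀ᶠ n : ℕ in atTop,
    Real.log (Fn lam r n) = LS lam r n + LH lam r n + Main lam r n - (3/4 - lam^3/6) := by
  filter_upwards [M_ge_one lam, M_lt_N lam, M_lt_n lam, NM_cast lam,
    ka_eq lam r, mu_eq lam, ka_eq2 lam r, nu_pos, mu_lb' lam, mu_ub' lam, nu_lb,
    eventually_ge_atTop 5] with n hM1 hMN hMn hNM hka hmux hkay hnup hml hmub hnl hn
  have hn5 : (5:ℝ) ≤ (n:ℝ) := by exact_mod_cast hn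
  have hn0 : (0:ℝ) < (n:ℝ) := by linarith
  have hr0 : (0:ℝ) ≤ (r:ℝ) := Nat.cast_nonneg r
  have hmu0 : (0:ℝ) < mu lam n := by linarith
  have hka0 : (0:ℝ) < ka lam r n := by rw [hka]; linarith
  have hw0 : (0:ℝ) < nu n - mu lam n := by
    have := sq_aux2 (n:ℝ) hn5; linarith
  have hx1 : (0:ℝ) < 1 + x lam n := by nlinarith [hmux, hmu0, hn0]
  have hy1 : (0:ℝ) < 1 + yy lam r n := by nlinarith [hkay, hka0, hn0]
  have hu1 : (0:ℝ) < 1 - mu lam n / nu n := by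
    have h : 1 - mu lam n / nu n = (nu n - mu lam n) / nu n := by
      field_simp
    rw [h]; positivity
  have hv1 : (0:ℝ) < 1 - 1/(n:ℝ) := by
    rw [sub_pos, div_lt_one hn0]; linarith
  -- positivity of pieces
  have hfn : (0:ℝ) < (n.factorial : ℝ) := by exact_mod_cast n.factorial_pos
  have hfM : (0:ℝ) < ((M lam n).factorial : ℝ) := by exact_mod_cast (M lam n).factorial_pos
  have hfNM : (0:ℝ) < ((n.choose 2 - M lam n).factorial : ℝ) := by
    exact_mod_cast (n.choose 2 - M lam n).factorial_pos
  have hfN : (0:ℝ) < ((n.choose 2).factorial : ℝ) := by exact_mod_cast (n.choose 2).factorial_pos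
  have hfK : (0:ℝ) < ((K lam r n).factorial : ℝ) := by exact_mod_cast (K lam r n).factorial_pos
  have hCpos : (0:ℝ) < ((n.choose 2).choose (M lam n) : ℝ) := by
    exact_mod_cast Nat.choose_pos (show M lam n ≤ n.choose 2 by omega)
  have hsq : (0:ℝ) < Real.sqrt (2*π*(n:ℝ)) := Real.sqrt_pos.mpr (by positivity)
  have h2K : (0:ℝ) < (2:ℝ)^(n - M lam n + r) := by positivity
  have hnr : (0:ℝ) < (n:ℝ)^r := by positivity
  have hexp : (0:ℝ) < Real.exp (-lam^3/6 + 3/4 - (n:ℝ)) := Real.exp_pos _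
  have hKid : n - M lam n + r = K lam r n := rfl
  -- atom identities for logs
  have hlmu : Real.log (mu lam n) = Real.log (n:ℝ) - Real.log 2 + Real.log (1 + x lam n) := by
    rw [hmux, show ((n:ℝ)/2*(1 + x lam n)) = (n:ℝ)*(1 + x lam n)/2 from by ring,
      Real.log_div (by positivity) two_ne_zero,
      Real.log_mul (ne_of_gt hn0) (ne_of_gt hx1)]
    ring
  have hlka : Real.log (ka lam r n) = Real.log (n:ℝ) - Real.log 2 + Real.log (1 + yy lam r n) := by
    rw [hkay, show ((n:ℝ)/2*(1 + yy lam r n)) = (n:ℝ)*(1 + yy lam r n)/2 from by ring,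
      Real.log_div (by positivity) two_ne_zero,
      Real.log_mul (ne_of_gt hn0) (ne_of_gt hy1)]
    ring
  have hlw : Real.log (nu n - mu lam n)
      = Real.log (nu n) + Real.log (1 - mu lam n / nu n) := by
    have h : nu n - mu lam n = nu n * (1 - mu lam n / nu n) := by
      field_simp
    rw [h, Real.log_mul (ne_of_gt hnup) (ne_of_gt hu1)]
  have hlnu : Real.log (nu n)
      = Real.log (n:ℝ) + Real.log (n:ℝ) - Real.log 2 + Real.log (1 - 1/(n:ℝ)) := by
    have h : nu n = (n:ℝ)*(n:ℝ)*(1 - 1/(n:ℝ))/2 := by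
      rw [nu_eq]; field_simp
    rw [h, Real.log_div (by positivity) two_ne_zero,
      Real.log_mul (by positivity) (ne_of_gt hv1),
      Real.log_mul (ne_of_gt hn0) (ne_of_gt hn0)]
    ring
  -- expand log of Fn
  have step1 : Real.log (Fn lam r n)
      = Real.log (n.factorial : ℝ)
        - (Real.log ((n.choose 2).choose (M lam n) : ℝ) + Real.log ((K lam r n).factorial : ℝ))
        - (1/2 * (Real.log 2 + Real.log π + Real.log (n:ℝ)) + ka lam r n * Real.log 2
           - (r:ℝ) * Real.log (n:ℝ) + (-lam^3/6 + 3/4 - (n:ℝ))) := by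
    unfold Fn
    rw [Real.log_div (by positivity) (by positivity),
      Real.log_div (ne_of_gt hfn) (by rw [hKid]; positivity),
      Real.log_mul (ne_of_gt hCpos) (by rw [hKid]; exact ne_of_gt hfK),
      Real.log_mul (by positivity) (ne_of_gt hexp),
      Real.log_div (by positivity) (ne_of_gt hnr),
      Real.log_mul (ne_of_gt hsq) (ne_of_gt h2K),
      Real.log_exp, Real.log_pow, Real.log_pow,
      Real.log_sqrt (by positivity),
      Real.log_mul (by positivity : (2*π : ℝ) ≠ 0) (ne_of_gt hn0),
      Real.log_mul (two_ne_zero) (ne_of_gt Real.pi_pos),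
      hKid]
    have hcast : ((K lam r n : ℕ) : ℝ) = ka lam r n := rfl
    rw [hcast]
    ring
  have step2 : Real.log ((n.choose 2).choose (M lam n) : ℝ)
      = Real.log ((n.choose 2).factorial : ℝ) - Real.log ((M lam n).factorial : ℝ)
        - Real.log ((n.choose 2 - M lam n).factorial : ℝ) := by
    rw [Nat.cast_choose ℝ (show M lam n ≤ n.choose 2 by omega),
      Real.log_div (ne_of_gt hfN) (by positivity),
      Real.log_mul (ne_of_gt hfM) (ne_of_gt hfNM)]
    ring
  rw [step1, step2, log_factorial n, log_factorial (M lam n),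
    log_factorial (n.choose 2 - M lam n), log_factorial (n.choose 2),
    log_factorial (K lam r n)]
  rw [show ((M lam n : ℕ) : ℝ) = mu lam n from rfl,
    show ((n.choose 2 : ℕ) : ℝ) = nu n from rfl,
    show ((K lam r n : ℕ) : ℝ) = ka lam r n from rfl,
    hNM]
  rw [Real.log_mul two_ne_zero (ne_of_gt hn0),
    Real.log_mul two_ne_zero (ne_of_gt hmu0),
    Real.log_mul two_ne_zero (ne_of_gt hw0),
    Real.log_mul two_ne_zero (ne_of_gt hnup),
    Real.log_mul two_ne_zero (ne_of_gt hka0)]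
  unfold LS LH Main
  rw [Real.log_div (by positivity) (by positivity : nu n * ka lam r n * π ≠ 0),
    Real.log_mul (ne_of_gt hmu0) (ne_of_gt hw0),
    Real.log_mul (by positivity : nu n * ka lam r n ≠ 0) (ne_of_gt Real.pi_pos),
    Real.log_mul (ne_of_gt hnup) (ne_of_gt hka0)]
  rw [hlmu, hlka, hlw, hlnu, hka]
  ring

theorem result : Tendsto (Fn lam r) atTop (𝓝 1) := by
  have hG : Tendsto (fun n => LS lam r n + LH lam r n + Main lam r n - (3/4 - lam^3/6))
      atTop (𝓝 0) := by
    have h := ((LS_tendsto lam r).add (LH_tendsto lam r)).add (Main_tendsto lam r)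
    have h2 := h.sub_const (3/4 - lam^3/6)
    have he : Real.log (Real.sqrt π) + -(Real.log (Real.sqrt π)) + (3/4 - lam^3/6)
        - (3/4 - lam^3/6) = 0 := by ring
    rwa [he] at h2
  have hlog : Tendsto (fun n => Real.log (Fn lam r n)) atTop (𝓝 0) :=
    hG.congr' ((logF_eq lam r).mono fun n h => h.symm)
  have hexp := (Real.continuous_exp.tendsto 0).comp hlog
  rw [Real.exp_zero] at hexp
  refine hexp.congr' ?_
  filter_upwards [Fn_pos lam r] with n hp
  exact Real.exp_log hp

end SRCaux

/-- Stirling-type estimate in the critical window: with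
`M(n) = ⌈(n/2)(1 + λ n^{-1/3})⌉`,
`n!/(C(C(n,2),M)·(n-M+r)!) ∼ √(2πn) · 2^{n-M+r} · n^{-r} · exp(-λ³/6 + 3/4 - n)`. -/
theorem stirling_ratio_critical (lam : ℝ) (r : ℕ) :
    Tendsto
      (fun n : ℕ =>
        letI M : ℕ := ⌈((n : ℝ) / 2) * (1 + lam * (n : ℝ) ^ (-(1 / 3 : ℝ)))⌉₊
        ((n.factorial : ℝ) /
            (((n.choose 2).choose M : ℝ) * ((n - M + r).factorial : ℝ))) /
          (Real.sqrt (2 * π * n) * 2 ^ (n - M + r) / (n : ℝ) ^ r *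
            Real.exp (-lam ^ 3 / 6 + 3 / 4 - n)))
      atTop (nhds 1) :=
  SRCaux.result lam r
end
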